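/- arXiv:2110.06077 — 6 statements merged into one kernel-verified Lean document; each statement's English description precedes it below -/
import Mathlib

section
/- Fix μ > 0. If P and Q are probability measures on [0,1] that are absolutely continuous with respect to Lebesgue measure, whose densities differ on a set of positive Lebesgue measure, and such that ℓ_μ[P] > −∞ and ℓ_μ[Q] > −∞, then for every t ∈ (0,1), ℓ_μ[(1−t)P + tQ] > (1−t)·ℓ_μ[P] + t·ℓ_μ[Q]. Consequently, ℓ_μ admits at most one maximizer among absolutely continuous probability measures on [0,1]. -/
open MeasureTheory Set Filter Topology
open scoped Classical

/-- Lebesgue measure restricted to `[0,1]` (this is the uniform probability measure `P_U`). -/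
noncomputable def lebI : Measure ℝ := volume.restrict (Set.Icc 0 1)

/-- A probability measure concentrated on `[0,1]`. -/
def IsProbOn (P : Measure ℝ) : Prop := IsProbabilityMeasure P ∧ P (Set.Icc (0:ℝ) 1)ᶜ = 0

/-- A probability density on `[0,1]`. -/
def IsDensity (f : ℝ → ℝ) : Prop :=
  Measurable f ∧ (∀ γ, 0 ≤ f γ) ∧ ∫ γ, f γ ∂lebI = 1

/-- The measure on `[0,1]` with Lebesgue density `f`. -/
noncomputable def densM (f : ℝ → ℝ) : Measure ℝ :=
  lebI.withDensity fun γ => ENNReal.ofReal (f γ)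

/-- Kullback–Leibler divergence `D(ν‖ρ)`, valued in `EReal`: it equals
`∫ log (dν/dρ) dν` when `ν ≪ ρ` and the log-likelihood ratio is `ν`-integrable,
and `+∞` otherwise. -/
noncomputable def KLdiv (ν ρ : Measure ℝ) : EReal :=
  if ν ≪ ρ ∧ Integrable (fun x => Real.log ((ν.rnDeriv ρ x).toReal)) ν
  then ((∫ x, Real.log ((ν.rnDeriv ρ x).toReal) ∂ν : ℝ) : EReal)
  else ⊤

/-- Implied marginal `p_MA(y) = ∫ p_A(y|γ) dP_M(γ)`. -/
noncomputable def margin (pA : ℕ → ℝ → ℝ) (P : Measure ℝ) (y : ℕ) : ℝ := ∫ γ, pA y γ ∂P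

/-- Mixture log-likelihood `ℓ[P_M] = ∑_y p̂(y) log p_MA(y)`, valued in `EReal`
(it is `−∞` when some `y` with `p̂(y) > 0` has zero implied marginal mass). -/
noncomputable def loglik (N : ℕ) (pA : ℕ → ℝ → ℝ) (phat : ℕ → ℝ) (P : Measure ℝ) : EReal :=
  if ∀ y ∈ Finset.range (N + 1), 0 < phat y → 0 < margin pA P y
  then ((∑ y ∈ Finset.range (N + 1), phat y * Real.log (margin pA P y) : ℝ) : EReal)
  else ⊥

/-- Regularized log-likelihood `ℓ_μ[P_M] = ℓ[P_M] − μ·D(P_U‖P_M)`. -/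
noncomputable def regLoglik (N : ℕ) (pA : ℕ → ℝ → ℝ) (phat : ℕ → ℝ) (μ : ℝ)
    (P : Measure ℝ) : EReal :=
  loglik N pA phat P - (μ : EReal) * KLdiv lebI P


section helpers

instance : IsProbabilityMeasure lebI := by
  constructor; simp [lebI, Real.volume_Icc]

lemma lebI_compl : lebI (Set.Icc (0:ℝ) 1)ᶜ = 0 := by
  simp [lebI, Measure.restrict_apply (measurableSet_Icc.compl)]

lemma integrable_pA {N : ℕ} {pA : ℕ → ℝ → ℝ}
    (hpAmeas : ∀ y, Measurable (pA y)) (hpAnonneg : ∀ y γ, 0 ≤ pA y γ)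
    (hpAsum : ∀ γ ∈ Set.Icc (0:ℝ) 1, ∑ y ∈ Finset.range (N + 1), pA y γ = 1)
    {P : Measure ℝ} [IsFiniteMeasure P] (hc : P ≪ lebI)
    {y : ℕ} (hy : y ∈ Finset.range (N+1)) : Integrable (pA y) P := by
  have hae : ∀ᵐ γ ∂P, ‖pA y γ‖ ≤ 1 := by
    have h0 : (Set.Icc (0:ℝ) 1) ∈ ae P := by
      rw [mem_ae_iff]; exact hc lebI_compl
    filter_upwards [h0] with γ hγ
    rw [Real.norm_of_nonneg (hpAnonneg y γ)]
    calc pA y γ ≤ ∑ z ∈ Finset.range (N+1), pA z γ :=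
          Finset.single_le_sum (fun z _ => hpAnonneg z γ) hy
      _ = 1 := hpAsum γ hγ
  exact (integrable_const (1:ℝ)).mono' (hpAmeas y).aestronglyMeasurable hae

lemma margin_mix {N : ℕ} {pA : ℕ → ℝ → ℝ}
    (hpAmeas : ∀ y, Measurable (pA y)) (hpAnonneg : ∀ y γ, 0 ≤ pA y γ)
    (hpAsum : ∀ γ ∈ Set.Icc (0:ℝ) 1, ∑ y ∈ Finset.range (N + 1), pA y γ = 1)
    {P Q : Measure ℝ} [IsFiniteMeasure P] [IsFiniteMeasure Q]
    (hPc : P ≪ lebI) (hQc : Q ≪ lebI) {s t : ℝ} (hs : 0 ≤ s) (ht : 0 ≤ t)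
    {y : ℕ} (hy : y ∈ Finset.range (N+1)) :
    margin pA (ENNReal.ofReal s • P + ENNReal.ofReal t • Q) y
      = s * margin pA P y + t * margin pA Q y := by
  have hP := integrable_pA hpAmeas hpAnonneg hpAsum hPc hy
  have hQ := integrable_pA hpAmeas hpAnonneg hpAsum hQc hy
  rw [margin, integral_add_measure (hP.smul_measure ENNReal.ofReal_ne_top)
      (hQ.smul_measure ENNReal.ofReal_ne_top),
    integral_smul_measure, integral_smul_measure,
    ENNReal.toReal_ofReal hs, ENNReal.toReal_ofReal ht]
  rfl

lemma margin_nonneg {pA : ℕ → ℝ → ℝ} (hpAnonneg : ∀ y γ, 0 ≤ pA y γ)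
    (P : Measure ℝ) (y : ℕ) : 0 ≤ margin pA P y :=
  integral_nonneg (hpAnonneg y)

lemma loglik_cond_of_ne_bot {N pA phat P} (h : loglik N pA phat P ≠ ⊥) :
    ∀ y ∈ Finset.range (N + 1), 0 < phat y → 0 < margin pA P y := by
  by_contra hc
  rw [loglik, if_neg hc] at h
  exact h rfl

lemma loglik_eq_of_cond {N pA phat P}
    (h : ∀ y ∈ Finset.range (N + 1), 0 < phat y → 0 < margin pA P y) :
    loglik N pA phat P
      = ((∑ y ∈ Finset.range (N + 1), phat y * Real.log (margin pA P y) : ℝ) : EReal) := by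
  rw [loglik, if_pos h]

lemma loglik_sum_mix {N : ℕ} {pA : ℕ → ℝ → ℝ} {phat : ℕ → ℝ}
    (hpAmeas : ∀ y, Measurable (pA y)) (hpAnonneg : ∀ y γ, 0 ≤ pA y γ)
    (hpAsum : ∀ γ ∈ Set.Icc (0:ℝ) 1, ∑ y ∈ Finset.range (N + 1), pA y γ = 1)
    (hphat : ∀ y, 0 ≤ phat y)
    {P Q : Measure ℝ} [IsFiniteMeasure P] [IsFiniteMeasure Q]
    (hPc : P ≪ lebI) (hQc : Q ≪ lebI)
    (hcondP : ∀ y ∈ Finset.range (N + 1), 0 < phat y → 0 < margin pA P y)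
    (hcondQ : ∀ y ∈ Finset.range (N + 1), 0 < phat y → 0 < margin pA Q y)
    {t : ℝ} (ht : t ∈ Set.Ioo (0:ℝ) 1) :
    (∀ y ∈ Finset.range (N + 1), 0 < phat y →
        0 < margin pA (ENNReal.ofReal (1-t) • P + ENNReal.ofReal t • Q) y) ∧
    (1-t) * (∑ y ∈ Finset.range (N + 1), phat y * Real.log (margin pA P y))
      + t * (∑ y ∈ Finset.range (N + 1), phat y * Real.log (margin pA Q y))
      ≤ ∑ y ∈ Finset.range (N + 1),
          phat y * Real.log (margin pA (ENNReal.ofReal (1-t) • P + ENNReal.ofReal t • Q) y) := by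
  obtain ⟨ht0, ht1⟩ := ht
  have h1t : (0:ℝ) < 1 - t := by linarith
  have hmix : ∀ y ∈ Finset.range (N+1),
      margin pA (ENNReal.ofReal (1-t) • P + ENNReal.ofReal t • Q) y
        = (1-t) * margin pA P y + t * margin pA Q y := fun y hy =>
    margin_mix hpAmeas hpAnonneg hpAsum hPc hQc h1t.le ht0.le hy
  constructor
  · intro y hy hp
    rw [hmix y hy]
    have := hcondP y hy hp
    have h2 := margin_nonneg hpAnonneg Q y
    nlinarith
  · rw [Finset.mul_sum, Finset.mul_sum, ← Finset.sum_add_distrib]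
    refine Finset.sum_le_sum fun y hy => ?_
    rw [hmix y hy]
    rcases (hphat y).lt_or_eq with hp | hp
    · have ha := hcondP y hy hp
      have hb := hcondQ y hy hp
      have hlog : (1-t) * Real.log (margin pA P y) + t * Real.log (margin pA Q y)
          ≤ Real.log ((1-t) * margin pA P y + t * margin pA Q y) := by
        have := strictConcaveOn_log_Ioi.concaveOn.2 (mem_Ioi.2 ha) (mem_Ioi.2 hb)
          h1t.le ht0.le (by ring)
        simpa [smul_eq_mul] using this
      calc (1-t) * (phat y * Real.log (margin pA P y))
            + t * (phat y * Real.log (margin pA Q y))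
          = phat y * ((1-t) * Real.log (margin pA P y) + t * Real.log (margin pA Q y)) := by
            ring
        _ ≤ phat y * Real.log ((1-t)*margin pA P y + t * margin pA Q y) :=
            mul_le_mul_of_nonneg_left hlog (hphat y)
    · simp [← hp]


lemma log_rnDeriv_ae {P : Measure ℝ} [SigmaFinite P] (hac : lebI ≪ P) :
    (fun x => Real.log ((lebI.rnDeriv P x).toReal))
      =ᵐ[lebI] fun x => -Real.log ((P.rnDeriv lebI x).toReal) := by
  filter_upwards [Measure.inv_rnDeriv hac] with x hx
  have : lebI.rnDeriv P x = (P.rnDeriv lebI x)⁻¹ := by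
    simp only [Pi.inv_apply] at hx
    rw [← hx, inv_inv]
  rw [this, ENNReal.toReal_inv, Real.log_inv]

lemma KLdiv_ne_top_iff {P : Measure ℝ} [SigmaFinite P] :
    KLdiv lebI P ≠ ⊤ ↔
      lebI ≪ P ∧ Integrable (fun x => Real.log ((P.rnDeriv lebI x).toReal)) lebI := by
  constructor
  · intro h
    rw [KLdiv] at h
    split_ifs at h with hc
    · have h1 : Integrable (fun x => -Real.log ((P.rnDeriv lebI x).toReal)) lebI :=
        hc.2.congr (log_rnDeriv_ae hc.1)
      exact ⟨hc.1, h1.neg.congr (.of_forall fun x => by simp)⟩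
    · exact absurd rfl h
  · rintro ⟨hac, hint⟩
    rw [KLdiv, if_pos ⟨hac, hint.neg.congr (log_rnDeriv_ae hac).symm⟩]
    exact EReal.coe_ne_top _

lemma KLdiv_eq {P : Measure ℝ} [SigmaFinite P] (hac : lebI ≪ P)
    (hint : Integrable (fun x => Real.log ((P.rnDeriv lebI x).toReal)) lebI) :
    KLdiv lebI P = ((∫ x, -Real.log ((P.rnDeriv lebI x).toReal) ∂lebI : ℝ) : EReal) := by
  rw [KLdiv, if_pos ⟨hac, hint.neg.congr (log_rnDeriv_ae hac).symm⟩]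
  norm_cast
  exact integral_congr_ae (log_rnDeriv_ae hac)

lemma isProbMix {P Q : Measure ℝ} (hP : IsProbabilityMeasure P) (hQ : IsProbabilityMeasure Q)
    {t : ℝ} (ht0 : 0 ≤ t) (ht1 : t ≤ 1) :
    IsProbabilityMeasure (ENNReal.ofReal (1-t) • P + ENNReal.ofReal t • Q) := by
  constructor
  simp only [Measure.add_apply, Measure.smul_apply, smul_eq_mul, measure_univ, mul_one]
  rw [← ENNReal.ofReal_add (by linarith) ht0]
  norm_num

lemma rnDeriv_mix_ae {P Q : Measure ℝ} [IsFiniteMeasure P] [IsFiniteMeasure Q]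
    {s t : ℝ} (hs : 0 ≤ s) (ht : 0 ≤ t) :
    ∀ᵐ x ∂lebI, ((ENNReal.ofReal s • P + ENNReal.ofReal t • Q).rnDeriv lebI x).toReal
      = s * (P.rnDeriv lebI x).toReal + t * (Q.rnDeriv lebI x).toReal := by
  have hsP : IsFiniteMeasure (ENNReal.ofReal s • P) := by
    constructor
    simp only [Measure.smul_apply, smul_eq_mul]
    exact ENNReal.mul_lt_top ENNReal.ofReal_lt_top (measure_lt_top _ _)
  have htQ : IsFiniteMeasure (ENNReal.ofReal t • Q) := by
    constructor
    simp only [Measure.smul_apply, smul_eq_mul]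
    exact ENNReal.mul_lt_top ENNReal.ofReal_lt_top (measure_lt_top _ _)
  have hadd := Measure.rnDeriv_add (ENNReal.ofReal s • P) (ENNReal.ofReal t • Q) lebI
  have hsm1 := Measure.rnDeriv_smul_left_of_ne_top P lebI (r := ENNReal.ofReal s)
    ENNReal.ofReal_ne_top
  have hsm2 := Measure.rnDeriv_smul_left_of_ne_top Q lebI (r := ENNReal.ofReal t)
    ENNReal.ofReal_ne_top
  filter_upwards [hadd, hsm1, hsm2, Measure.rnDeriv_ne_top P lebI,
    Measure.rnDeriv_ne_top Q lebI] with x h1 h2 h3 h4 h5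
  rw [h1, Pi.add_apply, h2, h3]
  simp only [Pi.smul_apply, smul_eq_mul]
  rw [ENNReal.toReal_add (by finiteness) (by finiteness), ENNReal.toReal_mul,
    ENNReal.toReal_mul, ENNReal.toReal_ofReal hs, ENNReal.toReal_ofReal ht]

lemma KL_mix_strict {P Q : Measure ℝ} [IsProbabilityMeasure P] [IsProbabilityMeasure Q]
    (hPl : lebI ≪ P) (hQl : lebI ≪ Q)
    (hPint : Integrable (fun x => Real.log ((P.rnDeriv lebI x).toReal)) lebI)
    (hQint : Integrable (fun x => Real.log ((Q.rnDeriv lebI x).toReal)) lebI)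
    (hdiff : ¬ (P.rnDeriv lebI =ᵐ[lebI] Q.rnDeriv lebI))
    {t : ℝ} (ht : t ∈ Set.Ioo (0:ℝ) 1) :
    Integrable (fun x => Real.log
        (((ENNReal.ofReal (1-t) • P + ENNReal.ofReal t • Q).rnDeriv lebI x).toReal)) lebI ∧
    ∫ x, -Real.log
        (((ENNReal.ofReal (1-t) • P + ENNReal.ofReal t • Q).rnDeriv lebI x).toReal) ∂lebI
      < (1-t) * ∫ x, -Real.log ((P.rnDeriv lebI x).toReal) ∂lebI
        + t * ∫ x, -Real.log ((Q.rnDeriv lebI x).toReal) ∂lebI := by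
  obtain ⟨ht0, ht1⟩ := ht
  have h1t : (0:ℝ) < 1 - t := by linarith
  set A : ℝ → ℝ := fun x => (P.rnDeriv lebI x).toReal with hA
  set B : ℝ → ℝ := fun x => (Q.rnDeriv lebI x).toReal with hB
  have hAmeas : Measurable A := (Measure.measurable_rnDeriv _ _).ennreal_toReal
  have hBmeas : Measurable B := (Measure.measurable_rnDeriv _ _).ennreal_toReal
  have hApos : ∀ᵐ x ∂lebI, 0 < A x := by
    filter_upwards [Measure.rnDeriv_pos' hPl, Measure.rnDeriv_ne_top P lebI] with x h1 h2
    exact ENNReal.toReal_pos h1.ne' h2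
  have hBpos : ∀ᵐ x ∂lebI, 0 < B x := by
    filter_upwards [Measure.rnDeriv_pos' hQl, Measure.rnDeriv_ne_top Q lebI] with x h1 h2
    exact ENNReal.toReal_pos h1.ne' h2
  have hmix : ∀ᵐ x ∂lebI,
      (((ENNReal.ofReal (1-t) • P + ENNReal.ofReal t • Q).rnDeriv lebI x).toReal)
        = (1-t) * A x + t * B x := rnDeriv_mix_ae h1t.le ht0.le
  -- integrability of the mixture log-density
  have hgint : Integrable (fun x =>
      (|Real.log 2| + |Real.log (1-t)|) + |Real.log (A x)| + |Real.log (B x)|) lebI :=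
    ((integrable_const _).add hPint.abs).add hQint.abs
  have hintmix : Integrable (fun x => Real.log ((1-t) * A x + t * B x)) lebI := by
    refine hgint.mono' (((hAmeas.const_mul _).add (hBmeas.const_mul _)).log
      |>.aestronglyMeasurable) ?_
    filter_upwards [hApos, hBpos] with x ha hb
    rw [Real.norm_eq_abs, abs_le]
    have harg : 0 < (1-t) * A x + t * B x := by nlinarith
    constructor
    · have hlow : Real.log ((1-t) * A x) ≤ Real.log ((1-t) * A x + t * B x) :=
        Real.log_le_log (by positivity) (by nlinarith)
      rw [Real.log_mul h1t.ne' ha.ne'] at hlow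
      have h2 : |Real.log (1-t)| = -Real.log (1-t) := by
        rw [abs_of_nonpos]
        exact Real.log_nonpos h1t.le (by linarith)
      have := neg_abs_le (Real.log (A x))
      have := abs_nonneg (Real.log (B x))
      have := abs_nonneg (Real.log 2)
      linarith
    · have hup : Real.log ((1-t) * A x + t * B x) ≤ Real.log (2 * max (A x) (B x)) := by
        refine Real.log_le_log harg ?_
        rcases le_total (A x) (B x) with h | h
        · rw [max_eq_right h]; nlinarith
        · rw [max_eq_left h]; nlinarith
      rw [Real.log_mul two_ne_zero (by positivity : max (A x) (B x) ≠ 0)] at hup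
      have hmaxlog : Real.log (max (A x) (B x)) ≤ |Real.log (A x)| + |Real.log (B x)| := by
        rcases le_total (A x) (B x) with h | h
        · rw [max_eq_right h]
          have := le_abs_self (Real.log (B x)); have := abs_nonneg (Real.log (A x)); linarith
        · rw [max_eq_left h]
          have := le_abs_self (Real.log (A x)); have := abs_nonneg (Real.log (B x)); linarith
      have := le_abs_self (Real.log 2)
      have := abs_nonneg (Real.log (1-t))
      linarith
  have hintMixfin : Integrable (fun x => Real.log
      (((ENNReal.ofReal (1-t) • P + ENNReal.ofReal t • Q).rnDeriv lebI x).toReal)) lebI := by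
    refine hintmix.congr ?_
    filter_upwards [hmix] with x h
    rw [h]
  refine ⟨hintMixfin, ?_⟩
  -- the concavity gap
  set F : ℝ → ℝ := fun x =>
    (1-t) * (-Real.log (A x)) + t * (-Real.log (B x)) + Real.log ((1-t) * A x + t * B x)
    with hF
  have hFint : Integrable F lebI :=
    ((hPint.neg.const_mul _).add (hQint.neg.const_mul _)).add hintmix
  have hF0 : 0 ≤ᵐ[lebI] F := by
    filter_upwards [hApos, hBpos] with x ha hb
    have := strictConcaveOn_log_Ioi.concaveOn.2 (mem_Ioi.2 ha) (mem_Ioi.2 hb)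
      h1t.le ht0.le (by ring)
    simp only [smul_eq_mul] at this
    show 0 ≤ (1-t) * -Real.log (A x) + t * -Real.log (B x)
        + Real.log ((1-t) * A x + t * B x)
    linarith
  have hsupp : 0 < lebI (Function.support F) := by
    rcases (zero_le : 0 ≤ lebI (Function.support F)).lt_or_eq with h | h
    · exact h
    apply absurd _ hdiff
    have hFz : ∀ᵐ x ∂lebI, F x = 0 := by
      rw [ae_iff]
      simpa [Function.support] using h.symm
    filter_upwards [hFz, hApos, hBpos, Measure.rnDeriv_ne_top P lebI,
      Measure.rnDeriv_ne_top Q lebI] with x hFx ha hb hPt hQt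
    by_contra hne
    have hABne : A x ≠ B x := fun hh => hne ((ENNReal.toReal_eq_toReal_iff' hPt hQt).1 hh)
    have := strictConcaveOn_log_Ioi.2 (mem_Ioi.2 ha) (mem_Ioi.2 hb) hABne h1t ht0 (by ring)
    simp only [smul_eq_mul] at this
    have hFx' : (1-t) * -Real.log (A x) + t * -Real.log (B x)
        + Real.log ((1-t) * A x + t * B x) = 0 := hFx
    linarith
  have hFpos : 0 < ∫ x, F x ∂lebI :=
    (integral_pos_iff_support_of_nonneg_ae hF0 hFint).2 hsupp
  have h1 : Integrable (fun x => (1-t) * -Real.log (A x)) lebI := hPint.neg.const_mul _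
  have h2 : Integrable (fun x => t * -Real.log (B x)) lebI := hQint.neg.const_mul _
  have hkey : ∫ x, -Real.log
      (((ENNReal.ofReal (1-t) • P + ENNReal.ofReal t • Q).rnDeriv lebI x).toReal) ∂lebI
      = (1-t) * (∫ x, -Real.log (A x) ∂lebI) + t * (∫ x, -Real.log (B x) ∂lebI)
        - ∫ x, F x ∂lebI := by
    have hcon : ∫ x, -Real.log
        (((ENNReal.ofReal (1-t) • P + ENNReal.ofReal t • Q).rnDeriv lebI x).toReal) ∂lebI
        = ∫ x, ((1-t) * -Real.log (A x) + t * -Real.log (B x) - F x) ∂lebI := by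
      refine integral_congr_ae ?_
      filter_upwards [hmix] with x h
      rw [h]
      show -Real.log ((1-t) * A x + t * B x)
          = (1-t) * -Real.log (A x) + t * -Real.log (B x)
            - ((1-t) * -Real.log (A x) + t * -Real.log (B x)
                + Real.log ((1-t) * A x + t * B x))
      ring
    have hsum : Integrable (fun x => (1-t) * -Real.log (A x) + t * -Real.log (B x)) lebI :=
      h1.add h2
    rw [hcon, integral_sub hsum hFint, integral_add h1 h2, integral_const_mul, integral_const_mul]
  rw [hkey]
  have e1 : ∫ x, -Real.log ((P.rnDeriv lebI x).toReal) ∂lebI = ∫ x, -Real.log (A x) ∂lebI := rfl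
  have e2 : ∫ x, -Real.log ((Q.rnDeriv lebI x).toReal) ∂lebI = ∫ x, -Real.log (B x) ∂lebI := rfl
  rw [e1, e2]
  linarith


lemma regLoglik_parts {N : ℕ} {pA : ℕ → ℝ → ℝ} {phat : ℕ → ℝ} {μ : ℝ} (hμ : 0 < μ)
    {P : Measure ℝ} [SigmaFinite P] (h : ⊥ < regLoglik N pA phat μ P) :
    (∀ y ∈ Finset.range (N + 1), 0 < phat y → 0 < margin pA P y) ∧ lebI ≪ P ∧
      Integrable (fun x => Real.log ((P.rnDeriv lebI x).toReal)) lebI := by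
  rw [regLoglik] at h
  have hl : loglik N pA phat P ≠ ⊥ := by
    intro hb; rw [hb, EReal.bot_sub] at h; exact lt_irrefl _ h
  have hk : KLdiv lebI P ≠ ⊤ := by
    intro hb; rw [hb, EReal.coe_mul_top_of_pos hμ, EReal.sub_top] at h; exact lt_irrefl _ h
  exact ⟨loglik_cond_of_ne_bot hl, KLdiv_ne_top_iff.1 hk⟩

lemma regLoglik_val {N : ℕ} {pA : ℕ → ℝ → ℝ} {phat : ℕ → ℝ} {μ : ℝ}
    {P : Measure ℝ} [SigmaFinite P]
    (hcond : ∀ y ∈ Finset.range (N + 1), 0 < phat y → 0 < margin pA P y)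
    (hl : lebI ≪ P) (hint : Integrable (fun x => Real.log ((P.rnDeriv lebI x).toReal)) lebI) :
    regLoglik N pA phat μ P
      = (((∑ y ∈ Finset.range (N + 1), phat y * Real.log (margin pA P y))
          - μ * ∫ x, -Real.log ((P.rnDeriv lebI x).toReal) ∂lebI : ℝ) : EReal) := by
  rw [regLoglik, loglik_eq_of_cond hcond, KLdiv_eq hl hint, ← EReal.coe_mul, ← EReal.coe_sub]

lemma regLoglik_ne_top {N : ℕ} {pA : ℕ → ℝ → ℝ} {phat : ℕ → ℝ} {μ : ℝ} (hμ : 0 < μ)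
    (P : Measure ℝ) : regLoglik N pA phat μ P ≠ ⊤ := by
  rw [regLoglik, loglik, KLdiv]
  split_ifs with h1 h2
  · rw [← EReal.coe_mul, ← EReal.coe_sub]; exact EReal.coe_ne_top _
  · rw [EReal.coe_mul_top_of_pos hμ, EReal.sub_top]; exact bot_ne_top
  all_goals rw [EReal.bot_sub]; exact bot_ne_top

lemma regLoglik_mix_gt
    (N : ℕ) (pA : ℕ → ℝ → ℝ) (phat : ℕ → ℝ)
    (hpAmeas : ∀ y, Measurable (pA y)) (hpAnonneg : ∀ y γ, 0 ≤ pA y γ)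
    (hpAsum : ∀ γ ∈ Set.Icc (0:ℝ) 1, ∑ y ∈ Finset.range (N + 1), pA y γ = 1)
    (hphat : ∀ y, 0 ≤ phat y)
    (μ : ℝ) (hμ : 0 < μ)
    (P Q : Measure ℝ) (hP : IsProbabilityMeasure P) (hQ : IsProbabilityMeasure Q)
    (hPac : P ≪ lebI) (hQac : Q ≪ lebI)
    (hdiff : ¬ (P.rnDeriv lebI =ᵐ[lebI] Q.rnDeriv lebI))
    (hPfin : ⊥ < regLoglik N pA phat μ P) (hQfin : ⊥ < regLoglik N pA phat μ Q)
    {t : ℝ} (ht : t ∈ Set.Ioo (0:ℝ) 1) :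
    ((1 - t : ℝ) : EReal) * regLoglik N pA phat μ P
        + ((t : ℝ) : EReal) * regLoglik N pA phat μ Q
      < regLoglik N pA phat μ (ENNReal.ofReal (1 - t) • P + ENNReal.ofReal t • Q) := by
  haveI := hP; haveI := hQ
  obtain ⟨hcondP, hPl, hPint⟩ := regLoglik_parts hμ hPfin
  obtain ⟨hcondQ, hQl, hQint⟩ := regLoglik_parts hμ hQfin
  obtain ⟨ht0, ht1⟩ := ht
  have h1t : (0:ℝ) < 1 - t := by linarith
  haveI hM : IsProbabilityMeasure (ENNReal.ofReal (1-t) • P + ENNReal.ofReal t • Q) :=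
    isProbMix hP hQ ht0.le ht1.le
  -- mixture loglik part
  obtain ⟨hcondM, hsum⟩ := loglik_sum_mix hpAmeas hpAnonneg hpAsum hphat hPac hQac
    hcondP hcondQ ⟨ht0, ht1⟩
  -- mixture KL part
  obtain ⟨hMint, hKlt⟩ := KL_mix_strict hPl hQl hPint hQint hdiff ⟨ht0, ht1⟩
  have hMl : lebI ≪ (ENNReal.ofReal (1-t) • P + ENNReal.ofReal t • Q) := by
    refine hPl.trans ?_
    intro s hs
    simp only [Measure.add_apply, Measure.smul_apply, smul_eq_mul] at hs
    rcases add_eq_zero.1 hs with ⟨h1, _⟩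
    rcases mul_eq_zero.1 h1 with h | h
    · exact absurd h (by simp [ENNReal.ofReal_eq_zero]; linarith)
    · exact h
  rw [regLoglik_val hcondP hPl hPint, regLoglik_val hcondQ hQl hQint,
    regLoglik_val hcondM hMl hMint, ← EReal.coe_mul, ← EReal.coe_mul, ← EReal.coe_add,
    EReal.coe_lt_coe_iff]
  have hmul := mul_lt_mul_of_pos_left hKlt hμ
  nlinarith [hsum, hmul]

end helpers

/-- **Theorem (strict concavity of `ℓ_μ` and uniqueness of its maximizer).**
Fix `μ > 0`.  If `P` and `Q` are probability measures on `[0,1]` that are absolutely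
continuous with respect to Lebesgue measure, whose densities differ on a set of positive
Lebesgue measure, and such that `ℓ_μ[P] > −∞` and `ℓ_μ[Q] > −∞`, then for every
`t ∈ (0,1)`, `ℓ_μ[(1−t)P + tQ] > (1−t)·ℓ_μ[P] + t·ℓ_μ[Q]`.  Consequently, `ℓ_μ` has at
most one maximizer among absolutely continuous probability measures on `[0,1]`. -/
theorem regLoglik_strictly_concave_and_unique_maximizer
    (N : ℕ) (pA : ℕ → ℝ → ℝ) (phat : ℕ → ℝ)
    (hpAmeas : ∀ y, Measurable (pA y)) (hpAnonneg : ∀ y γ, 0 ≤ pA y γ)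
    (hpAsum : ∀ γ ∈ Set.Icc (0:ℝ) 1, ∑ y ∈ Finset.range (N + 1), pA y γ = 1)
    (hphat : ∀ y, 0 ≤ phat y) (hphat1 : ∑ y ∈ Finset.range (N + 1), phat y = 1)
    (μ : ℝ) (hμ : 0 < μ)
    (P Q : Measure ℝ) (hP : IsProbabilityMeasure P) (hQ : IsProbabilityMeasure Q)
    (hPac : P ≪ lebI) (hQac : Q ≪ lebI)
    (hdiff : ¬ (P.rnDeriv lebI =ᵐ[lebI] Q.rnDeriv lebI))
    (hPfin : ⊥ < regLoglik N pA phat μ P) (hQfin : ⊥ < regLoglik N pA phat μ Q) :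
    (∀ t ∈ Set.Ioo (0:ℝ) 1,
      ((1 - t : ℝ) : EReal) * regLoglik N pA phat μ P
          + ((t : ℝ) : EReal) * regLoglik N pA phat μ Q
        < regLoglik N pA phat μ (ENNReal.ofReal (1 - t) • P + ENNReal.ofReal t • Q)) ∧
    (∀ P' Q' : Measure ℝ, IsProbabilityMeasure P' → IsProbabilityMeasure Q' →
      P' ≪ lebI → Q' ≪ lebI →
      (∀ R : Measure ℝ, IsProbabilityMeasure R → R ≪ lebI →
        regLoglik N pA phat μ R ≤ regLoglik N pA phat μ P') →
      (∀ R : Measure ℝ, IsProbabilityMeasure R → R ≪ lebI →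
        regLoglik N pA phat μ R ≤ regLoglik N pA phat μ Q') →
      P' = Q') := by
  constructor
  · intro t ht
    exact regLoglik_mix_gt N pA phat hpAmeas hpAnonneg hpAsum hphat μ hμ P Q hP hQ
      hPac hQac hdiff hPfin hQfin ht
  · intro P' Q' hP' hQ' hP'ac hQ'ac hm1 hm2
    haveI := hP'; haveI := hQ'
    by_cases hd : P'.rnDeriv lebI =ᵐ[lebI] Q'.rnDeriv lebI
    · calc P' = lebI.withDensity (P'.rnDeriv lebI) :=
            (Measure.withDensity_rnDeriv_eq _ _ hP'ac).symm
        _ = lebI.withDensity (Q'.rnDeriv lebI) := withDensity_congr_ae hd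
        _ = Q' := Measure.withDensity_rnDeriv_eq _ _ hQ'ac
    · exfalso
      have hv1 : ⊥ < regLoglik N pA phat μ P' := lt_of_lt_of_le hPfin (hm1 P hP hPac)
      have hv2 : ⊥ < regLoglik N pA phat μ Q' := lt_of_lt_of_le hPfin (hm2 P hP hPac)
      have hveq : regLoglik N pA phat μ P' = regLoglik N pA phat μ Q' :=
        le_antisymm (hm2 P' hP' hP'ac) (hm1 Q' hQ' hQ'ac)
      have hkey := regLoglik_mix_gt N pA phat hpAmeas hpAnonneg hpAsum hphat μ hμ
        P' Q' hP' hQ' hP'ac hQ'ac hd hv1 hv2 (t := 1/2) ⟨by norm_num, by norm_num⟩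
      have hRprob : IsProbabilityMeasure
          (ENNReal.ofReal (1 - 1/2) • P' + ENNReal.ofReal (1/2) • Q') :=
        isProbMix hP' hQ' (by norm_num) (by norm_num)
      have hRac : (ENNReal.ofReal (1 - 1/2) • P' + ENNReal.ofReal (1/2) • Q') ≪ lebI := by
        intro s hs
        simp only [Measure.add_apply, Measure.smul_apply, smul_eq_mul,
          hP'ac hs, hQ'ac hs, mul_zero, add_zero]
      have hle := hm1 _ hRprob hRac
      -- compute the left side of hkey
      obtain ⟨r, hr⟩ : ∃ r : ℝ, regLoglik N pA phat μ P' = (r : EReal) :=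
        ⟨(regLoglik N pA phat μ P').toReal,
          (EReal.coe_toReal (regLoglik_ne_top hμ P') hv1.ne').symm⟩
      rw [hveq] at hr
      rw [hveq, hr, ← EReal.coe_mul, ← EReal.coe_mul, ← EReal.coe_add] at hkey
      have : ((1 - 1/2) * r + 1/2 * r : ℝ) = r := by ring
      rw [this] at hkey
      rw [hveq, hr] at hle
      exact absurd (lt_of_lt_of_le hkey hle) (lt_irrefl _)
end

section
/- Assume c₀ := min_{0≤y≤N} p̂(y) > 0. Fix ρ ∈ [0,1), ε ∈ (0, ρ/16], δ > 0, and a measurable set B ⊆ [0,1] whose complement has Lebesgue measure at most δ. Let p^(0) be a probability density on [0,1] with p̄ := sup_{γ∈[0,1]} p^(0)(γ) < ∞, let (p^(t))_{t≥0} be the sequence of unregularized NPEM updates started from p^(0), and let p^(t)_MA be the corresponding marginals. Set η₁ := max_{y≠y′} sup_{γ∈B} p_A(y|γ)·p_A(y′|γ) and η₂ := max_y sup_{γ∈B} ∑_{y′≠y} p_A(y|γ)·p_A(y′|γ). Assume: (L1) ‖p^(0)_MA − p̂‖₁ ≤ ε·c₀; (L2) η₁ ≤ ρ·c₀/(4(N+1));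 (L3) η₂ ≤ ρ·c₀/4; (L6) 0 < δ ≤ ρ·c₀/(4·p̄·exp((ρ/(1−ρ))·(1/c₀)·‖p^(0)_MA − p̂‖₁)·(N+2)). Then for every t ≥ 0, ‖p^(t+1)_MA − p̂‖₁ ≤ ρ·‖p^(t)_MA − p̂‖₁, where ‖g‖₁ = ∑_{y=0}^N |g(y)|. -/
open MeasureTheory Set Filter Topology

/-- Implied marginal `p_MA(y) = ∫₀¹ p_A(y|γ) p_M(γ) dγ` of a density `p_M`. -/
noncomputable def marginD (pA : ℕ → ℝ → ℝ) (p : ℝ → ℝ) (y : ℕ) : ℝ :=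
  ∫ γ, pA y γ * p γ ∂lebI

/-- The unregularized NPEM update `p′_M(γ) = ∑_y p_A(y|γ) p̂(y) p_M(γ)/p_MA(y)`. -/
noncomputable def npUpd0 (N : ℕ) (pA : ℕ → ℝ → ℝ) (phat : ℕ → ℝ) (p : ℝ → ℝ) :
    ℝ → ℝ := fun γ =>
  ∑ y ∈ Finset.range (N + 1), pA y γ * phat y * p γ / marginD pA p y

set_option maxHeartbeats 2000000

lemma lebI_univ : lebI Set.univ = 1 := by
  rw [lebI, Measure.restrict_apply_univ, Real.volume_Icc]; norm_num

instance : IsFiniteMeasure lebI := ⟨by rw [lebI_univ]; exact ENNReal.one_lt_top⟩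

lemma integrable_of_bd {f : ℝ → ℝ} (hf : Measurable f) {C : ℝ}
    (h : ∀ γ ∈ Set.Icc (0:ℝ) 1, |f γ| ≤ C) : Integrable f lebI := by
  refine Integrable.mono' (integrable_const C) hf.aestronglyMeasurable ?_
  rw [lebI, ae_restrict_iff' measurableSet_Icc]
  exact ae_of_all _ fun γ hγ => by simpa [Real.norm_eq_abs] using h γ hγ

lemma npem_step
    (N : ℕ) (pA : ℕ → ℝ → ℝ) (phat : ℕ → ℝ)
    (hpAmeas : ∀ y, Measurable (pA y)) (hpAnonneg : ∀ y γ, 0 ≤ pA y γ)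
    (hpAsum : ∀ γ ∈ Set.Icc (0:ℝ) 1, ∑ y ∈ Finset.range (N + 1), pA y γ = 1)
    (hphat1 : ∑ y ∈ Finset.range (N + 1), phat y = 1)
    (hphatnn : ∀ y, 0 ≤ phat y)
    (c0 : ℝ) (hc0pos : 0 < c0) (hc0le : ∀ y ∈ Finset.range (N+1), c0 ≤ phat y)
    (ρ δ : ℝ) (hρ0 : 0 ≤ ρ) (hρ1 : ρ ≤ 1) (hδ0 : 0 < δ)
    (B : Set ℝ) (hB : B ⊆ Set.Icc (0:ℝ) 1) (hBmeas : MeasurableSet B)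
    (hBc : volume (Set.Icc (0:ℝ) 1 \ B) ≤ ENNReal.ofReal δ)
    (η₁ : ℝ) (hη₁0 : 0 ≤ η₁) (hL2 : η₁ ≤ ρ * c0 / (4 * (N + 1)))
    (hη₁bd : ∀ y ∈ Finset.range (N+1), ∀ y' ∈ Finset.range (N+1), y ≠ y' →
       ∀ γ ∈ B, pA y γ * pA y' γ ≤ η₁)
    (Q : ℝ) (hQ0 : 0 ≤ Q) (hQδ : Q * δ ≤ 3 * (ρ * c0) / (4 * (N + 2)))
    (q : ℝ → ℝ) (hqmeas : Measurable q) (hqnn : ∀ γ, 0 ≤ q γ)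
    (hqint : ∫ γ, q γ ∂lebI = 1) (hqQ : ∀ γ ∈ Set.Icc (0:ℝ) 1, q γ ≤ Q)
    (hDq : ∑ y ∈ Finset.range (N+1), |marginD pA q y - phat y| ≤ ρ * c0 / 16) :
    (Measurable (npUpd0 N pA phat q) ∧ (∀ γ, 0 ≤ npUpd0 N pA phat q γ) ∧
      ∫ γ, npUpd0 N pA phat q γ ∂lebI = 1) ∧
    (∀ γ ∈ Set.Icc (0:ℝ) 1, npUpd0 N pA phat q γ ≤
      q γ * (1 + 16/(15*c0) * ∑ y ∈ Finset.range (N+1), |marginD pA q y - phat y|)) ∧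
    ∑ y ∈ Finset.range (N+1), |marginD pA (npUpd0 N pA phat q) y - phat y|
      ≤ (14/15) * ρ * ∑ y ∈ Finset.range (N+1), |marginD pA q y - phat y| := by
  -- abbreviations
  set R := Finset.range (N+1) with hR
  set M : ℕ → ℝ := marginD pA q with hM
  set Dq : ℝ := ∑ y ∈ R, |M y - phat y| with hDqdef
  have hDq0 : 0 ≤ Dq := Finset.sum_nonneg fun _ _ => abs_nonneg _
  have hpA1 : ∀ y ∈ R, ∀ γ ∈ Set.Icc (0:ℝ) 1, pA y γ ≤ 1 := by
    intro y hy γ hγ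
    calc pA y γ ≤ ∑ y' ∈ R, pA y' γ :=
          Finset.single_le_sum (fun i _ => hpAnonneg i γ) hy
      _ = 1 := hpAsum γ hγ
  have hMabs : ∀ y ∈ R, |M y - phat y| ≤ Dq := by
    intro y hy
    rw [hDqdef]
    exact Finset.single_le_sum (f := fun y => |M y - phat y|) (fun i _ => abs_nonneg _) hy
  have hMlb : ∀ y ∈ R, 15/16 * c0 ≤ M y := by
    intro y hy
    have h1 := (hMabs y hy).trans hDq
    have h2 := hc0le y hy
    have h3 := neg_le_of_abs_le h1
    nlinarith
  have hMpos : ∀ y ∈ R, 0 < M y := fun y hy => lt_of_lt_of_le (by positivity) (hMlb y hy)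
  have hMinv : ∀ y ∈ R, 1 / M y ≤ 16 / (15 * c0) := by
    intro y hy
    rw [div_le_div_iff₀ (hMpos y hy) (by positivity)]
    nlinarith [hMlb y hy]
  -- integrability
  have hqI : Integrable q lebI := integrable_of_bd hqmeas
    (fun γ hγ => by rw [abs_of_nonneg (hqnn γ)]; exact hqQ γ hγ)
  have hint2 : ∀ y ∈ R, Integrable (fun γ => pA y γ * q γ) lebI := by
    intro y hy
    refine integrable_of_bd (C := Q) ((hpAmeas y).mul hqmeas) (fun γ hγ => ?_)
    rw [abs_of_nonneg (mul_nonneg (hpAnonneg y γ) (hqnn γ))]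
    calc pA y γ * q γ ≤ 1 * Q :=
      mul_le_mul (hpA1 y hy γ hγ) (hqQ γ hγ) (hqnn γ) one_pos.le
    _ = Q := one_mul Q
  have hint3 : ∀ y ∈ R, ∀ y' ∈ R, Integrable (fun γ => pA y γ * (pA y' γ * q γ)) lebI := by
    intro y hy y' hy'
    refine integrable_of_bd (C := Q) ((hpAmeas y).mul ((hpAmeas y').mul hqmeas)) (fun γ hγ => ?_)
    rw [abs_of_nonneg (mul_nonneg (hpAnonneg y γ) (mul_nonneg (hpAnonneg y' γ) (hqnn γ)))]
    calc pA y γ * (pA y' γ * q γ) ≤ 1 * (1 * Q) := by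
          refine mul_le_mul (hpA1 y hy γ hγ) ?_ (mul_nonneg (hpAnonneg y' γ) (hqnn γ)) one_pos.le
          exact mul_le_mul (hpA1 y' hy' γ hγ) (hqQ γ hγ) (hqnn γ) one_pos.le
    _ = Q := by ring
  -- the pairwise integrals
  set I : ℕ → ℕ → ℝ := fun y y' => ∫ γ, pA y γ * (pA y' γ * q γ) ∂lebI with hI
  have hI0 : ∀ y y', 0 ≤ I y y' := fun y y' =>
    integral_nonneg fun γ => mul_nonneg (hpAnonneg y γ) (mul_nonneg (hpAnonneg y' γ) (hqnn γ))
  have claimB : ∀ y ∈ R, (∑ y' ∈ R, I y y') = M y := by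
    intro y hy
    have h1 : (∑ y' ∈ R, I y y') = ∫ γ, ∑ y' ∈ R, pA y γ * (pA y' γ * q γ) ∂lebI :=
      (integral_finset_sum R (fun y' hy' => hint3 y hy y' hy')).symm
    rw [h1]
    simp only [hM, marginD]
    refine integral_congr_ae ((ae_restrict_iff' measurableSet_Icc).2 (ae_of_all _ fun γ hγ => ?_))
    show (∑ y' ∈ R, pA y γ * (pA y' γ * q γ)) = pA y γ * q γ
    rw [← Finset.mul_sum, ← Finset.sum_mul, hpAsum γ hγ, one_mul]
  have claimA : ∀ y ∈ R, marginD pA (npUpd0 N pA phat q) y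
      = ∑ y' ∈ R, phat y' / M y' * I y y' := by
    intro y hy
    have h1 : marginD pA (npUpd0 N pA phat q) y
        = ∫ γ, ∑ y' ∈ R, phat y' / M y' * (pA y γ * (pA y' γ * q γ)) ∂lebI := by
      simp only [marginD]
      refine integral_congr_ae (ae_of_all _ fun γ => ?_)
      simp only [npUpd0, Finset.mul_sum, hM]
      exact Finset.sum_congr rfl fun y' _ => by ring
    rw [h1, integral_finset_sum R (fun y' hy' => (hint3 y hy y' hy').const_mul _)]
    exact Finset.sum_congr rfl fun y' _ => integral_const_mul _ _
  -- density properties of the update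
  have hq'meas : Measurable (npUpd0 N pA phat q) := by
    unfold npUpd0
    apply Finset.measurable_sum
    intro y hy
    exact (((hpAmeas y).mul_const (phat y)).mul hqmeas).div_const _
  have hq'nn : ∀ γ, 0 ≤ npUpd0 N pA phat q γ := by
    intro γ
    refine Finset.sum_nonneg fun y hy => div_nonneg ?_ ?_
    · exact mul_nonneg (mul_nonneg (hpAnonneg y γ) (hphatnn y)) (hqnn γ)
    · exact le_of_lt (hMpos y hy)
  have hq'int : ∫ γ, npUpd0 N pA phat q γ ∂lebI = 1 := by
    have h0 : (fun γ => npUpd0 N pA phat q γ) =ᵐ[lebI]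
        fun γ => ∑ y ∈ R, phat y / M y * (pA y γ * q γ) := by
      refine ae_of_all _ fun γ => ?_
      simp only [npUpd0, hM]
      exact Finset.sum_congr rfl fun y _ => by ring
    rw [integral_congr_ae h0, integral_finset_sum R (fun y hy => (hint2 y hy).const_mul _)]
    have h9 : ∀ y ∈ R, ∫ γ, phat y / M y * (pA y γ * q γ) ∂lebI = phat y := by
      intro y hy
      rw [integral_const_mul]
      have h8 : ∫ γ, pA y γ * q γ ∂lebI = M y := rfl
      rw [h8, div_mul_cancel₀ _ (hMpos y hy).ne']
    rw [Finset.sum_congr rfl h9, hphat1]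
  -- pointwise growth bound
  have hgrow : ∀ γ ∈ Set.Icc (0:ℝ) 1,
      npUpd0 N pA phat q γ ≤ q γ * (1 + 16/(15*c0) * Dq) := by
    intro γ hγ
    have hterm : ∀ y ∈ R, pA y γ * phat y * q γ / marginD pA q y
        ≤ pA y γ * q γ + q γ * (16/(15*c0) * |M y - phat y|) := by
      intro y hy
      have hMy := hMpos y hy
      have hratio : phat y / M y ≤ 1 + 16/(15*c0) * |M y - phat y| := by
        have h1 : phat y / M y - 1 = (phat y - M y) / M y := by
          field_simp
        have h3 : phat y - M y ≤ |M y - phat y| := by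
          rw [abs_sub_comm]; exact le_abs_self _
        have h4 : (M y)⁻¹ ≤ 16/(15*c0) := by rw [← one_div]; exact hMinv y hy
        have h2 : (phat y - M y) / M y ≤ |M y - phat y| * (16/(15*c0)) := by
          rw [div_eq_mul_inv]
          exact mul_le_mul h3 h4 (inv_nonneg.2 hMy.le) (abs_nonneg _)
        nlinarith
      have heq : pA y γ * phat y * q γ / marginD pA q y
          = (pA y γ * q γ) * (phat y / M y) := by
        simp only [hM]; ring
      rw [heq]
      calc (pA y γ * q γ) * (phat y / M y)
          ≤ (pA y γ * q γ) * (1 + 16/(15*c0) * |M y - phat y|) :=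
            mul_le_mul_of_nonneg_left hratio (mul_nonneg (hpAnonneg y γ) (hqnn γ))
        _ = pA y γ * q γ + (pA y γ * q γ) * (16/(15*c0) * |M y - phat y|) := by ring
        _ ≤ pA y γ * q γ + q γ * (16/(15*c0) * |M y - phat y|) := by
            have h5 : pA y γ * q γ ≤ q γ :=
              mul_le_of_le_one_left (hqnn γ) (hpA1 y hy γ hγ)
            have h6 : (0:ℝ) ≤ 16/(15*c0) * |M y - phat y| := by positivity
            nlinarith
    calc npUpd0 N pA phat q γ = ∑ y ∈ R, pA y γ * phat y * q γ / marginD pA q y := rfl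
      _ ≤ ∑ y ∈ R, (pA y γ * q γ + q γ * (16/(15*c0) * |M y - phat y|)) :=
          Finset.sum_le_sum hterm
      _ = (∑ y ∈ R, pA y γ) * q γ + q γ * (16/(15*c0) * Dq) := by
          rw [Finset.sum_add_distrib, ← Finset.sum_mul, ← Finset.mul_sum, ← Finset.mul_sum,
            hDqdef]
      _ = q γ * (1 + 16/(15*c0) * Dq) := by rw [hpAsum γ hγ]; ring
  -- bound on the pairwise integrals for distinct indices
  have hIbd : ∀ y ∈ R, ∀ y' ∈ R, y ≠ y' → I y y' ≤ η₁ + Q/4 * δ := by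
    intro y hy y' hy' hne
    have hsplit : I y y' = (∫ γ in B, pA y γ * (pA y' γ * q γ) ∂lebI)
        + ∫ γ in Bᶜ, pA y γ * (pA y' γ * q γ) ∂lebI :=
      (integral_add_compl hBmeas (hint3 y hy y' hy')).symm
    have hBle : (∫ γ in B, pA y γ * (pA y' γ * q γ) ∂lebI) ≤ η₁ := by
      have h1 : (∫ γ in B, pA y γ * (pA y' γ * q γ) ∂lebI)
          ≤ ∫ γ in B, η₁ * q γ ∂lebI := by
        refine setIntegral_mono_on (hint3 y hy y' hy').integrableOn
          ((hqI.const_mul η₁).integrableOn) hBmeas ?_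
        intro γ hγ
        have h2 := hη₁bd y hy y' hy' hne γ hγ
        have h3 := hqnn γ
        nlinarith [hpAnonneg y γ, hpAnonneg y' γ]
      have h2 : ∫ γ in B, η₁ * q γ ∂lebI = η₁ * ∫ γ in B, q γ ∂lebI :=
        integral_const_mul _ _
      have h3 : ∫ γ in B, q γ ∂lebI ≤ 1 := by
        rw [← hqint]
        exact setIntegral_le_integral hqI (ae_of_all _ hqnn)
      calc (∫ γ in B, pA y γ * (pA y' γ * q γ) ∂lebI) ≤ η₁ * ∫ γ in B, q γ ∂lebI :=
            h1.trans_eq h2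
        _ ≤ η₁ * 1 := mul_le_mul_of_nonneg_left h3 hη₁0
        _ = η₁ := mul_one _
    have hCle : (∫ γ in Bᶜ, pA y γ * (pA y' γ * q γ) ∂lebI) ≤ Q/4 * δ := by
      have hres : lebI.restrict Bᶜ = volume.restrict (Set.Icc (0:ℝ) 1 \ B) := by
        rw [lebI, Measure.restrict_restrict hBmeas.compl]
        congr 1
        rw [Set.diff_eq, Set.inter_comm]
      have hrw : (∫ γ in Bᶜ, pA y γ * (pA y' γ * q γ) ∂lebI)
          = ∫ γ in Set.Icc (0:ℝ) 1 \ B, pA y γ * (pA y' γ * q γ) := by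
        rw [show (∫ γ in Bᶜ, pA y γ * (pA y' γ * q γ) ∂lebI)
            = ∫ γ, pA y γ * (pA y' γ * q γ) ∂(lebI.restrict Bᶜ) from rfl, hres]
      rw [hrw]
      have hvol : volume (Set.Icc (0:ℝ) 1 \ B) < ⊤ := lt_of_le_of_lt hBc ENNReal.ofReal_lt_top
      have hbd : ∀ x ∈ Set.Icc (0:ℝ) 1 \ B, ‖pA y x * (pA y' x * q x)‖ ≤ Q/4 := by
        intro x hx
        obtain ⟨hx1, _⟩ := hx
        rw [Real.norm_eq_abs,
          abs_of_nonneg (mul_nonneg (hpAnonneg y x) (mul_nonneg (hpAnonneg y' x) (hqnn x)))]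
        have hsum2 : pA y x + pA y' x ≤ 1 := by
          have h5 : pA y' x ≤ ∑ z ∈ R.erase y, pA z x :=
            Finset.single_le_sum (fun i _ => hpAnonneg i x)
              (Finset.mem_erase.2 ⟨Ne.symm hne, hy'⟩)
          have h6 := Finset.add_sum_erase R (fun z => pA z x) hy
          rw [hpAsum x hx1] at h6
          linarith
        have hab : pA y x * pA y' x ≤ 1/4 := by
          nlinarith [sq_nonneg (pA y x - pA y' x), hpAnonneg y x, hpAnonneg y' x]
        calc pA y x * (pA y' x * q x) = (pA y x * pA y' x) * q x := by ring
          _ ≤ 1/4 * Q := mul_le_mul hab (hqQ x hx1) (hqnn x) (by norm_num)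
          _ = Q/4 := by ring
      have hnorm := norm_setIntegral_le_of_norm_le_const hvol hbd
      have htr : (volume (Set.Icc (0:ℝ) 1 \ B)).toReal ≤ δ :=
        ENNReal.toReal_le_of_le_ofReal hδ0.le hBc
      calc (∫ γ in Set.Icc (0:ℝ) 1 \ B, pA y γ * (pA y' γ * q γ))
          ≤ |∫ γ in Set.Icc (0:ℝ) 1 \ B, pA y γ * (pA y' γ * q γ)| := le_abs_self _
        _ ≤ Q/4 * (volume (Set.Icc (0:ℝ) 1 \ B)).toReal := by
            rw [← Real.norm_eq_abs]; exact hnorm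
        _ ≤ Q/4 * δ := mul_le_mul_of_nonneg_left htr (by positivity)
    linarith [hsplit, hBle, hCle]
  -- the key identity for the error of the updated marginal
  have hDelta : ∀ y ∈ R, marginD pA (npUpd0 N pA phat q) y - phat y
      = ∑ y' ∈ R.erase y, (phat y' / M y' - phat y / M y) * I y y' := by
    intro y hy
    have e1 : phat y = ∑ y' ∈ R, phat y / M y * I y y' := by
      rw [← Finset.mul_sum, claimB y hy, div_mul_cancel₀ _ (hMpos y hy).ne']
    have e2 : marginD pA (npUpd0 N pA phat q) y - phat y
        = ∑ y' ∈ R, (phat y' / M y' - phat y / M y) * I y y' := by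
      rw [claimA y hy]
      conv_lhs => rw [e1]
      rw [← Finset.sum_sub_distrib]
      exact Finset.sum_congr rfl fun y' _ => by ring
    rw [e2, ← Finset.add_sum_erase R _ hy, sub_self, zero_mul, zero_add]
  -- per-index bound
  set W : ℝ := η₁ + Q/4 * δ with hWdef
  have hW0 : (0:ℝ) ≤ W := add_nonneg hη₁0 (by positivity)
  set g : ℕ → ℝ := fun y => |phat y / M y - 1| with hg
  set S : ℝ := ∑ y ∈ R, g y with hSdef
  have hg0 : ∀ y, 0 ≤ g y := fun y => abs_nonneg _
  have hS0 : 0 ≤ S := Finset.sum_nonneg fun y _ => hg0 y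
  have habs : ∀ y ∈ R, |marginD pA (npUpd0 N pA phat q) y - phat y| ≤ (S + N * g y) * W := by
    intro y hy
    rw [hDelta y hy]
    calc |∑ y' ∈ R.erase y, (phat y' / M y' - phat y / M y) * I y y'|
        ≤ ∑ y' ∈ R.erase y, |(phat y' / M y' - phat y / M y) * I y y'| :=
          Finset.abs_sum_le_sum_abs _ _
      _ ≤ ∑ y' ∈ R.erase y, (g y' + g y) * W := by
          refine Finset.sum_le_sum fun y' hy' => ?_
          obtain ⟨hne', hy'R⟩ := Finset.mem_erase.1 hy'
          rw [abs_mul, abs_of_nonneg (hI0 y y')]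
          refine mul_le_mul ?_ (hIbd y hy y' hy'R (Ne.symm hne')) (hI0 y y') ?_
          · calc |phat y' / M y' - phat y / M y|
                ≤ |phat y' / M y' - 1| + |1 - phat y / M y| := abs_sub_le _ 1 _
              _ = g y' + g y := by rw [abs_sub_comm 1]
          · exact add_nonneg (hg0 y') (hg0 y)
      _ = (∑ y' ∈ R.erase y, (g y' + g y)) * W := by rw [Finset.sum_mul]
      _ ≤ (S + N * g y) * W := by
          refine mul_le_mul_of_nonneg_right ?_ hW0
          rw [Finset.sum_add_distrib, Finset.sum_const, Finset.card_erase_of_mem hy,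
            hR, Finset.card_range, nsmul_eq_mul]
          have h7 : ∑ y' ∈ R.erase y, g y' ≤ S := by
            rw [hSdef]
            exact Finset.sum_le_sum_of_subset_of_nonneg (Finset.erase_subset _ _)
              (fun i _ _ => hg0 i)
          simp only [Nat.add_sub_cancel]
          linarith
  -- S is controlled by Dq
  have hSb : S ≤ 16/(15*c0) * Dq := by
    rw [hSdef, hDqdef, Finset.mul_sum]
    refine Finset.sum_le_sum fun y hy => ?_
    have hMy := hMpos y hy
    have h1 : phat y / M y - 1 = (phat y - M y) / M y := by field_simp
    have hgy : g y = |M y - phat y| / M y := by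
      rw [hg]
      simp only
      rw [h1, abs_div, abs_of_pos hMy, abs_sub_comm]
    rw [hgy, div_le_iff₀ hMy]
    have h2 : (1:ℝ) ≤ 16/(15*c0) * M y := by
      have := hMlb y hy
      rw [div_mul_eq_mul_div, le_div_iff₀ (by positivity)]
      linarith
    nlinarith [abs_nonneg (M y - phat y)]
  -- numeric bound on (2N+1) W
  have h2NW : (2*(N:ℝ)+1) * W ≤ 7/8 * (ρ * c0) := by
    have hn : (0:ℝ) ≤ N := Nat.cast_nonneg N
    have e1 : η₁ * (4*((N:ℝ)+1)) ≤ ρ * c0 := (le_div_iff₀ (by positivity)).1 hL2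
    have e2 : Q * δ * (4*((N:ℝ)+2)) ≤ 3*(ρ*c0) := (le_div_iff₀ (by positivity)).1 hQδ
    have e3 : (0:ℝ) ≤ Q * δ := mul_nonneg hQ0 hδ0.le
    rw [hWdef]
    nlinarith [mul_nonneg hn hη₁0, mul_nonneg hn e3]
  -- final contraction bound
  have hfinal : ∑ y ∈ R, |marginD pA (npUpd0 N pA phat q) y - phat y| ≤ 14/15 * ρ * Dq := by
    calc ∑ y ∈ R, |marginD pA (npUpd0 N pA phat q) y - phat y|
        ≤ ∑ y ∈ R, (S + N * g y) * W := Finset.sum_le_sum habs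
      _ = (2*(N:ℝ)+1) * W * S := by
          rw [← Finset.sum_mul, Finset.sum_add_distrib, Finset.sum_const, ← Finset.mul_sum,
            ← hSdef, hR, Finset.card_range, nsmul_eq_mul]
          push_cast
          ring
      _ ≤ (7/8 * (ρ * c0)) * (16/(15*c0) * Dq) := by
          refine mul_le_mul h2NW hSb hS0 ?_
          have : (0:ℝ) ≤ ρ * c0 := mul_nonneg hρ0 hc0pos.le
          linarith
      _ = 14/15 * ρ * Dq := by field_simp; ring
  exact ⟨⟨hq'meas, hq'nn, hq'int⟩, hgrow, hfinal⟩

/-- **Theorem (linear convergence of the NPEM algorithm).**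
Under the sharpness assumptions (L1)–(L6), the unregularized NPEM iterates satisfy
`‖p^(t+1)_MA − p̂‖₁ ≤ ρ·‖p^(t)_MA − p̂‖₁` for every `t`. -/
theorem npem_linear_convergence
    (N : ℕ) (pA : ℕ → ℝ → ℝ) (phat : ℕ → ℝ)
    (hpAmeas : ∀ y, Measurable (pA y)) (hpAnonneg : ∀ y γ, 0 ≤ pA y γ)
    (hpAsum : ∀ γ ∈ Set.Icc (0:ℝ) 1, ∑ y ∈ Finset.range (N + 1), pA y γ = 1)
    (hphat1 : ∑ y ∈ Finset.range (N + 1), phat y = 1) (hphatnn : ∀ y, 0 ≤ phat y)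
    -- (L4): `c₀ = min_y p̂(y) > 0`
    (c0 : ℝ) (hc0def : c0 = (Finset.range (N + 1)).inf' ⟨0, Finset.mem_range.mpr (Nat.succ_pos N)⟩ phat)
    (hc0pos : 0 < c0)
    (ρ ε δ : ℝ) (hρ0 : 0 ≤ ρ) (hρ1 : ρ < 1)
    -- (L5): `0 < ε ≤ ρ/16`
    (hε0 : 0 < ε) (hε : ε ≤ ρ / 16)
    (hδ0 : 0 < δ)
    -- the region `B ⊆ [0,1]` whose complement has Lebesgue measure at most `δ`
    (B : Set ℝ) (hB : B ⊆ Set.Icc (0:ℝ) 1) (hBmeas : MeasurableSet B)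
    (hBc : volume (Set.Icc (0:ℝ) 1 \ B) ≤ ENNReal.ofReal δ)
    -- the initial density `p⁽⁰⁾` and its supremum `p̄ < ∞`
    (p0 : ℝ → ℝ) (hp0 : IsDensity p0)
    (pbar : ℝ) (hpbarBdd : BddAbove (p0 '' Set.Icc (0:ℝ) 1))
    (hpbar : pbar = sSup (p0 '' Set.Icc (0:ℝ) 1))
    -- `η₁` and `η₂`
    (η₁ η₂ : ℝ)
    (hη₁ : η₁ = sSup {x : ℝ | ∃ y ∈ Finset.range (N + 1), ∃ y' ∈ Finset.range (N + 1),
      y ≠ y' ∧ ∃ γ ∈ B, x = pA y γ * pA y' γ})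
    (hη₂ : η₂ = sSup {x : ℝ | ∃ y ∈ Finset.range (N + 1), ∃ γ ∈ B,
      x = ∑ y' ∈ (Finset.range (N + 1)).erase y, pA y γ * pA y' γ})
    -- (L1): `‖p⁽⁰⁾_MA − p̂‖₁ ≤ ε c₀`
    (hL1 : ∑ y ∈ Finset.range (N + 1), |marginD pA p0 y - phat y| ≤ ε * c0)
    -- (L2): `η₁ ≤ ρ c₀ / (4 (N+1))`
    (hL2 : η₁ ≤ ρ * c0 / (4 * (N + 1)))
    -- (L3): `η₂ ≤ ρ c₀ / 4`
    (hL3 : η₂ ≤ ρ * c0 / 4)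
    -- (L6)
    (hL6 : δ ≤ ρ * c0 / (4 * pbar *
      Real.exp ((ρ / (1 - ρ)) * (1 / c0) *
        ∑ y ∈ Finset.range (N + 1), |marginD pA p0 y - phat y|) * (N + 2))) :
    ∀ t : ℕ,
      ∑ y ∈ Finset.range (N + 1),
          |marginD pA ((npUpd0 N pA phat)^[t + 1] p0) y - phat y|
        ≤ ρ * ∑ y ∈ Finset.range (N + 1),
            |marginD pA ((npUpd0 N pA phat)^[t] p0) y - phat y| := by
  obtain ⟨hp0m, hp0nn, hp0int⟩ := hp0
  have hρpos : 0 < ρ := by nlinarith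
  have hc0le : ∀ y ∈ Finset.range (N+1), c0 ≤ phat y := by
    intro y hy; rw [hc0def]; exact Finset.inf'_le _ hy
  have hpA1 : ∀ y ∈ Finset.range (N+1), ∀ γ ∈ Set.Icc (0:ℝ) 1, pA y γ ≤ 1 := by
    intro y hy γ hγ
    calc pA y γ ≤ ∑ y' ∈ Finset.range (N+1), pA y' γ :=
          Finset.single_le_sum (fun i _ => hpAnonneg i γ) hy
      _ = 1 := hpAsum γ hγ
  -- pbar facts
  have hpb : ∀ γ ∈ Set.Icc (0:ℝ) 1, p0 γ ≤ pbar := fun γ hγ => by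
    rw [hpbar]; exact le_csSup hpbarBdd ⟨γ, hγ, rfl⟩
  have hp0I : Integrable p0 lebI := integrable_of_bd hp0m (C := pbar) (fun γ hγ => by
    rw [abs_of_nonneg (hp0nn γ)]; exact hpb γ hγ)
  have hpbar1 : 1 ≤ pbar := by
    have h1 : ∫ γ, p0 γ ∂lebI ≤ ∫ _γ, pbar ∂lebI :=
      integral_mono_ae hp0I (integrable_const _)
        ((ae_restrict_iff' measurableSet_Icc).2 (ae_of_all _ hpb))
    have h2 : ∫ _γ, pbar ∂lebI = pbar := by
      rw [integral_const, Measure.real, lebI_univ]; simp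
    rw [hp0int, h2] at h1; exact h1
  have hpbar0 : 0 < pbar := by linarith
  have hNnn : (0:ℝ) ≤ N := Nat.cast_nonneg N
  -- η₁ facts
  have hS1bdd : BddAbove {x : ℝ | ∃ y ∈ Finset.range (N + 1), ∃ y' ∈ Finset.range (N + 1),
      y ≠ y' ∧ ∃ γ ∈ B, x = pA y γ * pA y' γ} := by
    refine ⟨1, fun x hx => ?_⟩
    obtain ⟨y, hy, y', hy', hne, γ, hγ, rfl⟩ := hx
    calc pA y γ * pA y' γ ≤ 1 * 1 :=
        mul_le_mul (hpA1 y hy γ (hB hγ)) (hpA1 y' hy' γ (hB hγ)) (hpAnonneg y' γ) one_pos.le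
      _ = 1 := one_mul 1
  have hη₁bd : ∀ y ∈ Finset.range (N+1), ∀ y' ∈ Finset.range (N+1), y ≠ y' →
      ∀ γ ∈ B, pA y γ * pA y' γ ≤ η₁ := by
    intro y hy y' hy' hne γ hγ
    rw [hη₁]; exact le_csSup hS1bdd ⟨y, hy, y', hy', hne, γ, hγ, rfl⟩
  have hη₁0 : 0 ≤ η₁ := by
    rcases Set.eq_empty_or_nonempty {x : ℝ | ∃ y ∈ Finset.range (N + 1),
        ∃ y' ∈ Finset.range (N + 1), y ≠ y' ∧ ∃ γ ∈ B, x = pA y γ * pA y' γ} with h | h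
    · rw [hη₁, h, Real.sSup_empty]
    · obtain ⟨x, hx⟩ := h
      obtain ⟨y, hy, y', hy', hne, γ, hγ, rfl⟩ := hx
      have h1 : (0:ℝ) ≤ pA y γ * pA y' γ := mul_nonneg (hpAnonneg y γ) (hpAnonneg y' γ)
      have h2 := hη₁bd y hy y' hy' hne γ hγ
      linarith
  -- D0 and E
  set D0 : ℝ := ∑ y ∈ Finset.range (N + 1), |marginD pA p0 y - phat y| with hD0def
  have hD0nn : 0 ≤ D0 := Finset.sum_nonneg fun _ _ => abs_nonneg _
  have hD0small : D0 ≤ ρ * c0 / 16 := le_trans hL1 (by nlinarith)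
  set E : ℝ := Real.exp ((ρ / (1 - ρ)) * (1 / c0) * D0) with hEdef
  have hE1 : 1 ≤ E := by
    rw [hEdef]
    refine Real.one_le_exp ?_
    have h1 : (0:ℝ) ≤ ρ / (1 - ρ) := div_nonneg hρ0 (by linarith)
    have h2 : (0:ℝ) ≤ 1 / c0 := by positivity
    exact mul_nonneg (mul_nonneg h1 h2) hD0nn
  have hQδ : (3*pbar) * δ ≤ 3*(ρ*c0)/(4*((N:ℝ)+2)) := by
    have hE0 : 0 < E := Real.exp_pos _
    have hA : (0:ℝ) < 4 * pbar * E * ((N:ℝ)+2) := by positivity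
    have h1 : δ * (4 * pbar * E * ((N:ℝ)+2)) ≤ ρ * c0 := (le_div_iff₀ hA).1 hL6
    rw [le_div_iff₀ (by positivity)]
    have h2 : 0 ≤ pbar * δ * ((N:ℝ)+2) * (E-1) := by
      have := hδ0.le
      have h3 : (0:ℝ) ≤ E - 1 := by linarith
      positivity
    nlinarith
  set κ : ℝ := 14/15*ρ with hκ
  have hκ0 : 0 ≤ κ := by rw [hκ]; linarith
  have hκ1 : κ < 1 := by rw [hκ]; linarith
  -- geometric exponent bound
  have hgeom : ∀ t : ℕ, ∑ s ∈ Finset.range t, 16/(15*c0) * (κ^s * D0) ≤ 1 := by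
    intro t
    have h1 : (∑ s ∈ Finset.range t, κ^s) * (κ - 1) = κ^t - 1 := geom_sum_mul κ t
    have hG0 : 0 ≤ ∑ s ∈ Finset.range t, κ^s :=
      Finset.sum_nonneg fun s _ => pow_nonneg hκ0 s
    have hκt : 0 ≤ κ^t := pow_nonneg hκ0 t
    have h2 : (∑ s ∈ Finset.range t, κ^s) * (1 - κ) ≤ 1 := by nlinarith
    have h3 : ∑ s ∈ Finset.range t, 16/(15*c0) * (κ^s * D0)
        = 16/(15*c0) * D0 * ∑ s ∈ Finset.range t, κ^s := by
      rw [Finset.mul_sum]; exact Finset.sum_congr rfl fun s _ => by ring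
    rw [h3]
    have key : 16/(15*c0) * D0 ≤ ρ/15 := by
      rw [div_mul_eq_mul_div, div_le_div_iff₀ (by positivity) (by norm_num)]
      nlinarith
    calc 16/(15*c0) * D0 * ∑ s ∈ Finset.range t, κ^s
        ≤ ρ/15 * ∑ s ∈ Finset.range t, κ^s := mul_le_mul_of_nonneg_right key hG0
      _ ≤ 1 := by
          rw [hκ] at h2
          nlinarith [mul_nonneg (sub_nonneg.2 hρ1.le) hG0]
  -- the one-step consequence, from the invariant at time t
  have stepAt : ∀ t : ℕ,
      (Measurable ((npUpd0 N pA phat)^[t] p0) ∧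
        (∀ γ, 0 ≤ (npUpd0 N pA phat)^[t] p0 γ) ∧
        (∫ γ, (npUpd0 N pA phat)^[t] p0 γ ∂lebI = 1) ∧
        (∑ y ∈ Finset.range (N+1), |marginD pA ((npUpd0 N pA phat)^[t] p0) y - phat y|
          ≤ κ^t * D0) ∧
        (∀ γ ∈ Set.Icc (0:ℝ) 1, (npUpd0 N pA phat)^[t] p0 γ
          ≤ pbar * Real.exp (∑ s ∈ Finset.range t, 16/(15*c0) * (κ^s * D0)))) →
      ((∑ y ∈ Finset.range (N+1),
          |marginD pA ((npUpd0 N pA phat)^[t+1] p0) y - phat y|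
        ≤ 14/15 * ρ * ∑ y ∈ Finset.range (N+1),
          |marginD pA ((npUpd0 N pA phat)^[t] p0) y - phat y|) ∧
      (Measurable ((npUpd0 N pA phat)^[t+1] p0) ∧
        (∀ γ, 0 ≤ (npUpd0 N pA phat)^[t+1] p0 γ) ∧
        (∫ γ, (npUpd0 N pA phat)^[t+1] p0 γ ∂lebI = 1) ∧
        (∑ y ∈ Finset.range (N+1), |marginD pA ((npUpd0 N pA phat)^[t+1] p0) y - phat y|
          ≤ κ^(t+1) * D0) ∧
        (∀ γ ∈ Set.Icc (0:ℝ) 1, (npUpd0 N pA phat)^[t+1] p0 γ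
          ≤ pbar * Real.exp (∑ s ∈ Finset.range (t+1), 16/(15*c0) * (κ^s * D0))))) := by
    intro t ⟨hm, hn, hi, hDt, hsup⟩
    have hDtnn : 0 ≤ ∑ y ∈ Finset.range (N+1),
        |marginD pA ((npUpd0 N pA phat)^[t] p0) y - phat y| :=
      Finset.sum_nonneg fun _ _ => abs_nonneg _
    have hq3 : ∀ γ ∈ Set.Icc (0:ℝ) 1, (npUpd0 N pA phat)^[t] p0 γ ≤ 3*pbar := by
      intro γ hγ
      calc (npUpd0 N pA phat)^[t] p0 γ
          ≤ pbar * Real.exp (∑ s ∈ Finset.range t, 16/(15*c0) * (κ^s * D0)) := hsup γ hγ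
        _ ≤ pbar * Real.exp 1 :=
            mul_le_mul_of_nonneg_left (Real.exp_le_exp.2 (hgeom t)) (by linarith)
        _ ≤ 3 * pbar := by nlinarith [Real.exp_one_lt_d9]
    have hκt1 : κ^t ≤ 1 := pow_le_one₀ hκ0 hκ1.le
    have hDt' : ∑ y ∈ Finset.range (N+1),
        |marginD pA ((npUpd0 N pA phat)^[t] p0) y - phat y| ≤ ρ * c0 / 16 := by
      have h1 : κ^t * D0 ≤ D0 := by nlinarith [pow_nonneg hκ0 t]
      linarith
    have step := npem_step N pA phat hpAmeas hpAnonneg hpAsum hphat1 hphatnn c0 hc0pos hc0le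
      ρ δ hρ0 hρ1.le hδ0 B hB hBmeas hBc η₁ hη₁0 hL2 hη₁bd (3*pbar) (by linarith) hQδ
      _ hm hn hi hq3 hDt'
    obtain ⟨⟨hm', hn', hi'⟩, hgrow, hcontr⟩ := step
    have hiter : (npUpd0 N pA phat)^[t+1] p0 = npUpd0 N pA phat ((npUpd0 N pA phat)^[t] p0) :=
      Function.iterate_succ_apply' _ _ _
    have hcontr' : ∑ y ∈ Finset.range (N+1),
        |marginD pA ((npUpd0 N pA phat)^[t+1] p0) y - phat y|
        ≤ 14/15 * ρ * ∑ y ∈ Finset.range (N+1),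
          |marginD pA ((npUpd0 N pA phat)^[t] p0) y - phat y| := by
      rw [hiter]; exact hcontr
    refine ⟨hcontr', by rw [hiter]; exact hm', fun γ => by rw [hiter]; exact hn' γ,
      by rw [hiter]; exact hi', ?_, ?_⟩
    · calc ∑ y ∈ Finset.range (N+1),
            |marginD pA ((npUpd0 N pA phat)^[t+1] p0) y - phat y|
          ≤ 14/15 * ρ * ∑ y ∈ Finset.range (N+1),
            |marginD pA ((npUpd0 N pA phat)^[t] p0) y - phat y| := hcontr'
        _ ≤ 14/15 * ρ * (κ^t * D0) :=
            mul_le_mul_of_nonneg_left hDt (by linarith)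
        _ = κ^(t+1) * D0 := by rw [pow_succ, hκ]; ring
    · intro γ hγ
      rw [hiter]
      have h3 : 16/(15*c0) * (∑ y ∈ Finset.range (N+1),
          |marginD pA ((npUpd0 N pA phat)^[t] p0) y - phat y|) ≤ 16/(15*c0) * (κ^t*D0) :=
        mul_le_mul_of_nonneg_left hDt (by positivity)
      have h4 := Real.add_one_le_exp (16/(15*c0) * ∑ y ∈ Finset.range (N+1),
          |marginD pA ((npUpd0 N pA phat)^[t] p0) y - phat y|)
      have h5 : Real.exp (16/(15*c0) * ∑ y ∈ Finset.range (N+1),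
          |marginD pA ((npUpd0 N pA phat)^[t] p0) y - phat y|)
          ≤ Real.exp (16/(15*c0) * (κ^t*D0)) := Real.exp_le_exp.2 h3
      have h6 : (0:ℝ) ≤ 16/(15*c0) * ∑ y ∈ Finset.range (N+1),
          |marginD pA ((npUpd0 N pA phat)^[t] p0) y - phat y| :=
        mul_nonneg (by positivity) hDtnn
      calc npUpd0 N pA phat ((npUpd0 N pA phat)^[t] p0) γ
          ≤ ((npUpd0 N pA phat)^[t] p0 γ) * (1 + 16/(15*c0) * ∑ y ∈ Finset.range (N+1),
            |marginD pA ((npUpd0 N pA phat)^[t] p0) y - phat y|) := hgrow γ hγ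
        _ ≤ (pbar * Real.exp (∑ s ∈ Finset.range t, 16/(15*c0) * (κ^s * D0)))
            * Real.exp (16/(15*c0) * (κ^t * D0)) := by
            refine mul_le_mul (hsup γ hγ) (by linarith) (by linarith)
              (mul_nonneg (by linarith) (Real.exp_nonneg _))
        _ = pbar * Real.exp (∑ s ∈ Finset.range (t+1), 16/(15*c0) * (κ^s * D0)) := by
            rw [mul_assoc, ← Real.exp_add, Finset.sum_range_succ]
  -- the invariant holds for all t
  have main : ∀ t : ℕ,
      Measurable ((npUpd0 N pA phat)^[t] p0) ∧
        (∀ γ, 0 ≤ (npUpd0 N pA phat)^[t] p0 γ) ∧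
        (∫ γ, (npUpd0 N pA phat)^[t] p0 γ ∂lebI = 1) ∧
        (∑ y ∈ Finset.range (N+1), |marginD pA ((npUpd0 N pA phat)^[t] p0) y - phat y|
          ≤ κ^t * D0) ∧
        (∀ γ ∈ Set.Icc (0:ℝ) 1, (npUpd0 N pA phat)^[t] p0 γ
          ≤ pbar * Real.exp (∑ s ∈ Finset.range t, 16/(15*c0) * (κ^s * D0))) := by
    intro t
    induction t with
    | zero =>
      refine ⟨hp0m, hp0nn, hp0int, ?_, ?_⟩
      · simp only [Function.iterate_zero_apply, pow_zero, one_mul]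
        exact le_of_eq hD0def.symm
      · intro γ hγ
        simp only [Function.iterate_zero_apply, Finset.range_zero, Finset.sum_empty,
          Real.exp_zero, mul_one]
        exact hpb γ hγ
    | succ t ih => exact (stepAt t ih).2
  -- conclusion
  intro t
  obtain ⟨h1, _⟩ := stepAt t (main t)
  have hDtnn : 0 ≤ ∑ y ∈ Finset.range (N+1),
      |marginD pA ((npUpd0 N pA phat)^[t] p0) y - phat y| :=
    Finset.sum_nonneg fun _ _ => abs_nonneg _
  calc ∑ y ∈ Finset.range (N + 1),
        |marginD pA ((npUpd0 N pA phat)^[t + 1] p0) y - phat y|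
      ≤ 14/15 * ρ * ∑ y ∈ Finset.range (N+1),
        |marginD pA ((npUpd0 N pA phat)^[t] p0) y - phat y| := h1
    _ ≤ ρ * ∑ y ∈ Finset.range (N + 1),
        |marginD pA ((npUpd0 N pA phat)^[t] p0) y - phat y| := by nlinarith
end

section
/- Assume c₀ := min_{0≤y≤N} p̂(y) > 0. Fix ε ∈ (0,1), δ > 0, and a measurable set B ⊆ [0,1] whose complement has Lebesgue measure at most δ, and set η₁ := max_{y≠y′} sup_{γ∈B} p_A(y|γ)·p_A(y′|γ) and η₂ := max_y sup_{γ∈B} ∑_{y′≠y} p_A(y|γ)·p_A(y′|γ). Let p^(t) be a probability density on [0,1] with p̄^(t) := sup_{γ∈[0,1]} p^(t)(γ) < ∞, with marginal p^(t)_MA satisfying ‖p^(t)_MA − p̂‖₁ ≤ ε·c₀, and let p^(t+1) be its unregularized NPEM update with marginal p^(t+1)_MA. Then ‖p^(t+1)_MA − p̂‖₁ ≤ ( (N+1)(η₁ + p̄^(t)·δ)/c₀ + η₂/c₀ + p̄^(t)·δ/c₀ + (1 + 1/(1−ε))·‖p^(t)_MA − p̂‖₁/c₀ + (1/(1−ε))·‖p^(t)_MA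 − p̂‖₁²/c₀² ) · ‖p^(t)_MA − p̂‖₁, where ‖g‖₁ = ∑_{y=0}^N |g(y)|. -/
open MeasureTheory Set Filter Topology

/-- Pairwise overlap integral `J(y,y') = ∫ pA(y|γ) pA(y'|γ) p(γ) dγ`. -/
noncomputable def Jf (pA : ℕ → ℝ → ℝ) (p : ℝ → ℝ) (a b : ℕ) : ℝ :=
  ∫ γ, pA a γ * (pA b γ * p γ) ∂lebI

/-- Off-diagonal mass `S(y) = ∑_{y'≠y} J(y,y')`. -/
noncomputable def Sf (N : ℕ) (pA : ℕ → ℝ → ℝ) (p : ℝ → ℝ) (y : ℕ) : ℝ :=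
  ∑ y' ∈ (Finset.range (N + 1)).erase y, Jf pA p y y'

private lemma sum_erase_comm (s : Finset ℕ) (f : ℕ → ℕ → ℝ) :
    ∑ a ∈ s, ∑ b ∈ s.erase a, f a b = ∑ b ∈ s, ∑ a ∈ s.erase b, f a b := by
  calc ∑ a ∈ s, ∑ b ∈ s.erase a, f a b
      = ∑ a ∈ s, ∑ b ∈ s, if b ≠ a then f a b else 0 := by
        refine Finset.sum_congr rfl fun a _ => ?_
        rw [← Finset.filter_ne' s a, Finset.sum_filter]
    _ = ∑ b ∈ s, ∑ a ∈ s, if b ≠ a then f a b else 0 := Finset.sum_comm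
    _ = ∑ b ∈ s, ∑ a ∈ s.erase b, f a b := by
        refine Finset.sum_congr rfl fun b _ => ?_
        rw [← Finset.filter_ne s b, Finset.sum_filter]

set_option maxHeartbeats 2000000 in
private theorem npem_aux
    (N : ℕ) (pA : ℕ → ℝ → ℝ) (phat : ℕ → ℝ)
    (hpAmeas : ∀ y, Measurable (pA y)) (hpAnonneg : ∀ y γ, 0 ≤ pA y γ)
    (hpAsum : ∀ γ ∈ Set.Icc (0:ℝ) 1, ∑ y ∈ Finset.range (N + 1), pA y γ = 1)
    (hphat1 : ∑ y ∈ Finset.range (N + 1), phat y = 1) (hphatnn : ∀ y, 0 ≤ phat y)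
    -- `c₀ = min_y p̂(y) > 0`
    (c0 : ℝ) (hc0def : c0 = (Finset.range (N + 1)).inf' Finset.nonempty_range_add_one phat)
    (hc0pos : 0 < c0)
    (ε δ : ℝ) (hε0 : 0 < ε) (hε1 : ε < 1) (hδ0 : 0 < δ)
    (B : Set ℝ) (hB : B ⊆ Set.Icc (0:ℝ) 1) (hBmeas : MeasurableSet B)
    (hBc : volume (Set.Icc (0:ℝ) 1 \ B) ≤ ENNReal.ofReal δ)
    (η₁ η₂ : ℝ)
    (hη₁ : η₁ = sSup {x : ℝ | ∃ y ∈ Finset.range (N + 1), ∃ y' ∈ Finset.range (N + 1),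
      y ≠ y' ∧ ∃ γ ∈ B, x = pA y γ * pA y' γ})
    (hη₂ : η₂ = sSup {x : ℝ | ∃ y ∈ Finset.range (N + 1), ∃ γ ∈ B,
      x = ∑ y' ∈ (Finset.range (N + 1)).erase y, pA y γ * pA y' γ})
    -- the current iterate, a density with finite supremum `p̄⁽ᵗ⁾`
    (p : ℝ → ℝ) (hp : IsDensity p)
    (pbar : ℝ) (hpbarBdd : BddAbove (p '' Set.Icc (0:ℝ) 1))
    (hpbar : pbar = sSup (p '' Set.Icc (0:ℝ) 1))
    (hclose : ∑ y ∈ Finset.range (N + 1), |marginD pA p y - phat y| ≤ ε * c0) :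
    ∑ y ∈ Finset.range (N + 1), |marginD pA (npUpd0 N pA phat p) y - phat y|
      ≤ ((N + 1) * (η₁ + pbar * δ) / c0 + η₂ / c0 + pbar * δ / c0
          + (1 + 1 / (1 - ε)) * (∑ y ∈ Finset.range (N + 1), |marginD pA p y - phat y|) / c0
          + (1 / (1 - ε)) * (∑ y ∈ Finset.range (N + 1), |marginD pA p y - phat y|) ^ 2 / c0 ^ 2)
        * ∑ y ∈ Finset.range (N + 1), |marginD pA p y - phat y| := by
  obtain ⟨hpMeas, hpNN, hpInt1⟩ := hp
  have hlebI : lebI = volume.restrict (Set.Icc 0 1) := rfl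
  have haeIcc : ∀ᵐ γ ∂lebI, γ ∈ Set.Icc (0:ℝ) 1 := by
    rw [hlebI]; exact ae_restrict_mem measurableSet_Icc
  have h1ε : (0:ℝ) < 1 - ε := by linarith
  set r : Finset ℕ := Finset.range (N + 1) with hrdef
  have hpInt : Integrable p lebI := by
    by_contra hcon
    have h0 := MeasureTheory.integral_undef hcon
    rw [hpInt1] at h0; exact one_ne_zero h0
  -- pA is bounded by 1 on [0,1]
  have hr1 : ∀ y ∈ r, ∀ γ ∈ Set.Icc (0:ℝ) 1, pA y γ ≤ 1 := by
    intro y hy γ hγ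
    calc pA y γ ≤ ∑ y' ∈ r, pA y' γ :=
          Finset.single_le_sum (fun i _ => hpAnonneg i γ) hy
      _ = 1 := hpAsum γ hγ
  -- integrability
  have hJint : ∀ y ∈ r, ∀ y' ∈ r, Integrable (fun γ => pA y γ * (pA y' γ * p γ)) lebI := by
    intro y hy y' hy'
    refine hpInt.mono (((hpAmeas y).mul ((hpAmeas y').mul hpMeas)).aestronglyMeasurable) ?_
    filter_upwards [haeIcc] with γ hγ
    rw [Real.norm_eq_abs, Real.norm_eq_abs,
      abs_of_nonneg (mul_nonneg (hpAnonneg y γ) (mul_nonneg (hpAnonneg y' γ) (hpNN γ))),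
      abs_of_nonneg (hpNN γ)]
    have hab : pA y γ * pA y' γ ≤ 1 :=
      mul_le_one₀ (hr1 y hy γ hγ) (hpAnonneg y' γ) (hr1 y' hy' γ hγ)
    nlinarith [mul_nonneg (hpNN γ) (sub_nonneg.mpr hab)]
  have hmInt : ∀ y ∈ r, Integrable (fun γ => pA y γ * p γ) lebI := by
    intro y hy
    refine hpInt.mono ((hpAmeas y).mul hpMeas).aestronglyMeasurable ?_
    filter_upwards [haeIcc] with γ hγ
    rw [Real.norm_eq_abs, Real.norm_eq_abs,
      abs_of_nonneg (mul_nonneg (hpAnonneg y γ) (hpNN γ)), abs_of_nonneg (hpNN γ)]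
    nlinarith [mul_nonneg (hpNN γ) (sub_nonneg.mpr (hr1 y hy γ hγ))]
  set E : ℝ := ∑ y ∈ r, |marginD pA p y - phat y| with hEdef
  clear_value E
  have hE0 : 0 ≤ E := by
    rw [hEdef]; exact Finset.sum_nonneg fun y _ => abs_nonneg _
  have hDle : ∀ y ∈ r, |marginD pA p y - phat y| ≤ E := by
    intro y hy
    rw [hEdef]
    exact Finset.single_le_sum (f := fun y => |marginD pA p y - phat y|)
      (fun i _ => abs_nonneg _) hy
  have hc0le : ∀ y ∈ r, c0 ≤ phat y := fun y hy => by
    rw [hc0def]; exact Finset.inf'_le _ hy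
  have hm_lb : ∀ y ∈ r, c0 - E ≤ marginD pA p y := by
    intro y hy
    have h1 := hDle y hy
    have h2 := hc0le y hy
    have h3 : phat y - marginD pA p y ≤ |marginD pA p y - phat y| := by
      rw [abs_sub_comm]; exact le_abs_self _
    linarith
  have hm_pos : ∀ y ∈ r, 0 < marginD pA p y := by
    intro y hy
    have := hm_lb y hy
    nlinarith [mul_pos hc0pos h1ε, hclose]
  -- basic facts about J and S
  have hJnn : ∀ a b : ℕ, 0 ≤ Jf pA p a b := fun a b =>
    integral_nonneg fun γ => mul_nonneg (hpAnonneg a γ) (mul_nonneg (hpAnonneg b γ) (hpNN γ))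
  have hJsymm : ∀ a b : ℕ, Jf pA p a b = Jf pA p b a := by
    intro a b
    unfold Jf
    congr 1
    funext γ
    ring
  have hJsum : ∀ y ∈ r, ∑ y' ∈ r, Jf pA p y y' = marginD pA p y := by
    intro y hy
    unfold Jf
    rw [← integral_finset_sum r (fun y' hy' => hJint y hy y' hy')]
    refine integral_congr_ae ?_
    filter_upwards [haeIcc] with γ hγ
    calc ∑ y' ∈ r, pA y γ * (pA y' γ * p γ)
        = (∑ y' ∈ r, pA y' γ) * (pA y γ * p γ) := by
          rw [Finset.sum_mul]
          exact Finset.sum_congr rfl fun _ _ => by ring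
      _ = pA y γ * p γ := by rw [hpAsum γ hγ, one_mul]
  have hJyyS : ∀ y ∈ r, Jf pA p y y + Sf N pA p y = marginD pA p y := by
    intro y hy
    rw [← hJsum y hy]
    exact Finset.add_sum_erase r (fun y' => Jf pA p y y') hy
  have hS0 : ∀ y : ℕ, 0 ≤ Sf N pA p y := fun y =>
    Finset.sum_nonneg fun y' _ => hJnn y y'
  have hSm : ∀ y ∈ r, Sf N pA p y ≤ marginD pA p y := by
    intro y hy
    have := hJyyS y hy
    have := hJnn y y
    linarith
  -- sup bounds
  have hpbarle : ∀ γ ∈ Set.Icc (0:ℝ) 1, p γ ≤ pbar := by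
    intro γ hγ
    rw [hpbar]; exact le_csSup hpbarBdd ⟨γ, hγ, rfl⟩
  have hpbar0 : 0 ≤ pbar :=
    le_trans (hpNN 0) (hpbarle 0 ⟨le_refl _, zero_le_one⟩)
  have hIcc1 : volume (Set.Icc (0:ℝ) 1) = 1 := by
    rw [Real.volume_Icc]; norm_num
  haveI hfin : IsFiniteMeasure lebI := by
    constructor
    rw [hlebI, Measure.restrict_apply_univ, hIcc1]
    exact ENNReal.one_lt_top
  -- generic split bound
  have hkey : ∀ (f : ℝ → ℝ) (c : ℝ), 0 ≤ c → Integrable f lebI → (∀ γ, 0 ≤ f γ) →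
      (∀ γ ∈ B, f γ ≤ c * p γ) → (∀ γ ∈ Set.Icc (0:ℝ) 1, f γ ≤ pbar) →
      ∫ γ, f γ ∂lebI ≤ c + pbar * δ := by
    intro f c hc hfInt hf0 hfB hfIcc
    have h1 : ∫ γ in B, f γ ∂lebI ≤ c := by
      calc ∫ γ in B, f γ ∂lebI ≤ ∫ γ in B, c * p γ ∂lebI :=
            setIntegral_mono_on hfInt.integrableOn (hpInt.const_mul c).integrableOn hBmeas hfB
        _ = c * ∫ γ in B, p γ ∂lebI := by rw [integral_const_mul]
        _ ≤ c * 1 := by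
            refine mul_le_mul_of_nonneg_left ?_ hc
            calc ∫ γ in B, p γ ∂lebI ≤ ∫ γ, p γ ∂lebI :=
                  setIntegral_le_integral hpInt (Eventually.of_forall hpNN)
              _ = 1 := hpInt1
        _ = c := mul_one c
    have htoReal : (lebI Bᶜ).toReal ≤ δ := by
      have heq : lebI Bᶜ = volume (Set.Icc (0:ℝ) 1 \ B) := by
        rw [hlebI, Measure.restrict_apply hBmeas.compl]
        congr 1
        rw [Set.diff_eq, Set.inter_comm]
      rw [heq]
      exact ENNReal.toReal_le_of_le_ofReal (le_of_lt hδ0) hBc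
    have h2 : ∫ γ in Bᶜ, f γ ∂lebI ≤ pbar * δ := by
      have hb : ∀ᵐ γ ∂(lebI.restrict Bᶜ), ‖f γ‖ ≤ pbar := by
        filter_upwards [ae_restrict_of_ae haeIcc] with γ hγ
        rw [Real.norm_eq_abs, abs_of_nonneg (hf0 γ)]
        exact hfIcc γ hγ
      have hnorm := norm_integral_le_of_norm_le_const hb
      calc ∫ γ in Bᶜ, f γ ∂lebI ≤ ‖∫ γ in Bᶜ, f γ ∂lebI‖ := le_abs_self _
        _ ≤ pbar * ((lebI.restrict Bᶜ) Set.univ).toReal := hnorm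
        _ = pbar * (lebI Bᶜ).toReal := by rw [Measure.restrict_apply_univ]
        _ ≤ pbar * δ := mul_le_mul_of_nonneg_left htoReal hpbar0
    calc ∫ γ, f γ ∂lebI = (∫ γ in B, f γ ∂lebI) + ∫ γ in Bᶜ, f γ ∂lebI :=
          (integral_add_compl hBmeas hfInt).symm
      _ ≤ c + pbar * δ := add_le_add h1 h2
  -- bounds via η₁, η₂
  have hbdd1 : BddAbove {x : ℝ | ∃ y ∈ Finset.range (N + 1), ∃ y' ∈ Finset.range (N + 1),
      y ≠ y' ∧ ∃ γ ∈ B, x = pA y γ * pA y' γ} := by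
    refine ⟨1, ?_⟩
    rintro x ⟨y, hy, y', hy', hne, γ, hγ, rfl⟩
    nlinarith [hr1 y hy γ (hB hγ), hr1 y' hy' γ (hB hγ), hpAnonneg y γ, hpAnonneg y' γ]
  have hη₁0 : 0 ≤ η₁ := by
    rw [hη₁]
    refine Real.sSup_nonneg ?_
    rintro x ⟨y, hy, y', hy', hne, γ, hγ, rfl⟩
    exact mul_nonneg (hpAnonneg y γ) (hpAnonneg y' γ)
  have hη₁le : ∀ y ∈ r, ∀ y' ∈ r, y ≠ y' → ∀ γ ∈ B, pA y γ * pA y' γ ≤ η₁ := by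
    intro y hy y' hy' hne γ hγ
    rw [hη₁]
    exact le_csSup hbdd1 ⟨y, hy, y', hy', hne, γ, hγ, rfl⟩
  have hJle : ∀ y ∈ r, ∀ y' ∈ r, y ≠ y' → Jf pA p y y' ≤ η₁ + pbar * δ := by
    intro y hy y' hy' hne
    refine hkey _ η₁ hη₁0 (hJint y hy y' hy')
      (fun γ => mul_nonneg (hpAnonneg y γ) (mul_nonneg (hpAnonneg y' γ) (hpNN γ))) ?_ ?_
    · intro γ hγ
      have := hη₁le y hy y' hy' hne γ hγ
      nlinarith [hpNN γ]
    · intro γ hγ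
      have hab : pA y γ * pA y' γ ≤ 1 :=
        mul_le_one₀ (hr1 y hy γ hγ) (hpAnonneg y' γ) (hr1 y' hy' γ hγ)
      nlinarith [mul_nonneg (hpNN γ) (sub_nonneg.mpr hab), hpbarle γ hγ]
  have hsum_le_one : ∀ y ∈ r, ∀ γ ∈ Set.Icc (0:ℝ) 1,
      ∑ y' ∈ r.erase y, pA y γ * pA y' γ ≤ 1 := by
    intro y hy γ hγ
    calc ∑ y' ∈ r.erase y, pA y γ * pA y' γ ≤ ∑ y' ∈ r.erase y, pA y' γ := by
          refine Finset.sum_le_sum fun y' hy' => ?_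
          have := hr1 y hy γ hγ
          nlinarith [hpAnonneg y' γ, hpAnonneg y γ]
      _ ≤ ∑ y' ∈ r, pA y' γ :=
          Finset.sum_le_sum_of_subset_of_nonneg (Finset.erase_subset y r)
            (fun i _ _ => hpAnonneg i γ)
      _ = 1 := hpAsum γ hγ
  have hbdd2 : BddAbove {x : ℝ | ∃ y ∈ Finset.range (N + 1), ∃ γ ∈ B,
      x = ∑ y' ∈ (Finset.range (N + 1)).erase y, pA y γ * pA y' γ} := by
    refine ⟨1, ?_⟩
    rintro x ⟨y, hy, γ, hγ, rfl⟩
    exact hsum_le_one y hy γ (hB hγ)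
  have hη₂0 : 0 ≤ η₂ := by
    rw [hη₂]
    refine Real.sSup_nonneg ?_
    rintro x ⟨y, hy, γ, hγ, rfl⟩
    exact Finset.sum_nonneg fun y' _ => mul_nonneg (hpAnonneg y γ) (hpAnonneg y' γ)
  have hη₂le : ∀ y ∈ r, ∀ γ ∈ B, ∑ y' ∈ r.erase y, pA y γ * pA y' γ ≤ η₂ := by
    intro y hy γ hγ
    rw [hη₂]
    exact le_csSup hbdd2 ⟨y, hy, γ, hγ, rfl⟩
  have hS2 : ∀ y ∈ r, Sf N pA p y ≤ η₂ + pbar * δ := by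
    intro y hy
    have hSf : Sf N pA p y = ∫ γ, ∑ y' ∈ r.erase y, pA y γ * (pA y' γ * p γ) ∂lebI := by
      unfold Sf
      rw [integral_finset_sum (r.erase y)
        (fun y' hy' => hJint y hy y' (Finset.mem_of_mem_erase hy'))]
      rfl
    rw [hSf]
    refine hkey _ η₂ hη₂0
      (integrable_finset_sum _ (fun y' hy' => hJint y hy y' (Finset.mem_of_mem_erase hy')))
      (fun γ => Finset.sum_nonneg fun y' _ =>
        mul_nonneg (hpAnonneg y γ) (mul_nonneg (hpAnonneg y' γ) (hpNN γ))) ?_ ?_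
    · intro γ hγ
      have h1 := hη₂le y hy γ hγ
      calc ∑ y' ∈ r.erase y, pA y γ * (pA y' γ * p γ)
          = (∑ y' ∈ r.erase y, pA y γ * pA y' γ) * p γ := by
            rw [Finset.sum_mul]
            exact Finset.sum_congr rfl fun _ _ => by ring
        _ ≤ η₂ * p γ := mul_le_mul_of_nonneg_right h1 (hpNN γ)
    · intro γ hγ
      have h1 := hsum_le_one y hy γ hγ
      calc ∑ y' ∈ r.erase y, pA y γ * (pA y' γ * p γ)
          = (∑ y' ∈ r.erase y, pA y γ * pA y' γ) * p γ := by
            rw [Finset.sum_mul]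
            exact Finset.sum_congr rfl fun _ _ => by ring
        _ ≤ 1 * p γ := mul_le_mul_of_nonneg_right h1 (hpNN γ)
        _ = p γ := one_mul _
        _ ≤ pbar := hpbarle γ hγ
  have hSN : ∀ y ∈ r, Sf N pA p y ≤ N * (η₁ + pbar * δ) := by
    intro y hy
    have hcard : (r.erase y).card = N := by
      rw [Finset.card_erase_of_mem hy, hrdef, Finset.card_range]
      simp
    calc Sf N pA p y ≤ (r.erase y).card • (η₁ + pbar * δ) := by
          refine Finset.sum_le_card_nsmul _ _ _ fun y' hy' => ?_
          exact hJle y hy y' (Finset.mem_of_mem_erase hy')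
            (Finset.ne_of_mem_erase hy').symm
      _ = (N : ℝ) * (η₁ + pbar * δ) := by rw [hcard, nsmul_eq_mul]
  -- the updated marginal
  have hupd : ∀ y ∈ r, marginD pA (npUpd0 N pA phat p) y
      = ∑ y' ∈ r, phat y' / marginD pA p y' * Jf pA p y y' := by
    intro y hy
    have hfun : (fun γ => pA y γ * npUpd0 N pA phat p γ)
        = fun γ => ∑ y' ∈ r, phat y' / marginD pA p y' * (pA y γ * (pA y' γ * p γ)) := by
      funext γ
      rw [npUpd0, Finset.mul_sum]
      exact Finset.sum_congr rfl fun y' _ => by ring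
    calc marginD pA (npUpd0 N pA phat p) y
        = ∫ γ, pA y γ * npUpd0 N pA phat p γ ∂lebI := rfl
      _ = ∫ γ, ∑ y' ∈ r, phat y' / marginD pA p y' * (pA y γ * (pA y' γ * p γ)) ∂lebI := by
          rw [hfun]
      _ = ∑ y' ∈ r, ∫ γ, phat y' / marginD pA p y' * (pA y γ * (pA y' γ * p γ)) ∂lebI :=
          integral_finset_sum _ (fun y' hy' => (hJint y hy y' hy').const_mul _)
      _ = ∑ y' ∈ r, phat y' / marginD pA p y' * Jf pA p y y' :=
          Finset.sum_congr rfl fun y' _ => integral_const_mul _ _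
  -- key identity
  have hkeyid : ∀ y ∈ r, marginD pA (npUpd0 N pA phat p) y - phat y
      = (marginD pA p y - phat y) * Sf N pA p y / marginD pA p y
        - ∑ y' ∈ r.erase y,
            Jf pA p y y' * (marginD pA p y' - phat y') / marginD pA p y' := by
    intro y hy
    have hm0 : ∀ y'' ∈ r, marginD pA p y'' ≠ 0 := fun y'' h => (hm_pos y'' h).ne'
    rw [hupd y hy, ← Finset.add_sum_erase r _ hy]
    have hJyy : Jf pA p y y = marginD pA p y - Sf N pA p y := by
      have := hJyyS y hy
      linarith
    rw [hJyy]
    have hsplit : ∑ y' ∈ r.erase y, phat y' / marginD pA p y' * Jf pA p y y'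
        = Sf N pA p y - ∑ y' ∈ r.erase y,
            Jf pA p y y' * (marginD pA p y' - phat y') / marginD pA p y' := by
      rw [eq_sub_iff_add_eq, ← Finset.sum_add_distrib]
      unfold Sf
      refine Finset.sum_congr rfl fun y' hy' => ?_
      have hmy' := hm0 y' (Finset.mem_of_mem_erase hy')
      field_simp
      ring
    rw [hsplit]
    have hmy := hm0 y hy
    field_simp
    ring
  -- absolute value bound per y
  have habs : ∀ y ∈ r, |marginD pA (npUpd0 N pA phat p) y - phat y|
      ≤ |marginD pA p y - phat y| * Sf N pA p y / marginD pA p y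
        + ∑ y' ∈ r.erase y,
            Jf pA p y y' * |marginD pA p y' - phat y'| / marginD pA p y' := by
    intro y hy
    rw [hkeyid y hy]
    have htri : ∀ a b : ℝ, |a - b| ≤ |a| + |b| := fun a b => by
      rw [sub_eq_add_neg]
      exact (abs_add_le _ _).trans (by rw [abs_neg])
    refine (htri _ _).trans (add_le_add ?_ ?_)
    · rw [abs_div, abs_mul, abs_of_nonneg (hS0 y), abs_of_nonneg (hm_pos y hy).le]
    · refine (Finset.abs_sum_le_sum_abs _ _).trans (le_of_eq ?_)
      refine Finset.sum_congr rfl fun y' hy' => ?_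
      have hy'r := Finset.mem_of_mem_erase hy'
      rw [abs_div, abs_mul, abs_of_nonneg (hJnn y y'), abs_of_nonneg (hm_pos y' hy'r).le]
  -- per-y final coefficient bound
  set A : ℝ := (N + 1) * (η₁ + pbar * δ) / c0 + η₂ / c0 + pbar * δ / c0
      + (1 + 1 / (1 - ε)) * E / c0 + 1 / (1 - ε) * E ^ 2 / c0 ^ 2 with hAdef
  clear_value A
  have hpery : ∀ y ∈ r,
      |marginD pA p y - phat y| * Sf N pA p y / marginD pA p y
        + Sf N pA p y * (|marginD pA p y - phat y| / marginD pA p y)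
      ≤ |marginD pA p y - phat y| * A := by
    intro y hy
    have hmpos := hm_pos y hy
    have e1 : |marginD pA p y - phat y| * Sf N pA p y / marginD pA p y
        + Sf N pA p y * (|marginD pA p y - phat y| / marginD pA p y)
        = |marginD pA p y - phat y| * (2 * Sf N pA p y / marginD pA p y) := by
      have hm0 : marginD pA p y ≠ 0 := hmpos.ne'
      field_simp
      ring
    rw [e1]
    refine mul_le_mul_of_nonneg_left ?_ (abs_nonneg _)
    have e2 : 2 * Sf N pA p y / marginD pA p y ≤ (2 * Sf N pA p y + 2 * E) / c0 := by
      rw [div_le_div_iff₀ hmpos hc0pos]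
      have h1 : 0 ≤ marginD pA p y + E - c0 := by linarith [hm_lb y hy]
      have h2 : 0 ≤ marginD pA p y - Sf N pA p y := by linarith [hSm y hy]
      nlinarith [mul_nonneg (hS0 y) h1, mul_nonneg hE0 h2]
    refine e2.trans ?_
    have h2S : 2 * Sf N pA p y ≤ (N + 1) * (η₁ + pbar * δ) + η₂ + pbar * δ := by
      have ha := hSN y hy
      have hb := hS2 y hy
      have hX : 0 ≤ η₁ + pbar * δ := add_nonneg hη₁0 (mul_nonneg hpbar0 hδ0.le)
      linarith [ha, hb, hX]
    have h2E : 2 * E ≤ (1 + 1 / (1 - ε)) * E := by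
      have h1 : (1:ℝ) ≤ 1 / (1 - ε) := by
        rw [le_div_iff₀ h1ε]; linarith
      exact mul_le_mul_of_nonneg_right (by linarith : (2:ℝ) ≤ 1 + 1 / (1 - ε)) hE0
    have hlast : 0 ≤ 1 / (1 - ε) * E ^ 2 / c0 ^ 2 := by
      exact div_nonneg (mul_nonneg (le_of_lt (one_div_pos.mpr h1ε)) (sq_nonneg E))
        (sq_nonneg c0)
    calc (2 * Sf N pA p y + 2 * E) / c0
        ≤ ((N + 1) * (η₁ + pbar * δ) + η₂ + pbar * δ + (1 + 1 / (1 - ε)) * E) / c0 := by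
          rw [div_le_div_iff₀ hc0pos hc0pos]
          have hnum : 2 * Sf N pA p y + 2 * E
              ≤ (N + 1) * (η₁ + pbar * δ) + η₂ + pbar * δ + (1 + 1 / (1 - ε)) * E := by
            linarith
          nlinarith [mul_le_mul_of_nonneg_right hnum hc0pos.le]
      _ = (N + 1) * (η₁ + pbar * δ) / c0 + η₂ / c0 + pbar * δ / c0
            + (1 + 1 / (1 - ε)) * E / c0 := by ring
      _ ≤ A := by rw [hAdef]; exact le_add_of_nonneg_right hlast
  -- assemble
  calc ∑ y ∈ r, |marginD pA (npUpd0 N pA phat p) y - phat y|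
      ≤ ∑ y ∈ r, (|marginD pA p y - phat y| * Sf N pA p y / marginD pA p y
          + ∑ y' ∈ r.erase y,
              Jf pA p y y' * |marginD pA p y' - phat y'| / marginD pA p y') :=
        Finset.sum_le_sum habs
    _ = (∑ y ∈ r, |marginD pA p y - phat y| * Sf N pA p y / marginD pA p y)
          + ∑ y ∈ r, ∑ y' ∈ r.erase y,
              Jf pA p y y' * |marginD pA p y' - phat y'| / marginD pA p y' :=
        Finset.sum_add_distrib
    _ = (∑ y ∈ r, |marginD pA p y - phat y| * Sf N pA p y / marginD pA p y)
          + ∑ y ∈ r, Sf N pA p y * (|marginD pA p y - phat y| / marginD pA p y) := by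
        congr 1
        rw [sum_erase_comm r (fun a b => Jf pA p a b * |marginD pA p b - phat b| / marginD pA p b)]
        refine Finset.sum_congr rfl fun b _ => ?_
        have : ∑ a ∈ r.erase b, Jf pA p a b * |marginD pA p b - phat b| / marginD pA p b
            = (∑ a ∈ r.erase b, Jf pA p a b) * (|marginD pA p b - phat b| / marginD pA p b) := by
          rw [Finset.sum_mul]
          exact Finset.sum_congr rfl fun a _ => by ring
        rw [this]
        congr 1
        calc ∑ a ∈ r.erase b, Jf pA p a b = ∑ a ∈ r.erase b, Jf pA p b a :=
              Finset.sum_congr rfl fun a _ => hJsymm a b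
          _ = Sf N pA p b := rfl
    _ = ∑ y ∈ r, (|marginD pA p y - phat y| * Sf N pA p y / marginD pA p y
          + Sf N pA p y * (|marginD pA p y - phat y| / marginD pA p y)) :=
        Finset.sum_add_distrib.symm
    _ ≤ ∑ y ∈ r, |marginD pA p y - phat y| * A := Finset.sum_le_sum hpery
    _ = A * E := by rw [← Finset.sum_mul, ← hEdef, mul_comm]


/-- **Lemma (one-step oracle inequality for the NPEM update).**
If `‖p^(t)_MA − p̂‖₁ ≤ ε·c₀`, then the unregularized NPEM update satisfies
`‖p^(t+1)_MA − p̂‖₁ ≤ ((N+1)(η₁ + p̄δ)/c₀ + η₂/c₀ + p̄δ/c₀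
  + (1 + 1/(1−ε))·‖p^(t)_MA − p̂‖₁/c₀ + (1/(1−ε))·‖p^(t)_MA − p̂‖₁²/c₀²)·‖p^(t)_MA − p̂‖₁`. -/
theorem npem_oracle_inequality
    (N : ℕ) (pA : ℕ → ℝ → ℝ) (phat : ℕ → ℝ)
    (hpAmeas : ∀ y, Measurable (pA y)) (hpAnonneg : ∀ y γ, 0 ≤ pA y γ)
    (hpAsum : ∀ γ ∈ Set.Icc (0:ℝ) 1, ∑ y ∈ Finset.range (N + 1), pA y γ = 1)
    (hphat1 : ∑ y ∈ Finset.range (N + 1), phat y = 1) (hphatnn : ∀ y, 0 ≤ phat y)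
    -- `c₀ = min_y p̂(y) > 0`
    (c0 : ℝ) (hc0def : c0 = (Finset.range (N + 1)).inf' Finset.nonempty_range_add_one phat)
    (hc0pos : 0 < c0)
    (ε δ : ℝ) (hε0 : 0 < ε) (hε1 : ε < 1) (hδ0 : 0 < δ)
    (B : Set ℝ) (hB : B ⊆ Set.Icc (0:ℝ) 1) (hBmeas : MeasurableSet B)
    (hBc : volume (Set.Icc (0:ℝ) 1 \ B) ≤ ENNReal.ofReal δ)
    (η₁ η₂ : ℝ)
    (hη₁ : η₁ = sSup {x : ℝ | ∃ y ∈ Finset.range (N + 1), ∃ y' ∈ Finset.range (N + 1),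
      y ≠ y' ∧ ∃ γ ∈ B, x = pA y γ * pA y' γ})
    (hη₂ : η₂ = sSup {x : ℝ | ∃ y ∈ Finset.range (N + 1), ∃ γ ∈ B,
      x = ∑ y' ∈ (Finset.range (N + 1)).erase y, pA y γ * pA y' γ})
    -- the current iterate, a density with finite supremum `p̄⁽ᵗ⁾`
    (p : ℝ → ℝ) (hp : IsDensity p)
    (pbar : ℝ) (hpbarBdd : BddAbove (p '' Set.Icc (0:ℝ) 1))
    (hpbar : pbar = sSup (p '' Set.Icc (0:ℝ) 1))
    (hclose : ∑ y ∈ Finset.range (N + 1), |marginD pA p y - phat y| ≤ ε * c0) :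
    ∑ y ∈ Finset.range (N + 1), |marginD pA (npUpd0 N pA phat p) y - phat y|
      ≤ ((N + 1) * (η₁ + pbar * δ) / c0 + η₂ / c0 + pbar * δ / c0
          + (1 + 1 / (1 - ε)) * (∑ y ∈ Finset.range (N + 1), |marginD pA p y - phat y|) / c0
          + (1 / (1 - ε)) * (∑ y ∈ Finset.range (N + 1), |marginD pA p y - phat y|) ^ 2 / c0 ^ 2)
        * ∑ y ∈ Finset.range (N + 1), |marginD pA p y - phat y| :=
  npem_aux N pA phat hpAmeas hpAnonneg hpAsum hphat1 hphatnn c0 hc0def hc0pos ε δ hε0 hε1 hδ0 B hB hBmeas hBc η₁ η₂ hη₁ hη₂ p hp pbar hpbarBdd hpbar hclose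
end

section
/- Fix μ > 0. Let P and P̃ be probability measures on [0,1] with Lebesgue densities p and p̃, such that ess inf_{γ∈[0,1]} p(γ) > 0, the marginal p_MA(y) = ∫₀¹ p_A(y|γ) p(γ) dγ satisfies p_MA(y) > 0 whenever p̂(y) > 0, and ∫₀¹ p̃(γ)/p(γ) dγ < ∞. Then the one-sided directional (Gâteaux) derivative of ℓ_μ at P in the direction P̃ − P exists and equals lim_{t→0⁺} (ℓ_μ[P + t(P̃−P)] − ℓ_μ[P])/t = ∑_{y=0}^N p̂(y)·p_A(y;P̃)/p_MA(y) + μ·∫₀¹ (p̃(γ)/p(γ)) dγ − 1 − μ, where p_A(y;P̃) = ∫₀¹ p_A(y|γ) p̃(γ) dγ. -/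
open MeasureTheory Set Filter Topology
open scoped Classical

open scoped ENNReal NNReal

instance lebI_prob : IsProbabilityMeasure lebI := by
  constructor
  rw [lebI, Measure.restrict_apply_univ, Real.volume_Icc]
  norm_num

lemma IsDensity.integrable {f : ℝ → ℝ} (hf : IsDensity f) : Integrable f lebI :=
  integrable_of_integral_eq_one hf.2.2

lemma integral_densM {f : ℝ → ℝ} (hfm : Measurable f) (hf0 : ∀ γ, 0 ≤ f γ) (g : ℝ → ℝ) :
    ∫ γ, g γ ∂(densM f) = ∫ γ, g γ * f γ ∂lebI := by
  rw [densM, show (fun γ => ENNReal.ofReal (f γ)) = fun γ => ((f γ).toNNReal : ℝ≥0∞) from rfl,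
    integral_withDensity_eq_integral_smul hfm.real_toNNReal g]
  congr 1; ext γ
  simp [NNReal.smul_def, Real.coe_toNNReal _ (hf0 γ), mul_comm]

lemma densM_comb {p ptil : ℝ → ℝ} (hp : IsDensity p) (hptil : IsDensity ptil)
    {t : ℝ} (ht0 : 0 ≤ t) (ht1 : t ≤ 1) :
    ENNReal.ofReal (1 - t) • densM p + ENNReal.ofReal t • densM ptil
      = densM (fun γ => (1 - t) * p γ + t * ptil γ) := by
  have h1t : (0:ℝ) ≤ 1 - t := by linarith
  have : (fun γ => ENNReal.ofReal ((1 - t) * p γ + t * ptil γ))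
      = (ENNReal.ofReal (1 - t) • fun γ => ENNReal.ofReal (p γ))
        + (ENNReal.ofReal t • fun γ => ENNReal.ofReal (ptil γ)) := by
    funext γ
    simp only [Pi.add_apply, Pi.smul_apply, smul_eq_mul]
    rw [ENNReal.ofReal_add (mul_nonneg h1t (hp.2.1 γ)) (mul_nonneg ht0 (hptil.2.1 γ)),
      ENNReal.ofReal_mul h1t, ENNReal.ofReal_mul ht0]
  rw [densM, densM, densM, this,
    withDensity_add_left (hp.1.ennreal_ofReal.const_smul _),
    withDensity_smul _ hp.1.ennreal_ofReal,
    withDensity_smul _ hptil.1.ennreal_ofReal]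

lemma rnDeriv_densM {q : ℝ → ℝ} (hqm : Measurable q) {c : ℝ} (hc : 0 < c)
    (hq : ∀ᵐ γ ∂lebI, c ≤ q γ) :
    lebI.rnDeriv (densM q) =ᵐ[lebI] fun γ => (ENNReal.ofReal (q γ))⁻¹ := by
  have hne0 : ∀ᵐ γ ∂lebI, ENNReal.ofReal (q γ) ≠ 0 := by
    filter_upwards [hq] with γ h
    simp only [ne_eq, ENNReal.ofReal_eq_zero, not_le]
    linarith
  have hnetop : ∀ᵐ γ ∂lebI, ENNReal.ofReal (q γ) ≠ ∞ :=
    Filter.Eventually.of_forall fun γ => ENNReal.ofReal_ne_top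
  have h := Measure.rnDeriv_withDensity_right lebI lebI
    hqm.ennreal_ofReal.aemeasurable hne0 hnetop
  filter_upwards [h, Measure.rnDeriv_self lebI] with γ h1 h2
  rw [densM] at *
  rw [h1, h2, mul_one]

-- Integrability of log of a function bounded below by c > 0 and integrable
lemma integrable_log_of_bounded_below {q : ℝ → ℝ} (hqm : Measurable q)
    (hqi : Integrable q lebI) {c : ℝ} (hc : 0 < c) (hq : ∀ᵐ γ ∂lebI, c ≤ q γ) :
    Integrable (fun γ => Real.log (q γ)) lebI := by
  refine Integrable.mono' (g := fun γ => |Real.log c| + q γ)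
    ((integrable_const _).add hqi) (hqm.log.aestronglyMeasurable) ?_
  filter_upwards [hq] with γ h
  have hq0 : 0 < q γ := lt_of_lt_of_le hc h
  rw [Real.norm_eq_abs, abs_le]
  constructor
  · have : Real.log c ≤ Real.log (q γ) := Real.log_le_log hc h
    have := neg_abs_le (Real.log c)
    nlinarith [hq0.le]
  · have : Real.log (q γ) ≤ q γ - 1 := Real.log_le_sub_one_of_pos hq0
    have := abs_nonneg (Real.log c)
    linarith

lemma KLdiv_densM {q : ℝ → ℝ} (hqm : Measurable q) (hqi : Integrable q lebI)
    {c : ℝ} (hc : 0 < c) (hq : ∀ᵐ γ ∂lebI, c ≤ q γ) :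
    KLdiv lebI (densM q) = ((-∫ γ, Real.log (q γ) ∂lebI : ℝ) : EReal) := by
  have hne0 : ∀ᵐ γ ∂lebI, ENNReal.ofReal (q γ) ≠ 0 := by
    filter_upwards [hq] with γ h
    simp only [ne_eq, ENNReal.ofReal_eq_zero, not_le]
    linarith
  have hac : lebI ≪ densM q :=
    withDensity_absolutelyContinuous' hqm.ennreal_ofReal.aemeasurable hne0
  have heq : (fun γ => Real.log ((lebI.rnDeriv (densM q) γ).toReal))
      =ᵐ[lebI] fun γ => -Real.log (q γ) := by
    filter_upwards [rnDeriv_densM hqm hc hq, hq] with γ h1 h2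
    rw [h1, ENNReal.toReal_inv, ENNReal.toReal_ofReal (by linarith), Real.log_inv]
  have hint : Integrable (fun x => Real.log ((lebI.rnDeriv (densM q) x).toReal)) lebI :=
    ((integrable_log_of_bounded_below hqm hqi hc hq).neg).congr heq.symm
  rw [KLdiv, if_pos ⟨hac, hint⟩, integral_congr_ae heq, integral_neg]

lemma loglik_densM (N : ℕ) (pA : ℕ → ℝ → ℝ) (phat : ℕ → ℝ) {q : ℝ → ℝ}
    (hqm : Measurable q) (hq0 : ∀ γ, 0 ≤ q γ)
    (hm : ∀ y ∈ Finset.range (N+1), 0 < phat y → 0 < ∫ γ, pA y γ * q γ ∂lebI) :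
    loglik N pA phat (densM q)
      = ((∑ y ∈ Finset.range (N+1), phat y * Real.log (∫ γ, pA y γ * q γ ∂lebI) : ℝ) : EReal) := by
  have hme : ∀ y, margin pA (densM q) y = ∫ γ, pA y γ * q γ ∂lebI := by
    intro y; rw [margin, integral_densM hqm hq0]
  rw [loglik, if_pos]
  · congr 1
    exact Finset.sum_congr rfl fun y _ => by rw [hme]
  · intro y hy hp
    rw [hme]
    exact hm y hy hp

lemma regLoglik_densM (N : ℕ) (pA : ℕ → ℝ → ℝ) (phat : ℕ → ℝ) (μ : ℝ) {q : ℝ → ℝ}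
    (hqm : Measurable q) (hq0 : ∀ γ, 0 ≤ q γ) (hqi : Integrable q lebI)
    {c : ℝ} (hc : 0 < c) (hq : ∀ᵐ γ ∂lebI, c ≤ q γ)
    (hm : ∀ y ∈ Finset.range (N+1), 0 < phat y → 0 < ∫ γ, pA y γ * q γ ∂lebI) :
    regLoglik N pA phat μ (densM q)
      = (((∑ y ∈ Finset.range (N+1), phat y * Real.log (∫ γ, pA y γ * q γ ∂lebI))
          + μ * ∫ γ, Real.log (q γ) ∂lebI : ℝ) : EReal) := by
  rw [regLoglik, loglik_densM N pA phat hqm hq0 hm, KLdiv_densM hqm hqi hc hq,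
    ← EReal.coe_mul, ← EReal.coe_sub]
  exact congrArg _ (by ring)

lemma abs_log_bound {t u : ℝ} (ht : 0 < t) (ht2 : t ≤ 1/2) (hu : 0 ≤ u) :
    |Real.log (1 - t + t*u)| ≤ 2*t*(u+1) := by
  set s : ℝ := 1 - t + t*u with hs_def
  have hs0 : 0 < s := by nlinarith
  have hs : 1/2 ≤ s := by nlinarith
  have h2 : Real.log s ≤ s - 1 := Real.log_le_sub_one_of_pos hs0
  have h3 : -Real.log s ≤ s⁻¹ - 1 := by
    have := Real.log_le_sub_one_of_pos (inv_pos.mpr hs0)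
    rwa [Real.log_inv] at this
  rw [abs_le]
  constructor
  · have key : 1 ≤ (1 + 2*t*(u+1)) * s := by
      nlinarith [mul_nonneg ht.le (by linarith : (0:ℝ) ≤ 1 - 2*t), mul_nonneg ht.le hu,
        mul_nonneg (mul_nonneg ht.le ht.le) (mul_nonneg hu hu)]
    have hinv : s⁻¹ ≤ 1 + 2*t*(u+1) := by
      rw [inv_eq_one_div, div_le_iff₀ hs0]
      linarith
    linarith
  · nlinarith

lemma log_affine_slope {A B : ℝ} (hA : 0 < A) :
    Tendsto (fun t : ℝ => (Real.log ((1-t)*A + t*B) - Real.log A)/t) (𝓝[>] (0:ℝ))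
      (𝓝 ((B - A)/A)) := by
  have hf : HasDerivAt (fun t : ℝ => (1-t)*A + t*B) (B - A) 0 := by
    have h : HasDerivAt (fun t : ℝ => (B - A) * t + A) (B - A) 0 := by
      simpa using ((hasDerivAt_id (0:ℝ)).const_mul (B - A)).add_const A
    have he : (fun t : ℝ => (B - A) * t + A) = fun t : ℝ => (1-t)*A + t*B :=
      funext fun t => by ring
    rwa [he] at h
  have hne : ((1:ℝ)-0)*A + 0*B ≠ 0 := by simpa using hA.ne'
  have hlog := hf.log hne
  have hv : (B - A) / ((1-(0:ℝ))*A + 0*B) = (B - A)/A := by norm_num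
  rw [hv, hasDerivAt_iff_tendsto_slope] at hlog
  have hmono := hlog.mono_left
    (nhdsWithin_mono (0:ℝ) (fun x hx => ne_of_gt hx : Ioi (0:ℝ) ⊆ {(0:ℝ)}ᶜ))
  refine hmono.congr fun t => ?_
  rw [slope_def_field]
  norm_num [div_eq_div_iff]

lemma tendsto_integral_logdiff {p ptil : ℝ → ℝ} (hp : IsDensity p) (hptil : IsDensity ptil)
    {c : ℝ} (hc : 0 < c) (hpae : ∀ᵐ γ ∂lebI, c ≤ p γ)
    (hratio : Integrable (fun γ => ptil γ / p γ) lebI) :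
    Tendsto (fun t : ℝ => ∫ γ, (Real.log ((1-t)*p γ + t*ptil γ) - Real.log (p γ))/t ∂lebI)
      (𝓝[>] (0:ℝ)) (𝓝 ((∫ γ, ptil γ / p γ ∂lebI) - 1)) := by
  have hlimint : ∫ γ, (ptil γ/p γ - 1) ∂lebI = (∫ γ, ptil γ / p γ ∂lebI) - 1 := by
    rw [integral_sub hratio (integrable_const 1), integral_const]
    simp
  rw [← hlimint]
  refine tendsto_integral_filter_of_dominated_convergence
    (bound := fun γ => 2*(ptil γ/p γ + 1)) ?_ ?_ ?_ ?_
  · exact Eventually.of_forall fun t =>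
      ((((hp.1.const_mul (1-t)).add (hptil.1.const_mul t)).log.sub hp.1.log).div_const
        t).aestronglyMeasurable
  · filter_upwards [Ioc_mem_nhdsGT_of_mem (by norm_num : (0:ℝ) ∈ Ico (0:ℝ) (1/2))]
      with t ht
    filter_upwards [hpae] with γ hγ
    have hpγ : 0 < p γ := lt_of_lt_of_le hc hγ
    have hu : 0 ≤ ptil γ / p γ := div_nonneg (hptil.2.1 γ) hpγ.le
    have hq : (1-t)*p γ + t*ptil γ = p γ * (1 - t + t * (ptil γ / p γ)) := by
      field_simp
    have htu : 0 ≤ t * (ptil γ / p γ) := mul_nonneg ht.1.le hu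
    have hne : (1 - t + t * (ptil γ / p γ)) ≠ 0 := by
      intro h0
      have h2 := ht.2
      linarith
    have hlog : Real.log ((1-t)*p γ + t*ptil γ) - Real.log (p γ)
        = Real.log (1 - t + t * (ptil γ / p γ)) := by
      rw [hq, Real.log_mul hpγ.ne' hne]
      ring
    rw [Real.norm_eq_abs, abs_div, hlog, abs_of_pos ht.1, div_le_iff₀ ht.1]
    calc |Real.log (1 - t + t * (ptil γ / p γ))| ≤ 2*t*(ptil γ / p γ + 1) :=
          abs_log_bound ht.1 ht.2 hu
      _ = 2*(ptil γ / p γ + 1)*t := by ring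
  · exact (hratio.add (integrable_const 1)).const_mul 2
  · filter_upwards [hpae] with γ hγ
    have hpγ : 0 < p γ := lt_of_lt_of_le hc hγ
    have h := log_affine_slope (B := ptil γ) hpγ
    have hv : (ptil γ - p γ)/p γ = ptil γ / p γ - 1 := by
      field_simp
    rwa [hv] at h


/-- **Lemma (Gâteaux derivative of `ℓ_μ` in an absolutely continuous direction).**
Fix `μ > 0`.  Let `P` and `P̃` be probability measures on `[0,1]` with Lebesgue
densities `p` and `p̃`, such that `ess inf p > 0`, `p_MA(y) > 0` whenever `p̂(y) > 0`,
and `∫₀¹ p̃/p < ∞`.  Then the one-sided directional derivative of `ℓ_μ` at `P` in the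
direction `P̃ − P` exists and equals
`∑_y p̂(y) p_A(y;P̃)/p_MA(y) + μ·∫₀¹ p̃/p − 1 − μ`. -/

theorem gateaux_derivative_ac_direction
    (N : ℕ) (pA : ℕ → ℝ → ℝ) (phat : ℕ → ℝ)
    (hpAmeas : ∀ y, Measurable (pA y)) (hpAnonneg : ∀ y γ, 0 ≤ pA y γ)
    (hpAsum : ∀ γ ∈ Set.Icc (0:ℝ) 1, ∑ y ∈ Finset.range (N + 1), pA y γ = 1)
    (hphat : ∀ y, 0 ≤ phat y) (hphat1 : ∑ y ∈ Finset.range (N + 1), phat y = 1)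
    (μ : ℝ) (hμ : 0 < μ)
    (p ptil : ℝ → ℝ) (hp : IsDensity p) (hptil : IsDensity ptil)
    -- `ess inf_{γ∈[0,1]} p(γ) > 0`
    (hinf : ∃ c : ℝ, 0 < c ∧ lebI {γ : ℝ | p γ < c} = 0)
    (hmarg : ∀ y ∈ Finset.range (N + 1), 0 < phat y → 0 < ∫ γ, pA y γ * p γ ∂lebI)
    -- `∫₀¹ p̃/p < ∞`
    (hratio : Integrable (fun γ => ptil γ / p γ) lebI) :
    Tendsto
      (fun t : ℝ =>
        ((regLoglik N pA phat μ
              (ENNReal.ofReal (1 - t) • densM p + ENNReal.ofReal t • densM ptil)).toReal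
          - (regLoglik N pA phat μ (densM p)).toReal) / t)
      (𝓝[>] 0)
      (𝓝 (∑ y ∈ Finset.range (N + 1),
            phat y * (∫ γ, pA y γ * ptil γ ∂lebI) / (∫ γ, pA y γ * p γ ∂lebI)
          + μ * ∫ γ, ptil γ / p γ ∂lebI - 1 - μ)) := by
  obtain ⟨c, hc, hcset⟩ := hinf
  have hpae : ∀ᵐ γ ∂lebI, c ≤ p γ := by
    rw [ae_iff]
    simpa [not_le] using hcset
  have hIf : ∀ (f : ℝ → ℝ), Measurable f → (∀ γ, 0 ≤ f γ) → Integrable f lebI →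
      ∀ y ∈ Finset.range (N+1), Integrable (fun γ => pA y γ * f γ) lebI := by
    intro f hfm hf0 hfi y hy
    refine hfi.mono' ((hpAmeas y).mul hfm).aestronglyMeasurable ?_
    have hmem : ∀ᵐ γ ∂lebI, γ ∈ Icc (0:ℝ) 1 := ae_restrict_mem measurableSet_Icc
    filter_upwards [hmem] with γ hγ
    have h1 : pA y γ ≤ 1 := by
      have hsum := hpAsum γ hγ
      calc pA y γ ≤ ∑ y' ∈ Finset.range (N+1), pA y' γ :=
            Finset.single_le_sum (fun i _ => hpAnonneg i γ) hy
        _ = 1 := hsum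
    rw [Real.norm_eq_abs, abs_of_nonneg (mul_nonneg (hpAnonneg y γ) (hf0 γ))]
    nlinarith [hf0 γ]
  have hIp := hIf p hp.1 hp.2.1 hp.integrable
  have hIt := hIf ptil hptil.1 hptil.2.1 hptil.integrable
  have hb0 : ∀ y, 0 ≤ ∫ γ, pA y γ * ptil γ ∂lebI :=
    fun y => integral_nonneg fun γ => mul_nonneg (hpAnonneg y γ) (hptil.2.1 γ)
  have hqm : ∀ t : ℝ, Measurable (fun γ => (1-t)*p γ + t*ptil γ) :=
    fun t => (hp.1.const_mul (1-t)).add (hptil.1.const_mul t)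
  have hq0 : ∀ t : ℝ, 0 ≤ t → t ≤ 1 → ∀ γ, 0 ≤ (1-t)*p γ + t*ptil γ := by
    intro t ht0 ht1 γ
    have h1 := hp.2.1 γ; have h2 := hptil.2.1 γ
    nlinarith
  have hqi : ∀ t : ℝ, Integrable (fun γ => (1-t)*p γ + t*ptil γ) lebI :=
    fun t => (hp.integrable.const_mul (1-t)).add (hptil.integrable.const_mul t)
  have hqae : ∀ t : ℝ, 0 ≤ t → t ≤ 1/2 → ∀ᵐ γ ∂lebI, c/2 ≤ (1-t)*p γ + t*ptil γ := by
    intro t ht0 ht2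
    filter_upwards [hpae] with γ hγ
    have h2 := hptil.2.1 γ
    nlinarith
  have hmlin : ∀ (t : ℝ) (y : ℕ), y ∈ Finset.range (N+1) →
      ∫ γ, pA y γ * ((1-t)*p γ + t*ptil γ) ∂lebI
        = (1-t) * (∫ γ, pA y γ * p γ ∂lebI) + t * (∫ γ, pA y γ * ptil γ ∂lebI) := by
    intro t y hy
    rw [show (fun γ => pA y γ * ((1-t)*p γ + t*ptil γ))
        = fun γ => (1-t)*(pA y γ * p γ) + t*(pA y γ * ptil γ) from funext fun γ => by ring]
    rw [integral_add ((hIp y hy).const_mul _) ((hIt y hy).const_mul _),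
      integral_const_mul, integral_const_mul]
  have hmpos : ∀ t : ℝ, 0 ≤ t → t ≤ 1/2 → ∀ y ∈ Finset.range (N+1), 0 < phat y →
      0 < ∫ γ, pA y γ * ((1-t)*p γ + t*ptil γ) ∂lebI := by
    intro t ht0 ht2 y hy hpy
    rw [hmlin t y hy]
    have ha := hmarg y hy hpy
    have hb := hb0 y
    nlinarith
  have hval : ∀ t : ℝ, 0 ≤ t → t ≤ 1/2 →
      (regLoglik N pA phat μ
          (ENNReal.ofReal (1 - t) • densM p + ENNReal.ofReal t • densM ptil)).toReal
        = (∑ y ∈ Finset.range (N+1), phat y *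
              Real.log ((1-t) * (∫ γ, pA y γ * p γ ∂lebI) + t * (∫ γ, pA y γ * ptil γ ∂lebI)))
          + μ * ∫ γ, Real.log ((1-t)*p γ + t*ptil γ) ∂lebI := by
    intro t ht0 ht2
    rw [densM_comb hp hptil ht0 (by linarith),
      regLoglik_densM N pA phat μ (hqm t) (hq0 t ht0 (by linarith)) (hqi t)
        (half_pos hc) (hqae t ht0 ht2) (hmpos t ht0 ht2),
      EReal.toReal_coe]
    congr 1
    exact Finset.sum_congr rfl fun y hy => by rw [hmlin t y hy]
  have hval0 : (regLoglik N pA phat μ (densM p)).toReal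
      = (∑ y ∈ Finset.range (N+1), phat y * Real.log (∫ γ, pA y γ * p γ ∂lebI))
        + μ * ∫ γ, Real.log (p γ) ∂lebI := by
    rw [regLoglik_densM N pA phat μ hp.1 hp.2.1 hp.integrable hc hpae hmarg, EReal.toReal_coe]
  have hlogq : ∀ t : ℝ, 0 ≤ t → t ≤ 1/2 →
      Integrable (fun γ => Real.log ((1-t)*p γ + t*ptil γ)) lebI :=
    fun t ht0 ht2 =>
      integrable_log_of_bounded_below (hqm t) (hqi t) (half_pos hc) (hqae t ht0 ht2)
  have hlogp : Integrable (fun γ => Real.log (p γ)) lebI :=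
    integrable_log_of_bounded_below hp.1 hp.integrable hc hpae
  have hsum_tendsto : Tendsto (fun t : ℝ => ∑ y ∈ Finset.range (N+1),
        phat y * ((Real.log ((1-t) * (∫ γ, pA y γ * p γ ∂lebI)
            + t * (∫ γ, pA y γ * ptil γ ∂lebI)) - Real.log (∫ γ, pA y γ * p γ ∂lebI))/t))
      (𝓝[>] (0:ℝ))
      (𝓝 (∑ y ∈ Finset.range (N+1),
          phat y * (((∫ γ, pA y γ * ptil γ ∂lebI) - (∫ γ, pA y γ * p γ ∂lebI))
            / (∫ γ, pA y γ * p γ ∂lebI)))) := by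
    refine tendsto_finset_sum _ fun y hy => ?_
    rcases eq_or_lt_of_le (hphat y) with h0 | hpos
    · simp only [← h0, zero_mul]
      exact tendsto_const_nhds
    · exact (log_affine_slope (hmarg y hy hpos)).const_mul (phat y)
  have hint_tendsto := tendsto_integral_logdiff hp hptil hc hpae hratio
  have hG := hsum_tendsto.add (hint_tendsto.const_mul μ)
  have hlimeq : (∑ y ∈ Finset.range (N+1),
        phat y * (((∫ γ, pA y γ * ptil γ ∂lebI) - (∫ γ, pA y γ * p γ ∂lebI))
          / (∫ γ, pA y γ * p γ ∂lebI)))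
        + μ * ((∫ γ, ptil γ / p γ ∂lebI) - 1)
      = ∑ y ∈ Finset.range (N + 1),
          phat y * (∫ γ, pA y γ * ptil γ ∂lebI) / (∫ γ, pA y γ * p γ ∂lebI)
        + μ * ∫ γ, ptil γ / p γ ∂lebI - 1 - μ := by
    have hsum : ∑ y ∈ Finset.range (N+1),
        phat y * (((∫ γ, pA y γ * ptil γ ∂lebI) - (∫ γ, pA y γ * p γ ∂lebI))
          / (∫ γ, pA y γ * p γ ∂lebI))
        = ∑ y ∈ Finset.range (N+1),
          (phat y * (∫ γ, pA y γ * ptil γ ∂lebI) / (∫ γ, pA y γ * p γ ∂lebI) - phat y) := by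
      refine Finset.sum_congr rfl fun y hy => ?_
      rcases eq_or_lt_of_le (hphat y) with h0 | hpos
      · rw [← h0]; ring
      · have ha := hmarg y hy hpos
        rw [sub_div, div_self ha.ne']
        ring
    rw [hsum, Finset.sum_sub_distrib, hphat1]
    ring
  rw [← hlimeq]
  refine Tendsto.congr' ?_ hG
  filter_upwards [Ioc_mem_nhdsGT_of_mem (by norm_num : (0:ℝ) ∈ Ico (0:ℝ) (1/2))] with t ht
  have hSeq : ∑ y ∈ Finset.range (N+1),
        phat y * ((Real.log ((1-t) * (∫ γ, pA y γ * p γ ∂lebI)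
            + t * (∫ γ, pA y γ * ptil γ ∂lebI)) - Real.log (∫ γ, pA y γ * p γ ∂lebI))/t)
      = ((∑ y ∈ Finset.range (N+1), phat y *
            Real.log ((1-t) * (∫ γ, pA y γ * p γ ∂lebI) + t * (∫ γ, pA y γ * ptil γ ∂lebI)))
        - ∑ y ∈ Finset.range (N+1), phat y * Real.log (∫ γ, pA y γ * p γ ∂lebI))/t := by
    rw [← Finset.sum_sub_distrib, Finset.sum_div]
    exact Finset.sum_congr rfl fun y hy => by ring
  have hIeq : ∫ γ, (Real.log ((1-t)*p γ + t*ptil γ) - Real.log (p γ))/t ∂lebI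
      = ((∫ γ, Real.log ((1-t)*p γ + t*ptil γ) ∂lebI) - ∫ γ, Real.log (p γ) ∂lebI)/t := by
    rw [integral_div, integral_sub (hlogq t ht.1.le ht.2) hlogp]
  rw [hSeq, hIeq, hval t ht.1.le ht.2, hval0]
  ring
end

section
/- Assume c₀ := min_{0≤y≤N} p̂(y) > 0. Let p be a probability density on [0,1] with implied marginal p_MA(y) = ∫₀¹ p_A(y|γ) p(γ) dγ > 0 for all y, and suppose ‖p_MA − p̂‖₁ := ∑_{y=0}^N |p_MA(y) − p̂(y)| ≤ ε·c₀ for some ε ∈ (0,1). Let p′ be the unregularized NPEM update of p. Then for every γ ∈ [0,1], p′(γ) ≤ p(γ)·(1 + (1/(1−ε))·‖p_MA − p̂‖₁/c₀). -/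
open MeasureTheory Set Filter Topology

/-- **Lemma (pointwise growth bound for the NPEM update).**
Assume `c₀ = min_y p̂(y) > 0`.  If `p` is a probability density on `[0,1]` with
positive implied marginals and `‖p_MA − p̂‖₁ ≤ ε·c₀` for some `ε ∈ (0,1)`, then its
unregularized NPEM update `p′` satisfies, for every `γ ∈ [0,1]`,
`p′(γ) ≤ p(γ)·(1 + (1/(1−ε))·‖p_MA − p̂‖₁/c₀)`. -/
theorem npem_update_pointwise_bound
    (N : ℕ) (pA : ℕ → ℝ → ℝ) (phat : ℕ → ℝ)
    (hpAmeas : ∀ y, Measurable (pA y)) (hpAnonneg : ∀ y γ, 0 ≤ pA y γ)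
    (hpAsum : ∀ γ ∈ Set.Icc (0:ℝ) 1, ∑ y ∈ Finset.range (N + 1), pA y γ = 1)
    (hphat1 : ∑ y ∈ Finset.range (N + 1), phat y = 1) (hphatnn : ∀ y, 0 ≤ phat y)
    (c0 : ℝ) (hc0def : c0 = (Finset.range (N + 1)).inf' Finset.nonempty_range_add_one phat)
    (hc0pos : 0 < c0)
    (p : ℝ → ℝ) (hp : IsDensity p)
    (hmarg : ∀ y ∈ Finset.range (N + 1), 0 < marginD pA p y)
    (ε : ℝ) (hε0 : 0 < ε) (hε1 : ε < 1)
    (hclose : ∑ y ∈ Finset.range (N + 1), |marginD pA p y - phat y| ≤ ε * c0) :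
    ∀ γ ∈ Set.Icc (0:ℝ) 1,
      npUpd0 N pA phat p γ
        ≤ p γ * (1 + (1 / (1 - ε)) *
            (∑ y ∈ Finset.range (N + 1), |marginD pA p y - phat y|) / c0) := by

  intro γ hγ
  have h1ε : 0 < 1 - ε := by linarith
  have hden : 0 < (1 - ε) * c0 := mul_pos h1ε hc0pos
  have hpγ : 0 ≤ p γ := hp.2.1 γ
  have hsum1 := hpAsum γ hγ
  have hpA1 : ∀ y ∈ Finset.range (N + 1), pA y γ ≤ 1 := by
    intro y hy
    calc pA y γ ≤ ∑ y ∈ Finset.range (N + 1), pA y γ :=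
          Finset.single_le_sum (fun i _ => hpAnonneg i γ) hy
      _ = 1 := hsum1
  have habs : ∀ y ∈ Finset.range (N + 1), |marginD pA p y - phat y| ≤ ε * c0 := by
    intro y hy
    exact le_trans (Finset.single_le_sum (f := fun y => |marginD pA p y - phat y|)
      (fun i _ => abs_nonneg _) hy) hclose
  have hc0le : ∀ y ∈ Finset.range (N + 1), c0 ≤ phat y := by
    intro y hy; rw [hc0def]; exact Finset.inf'_le _ hy
  have hMge : ∀ y ∈ Finset.range (N + 1), (1 - ε) * c0 ≤ marginD pA p y := by
    intro y hy
    have h1 := (abs_le.mp (habs y hy)).1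
    have h2 := hc0le y hy
    nlinarith
  have hterm : ∀ y ∈ Finset.range (N + 1),
      pA y γ * phat y * p γ / marginD pA p y
        ≤ pA y γ * p γ + p γ * |marginD pA p y - phat y| / ((1 - ε) * c0) := by
    intro y hy
    have hM := hMge y hy
    have hMpos : 0 < marginD pA p y := hmarg y hy
    have hphatle : phat y ≤ marginD pA p y + |marginD pA p y - phat y| := by
      nlinarith [neg_abs_le (marginD pA p y - phat y)]
    have hq : 0 ≤ |marginD pA p y - phat y| / ((1 - ε) * c0) := by positivity
    have hqd : |marginD pA p y - phat y| / ((1 - ε) * c0) * ((1 - ε) * c0)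
        = |marginD pA p y - phat y| := div_mul_cancel₀ _ (ne_of_gt hden)
    rw [div_le_iff₀ hMpos]
    have hA := hpAnonneg y γ
    have hA1 := hpA1 y hy
    have hstep : |marginD pA p y - phat y|
        ≤ |marginD pA p y - phat y| / ((1 - ε) * c0) * marginD pA p y := by
      calc |marginD pA p y - phat y|
          = |marginD pA p y - phat y| / ((1 - ε) * c0) * ((1 - ε) * c0) := hqd.symm
        _ ≤ _ := mul_le_mul_of_nonneg_left hM hq
    have h5 := mul_le_mul_of_nonneg_left hstep hpγ
    have h1 : pA y γ * phat y * p γ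
        ≤ pA y γ * p γ * marginD pA p y + pA y γ * p γ * |marginD pA p y - phat y| := by
      nlinarith [mul_nonneg (mul_nonneg hA hpγ) (sub_nonneg.mpr hphatle)]
    have h3 : pA y γ * p γ * |marginD pA p y - phat y| ≤ p γ * |marginD pA p y - phat y| := by
      nlinarith [mul_nonneg (mul_nonneg (sub_nonneg.mpr hA1) hpγ)
        (abs_nonneg (marginD pA p y - phat y))]
    have hrw : (pA y γ * p γ + p γ * |marginD pA p y - phat y| / ((1 - ε) * c0))
        * marginD pA p y
        = pA y γ * p γ * marginD pA p y
          + p γ * (|marginD pA p y - phat y| / ((1 - ε) * c0) * marginD pA p y) := by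
      ring
    rw [hrw]
    linarith
  have hsumineq := Finset.sum_le_sum hterm
  have heq : ∑ y ∈ Finset.range (N + 1),
      (pA y γ * p γ + p γ * |marginD pA p y - phat y| / ((1 - ε) * c0))
      = p γ * (1 + (1 / (1 - ε)) *
          (∑ y ∈ Finset.range (N + 1), |marginD pA p y - phat y|) / c0) := by
    rw [Finset.sum_add_distrib, ← Finset.sum_mul, hsum1]
    rw [← Finset.sum_div, ← Finset.mul_sum]
    field_simp
  calc npUpd0 N pA phat p γ
      ≤ ∑ y ∈ Finset.range (N + 1),
          (pA y γ * p γ + p γ * |marginD pA p y - phat y| / ((1 - ε) * c0)) := hsumineq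
    _ = _ := heq
end

section
/- Consider the logit-normal latent family p(γ|x;θ) = (λ/(γ(1−γ)√(2π)))·exp(−(λ²/2)(logit(γ) − βᵀx)²) for γ ∈ (0,1), θ = (β,λ) ∈ ℝ^d × (0,∞), where logit(γ) = log(γ/(1−γ)). Let (X,Y) be a random pair with X ∈ ℝ^d and Y ∈ {0,…,N}, and define the population variational objective ℓ̃(θ) = E[∫₀¹ r(γ|Y)·log p(γ|X;θ) dγ]. Assume: (1) E‖X‖₂ < ∞; (2) E‖XXᵀ‖₂ < ∞ (spectral norm) and E[XXᵀ] is invertible; (3) inf_{y∈{0,…,N}} ∫₀¹ p_A(y|γ) dγ ≥ b for some b > 0; (4) there exists y* with P(Y = y*) > 0 and r(γ|y*) > 0 for all γ in some set Λ ⊆ [0,1] of positive Lebesgue measure. Then ℓ̃ has a unique maximizer θ̃ = (β̃, λ̃) over ℝ^d × (0,∞), given in closed form by β̃ = (E[XXᵀ])⁻¹ · E[X·∫₀¹ r(γ|Y)·logit(γ) dγ] and 1/λ̃² = E[∫₀¹ r(γ|Y)·(logit(γ) − β̃ᵀX)² dγ]. -/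
open MeasureTheory Set Filter Topology

/-- The logit function `logit(γ) = log(γ/(1−γ))`. -/
noncomputable def logit (γ : ℝ) : ℝ := Real.log (γ / (1 - γ))

/-- The logit-normal latent family
`p(γ|x;θ) = (λ/(γ(1−γ)√(2π)))·exp(−(λ²/2)(logit(γ) − βᵀx)²)` with `θ = (β, λ)`. -/
noncomputable def logitNormal (d : ℕ) (β : Fin d → ℝ) (lam : ℝ) (x : Fin d → ℝ)
    (γ : ℝ) : ℝ :=
  lam / (γ * (1 - γ) * Real.sqrt (2 * Real.pi)) *
    Real.exp (-(lam ^ 2 / 2) * (logit γ - ∑ i, β i * x i) ^ 2)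

/-- The normalized kernel `r(γ|y) = p_A(y|γ) / b_y` where `b_y = ∫₀¹ p_A(y|γ) dγ`. -/
noncomputable def rK (pA : ℕ → ℝ → ℝ) (y : ℕ) (γ : ℝ) : ℝ :=
  pA y γ / ∫ x, pA y x ∂lebI

instance inst_s16 : IsFiniteMeasure lebI := by
  constructor; simp [lebI, Real.volume_Icc]

lemma lebI_Ioo : lebI = volume.restrict (Set.Ioo 0 1) :=
  (Measure.restrict_congr_set Ioo_ae_eq_Icc).symm

lemma ae_mem_Ioo : ∀ᵐ x ∂lebI, x ∈ Set.Ioo (0:ℝ) 1 := by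
  rw [lebI_Ioo]; exact ae_restrict_mem measurableSet_Ioo

lemma measurable_logit : Measurable logit :=
  Real.measurable_log.comp (measurable_id.div (measurable_const.sub measurable_id))

lemma integrable_rpow_lebI {r : ℝ} (hr : -1 < r) : Integrable (fun x : ℝ => x ^ r) lebI := by
  have h := (intervalIntegral.intervalIntegrable_rpow' (a := 0) (b := 1) hr).1
  rw [lebI_Ioo]; exact h.mono_set Set.Ioo_subset_Ioc_self

lemma integrable_one_sub_rpow_lebI {r : ℝ} (hr : -1 < r) :
    Integrable (fun x : ℝ => (1 - x) ^ r) lebI := by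
  have h := ((intervalIntegral.intervalIntegrable_rpow' (a := 0) (b := 1) hr).comp_sub_left 1).symm
  simp only [sub_zero, sub_self] at h
  rw [lebI_Ioo]; exact h.1.mono_set Set.Ioo_subset_Ioc_self

/-- dominating function -/
noncomputable def dom (x : ℝ) : ℝ := x ^ (-(2⁻¹:ℝ)) + (1 - x) ^ (-(2⁻¹:ℝ))

lemma integrable_dom : Integrable dom lebI :=
  (integrable_rpow_lebI (by norm_num)).add (integrable_one_sub_rpow_lebI (by norm_num))

lemma abs_log_le {x : ℝ} (hx : 0 < x) (hx1 : x ≤ 1) : |Real.log x| ≤ 4 * x ^ (-(4⁻¹:ℝ)) := by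
  have h1 : Real.log x ≤ 0 := Real.log_nonpos hx.le hx1
  rw [abs_of_nonpos h1, ← Real.log_inv]
  have h2 := Real.log_le_rpow_div (x := x⁻¹) (ε := 4⁻¹) (by positivity) (by norm_num)
  rw [← Real.rpow_neg_one, ← Real.rpow_mul hx.le] at h2
  rw [show x⁻¹ = x ^ (-1:ℝ) by rw [Real.rpow_neg_one]]
  calc Real.log (x ^ (-1:ℝ)) ≤ (x ^ ((-1:ℝ) * 4⁻¹)) / 4⁻¹ := h2
    _ = 4 * x ^ (-(4⁻¹:ℝ)) := by rw [div_eq_mul_inv]; norm_num; ring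

lemma abs_log_le' {x : ℝ} (hx : 0 < x) (hx1 : x ≤ 1) : |Real.log x| ≤ 4 * x ^ (-(2⁻¹:ℝ)) := by
  refine (abs_log_le hx hx1).trans ?_
  have := Real.rpow_le_rpow_of_exponent_ge hx hx1 (by norm_num : -(2⁻¹:ℝ) ≤ -(4⁻¹:ℝ))
  linarith

lemma sq_log_le {x : ℝ} (hx : 0 < x) (hx1 : x ≤ 1) : (Real.log x) ^ 2 ≤ 16 * x ^ (-(2⁻¹:ℝ)) := by
  have h := abs_log_le hx hx1
  have h2 : (Real.log x)^2 = |Real.log x|^2 := (sq_abs _).symm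
  have h3 : |Real.log x|^2 ≤ (4 * x ^ (-(4⁻¹:ℝ)))^2 := by
    apply pow_le_pow_left₀ (abs_nonneg _) h
  rw [mul_pow, ← Real.rpow_natCast (x ^ _), ← Real.rpow_mul hx.le] at h3
  norm_num at h3
  rw [h2]
  have : (16:ℝ) * x ^ (-(1/2):ℝ) = 16 * x ^ (-(2⁻¹:ℝ)) := by norm_num
  rw [← this]
  rw [← h2]
  exact h3

lemma integrable_of_dom {f : ℝ → ℝ} (hmeas : AEStronglyMeasurable f lebI) (C D : ℝ)
    (hbound : ∀ x ∈ Set.Ioo (0:ℝ) 1, |f x| ≤ C * dom x + D) : Integrable f lebI := by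
  refine Integrable.mono' ((integrable_dom.const_mul C).add (integrable_const D)) hmeas ?_
  filter_upwards [ae_mem_Ioo] with x hx
  simpa [Real.norm_eq_abs] using hbound x hx

lemma logit_eq {x : ℝ} (hx : x ∈ Set.Ioo (0:ℝ) 1) : logit x = Real.log x - Real.log (1 - x) :=
  Real.log_div (ne_of_gt hx.1) (by linarith [hx.2] : (1:ℝ) - x ≠ 0)

lemma abs_logit_le {x : ℝ} (hx : x ∈ Set.Ioo (0:ℝ) 1) : |logit x| ≤ 4 * dom x := by
  rw [logit_eq hx, dom]
  have h1 := abs_log_le' hx.1 hx.2.le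
  have h2 := abs_log_le' (by linarith [hx.2] : (0:ℝ) < 1 - x) (by linarith [hx.1])
  calc |Real.log x - Real.log (1-x)| ≤ |Real.log x| + |Real.log (1-x)| := abs_sub _ _
    _ ≤ 4 * (x ^ (-(2⁻¹:ℝ)) + (1-x) ^ (-(2⁻¹:ℝ))) := by linarith

lemma sq_logit_le {x : ℝ} (hx : x ∈ Set.Ioo (0:ℝ) 1) : (logit x)^2 ≤ 32 * dom x := by
  rw [logit_eq hx, dom]
  have h1 := sq_log_le hx.1 hx.2.le
  have h2 := sq_log_le (by linarith [hx.2] : (0:ℝ) < 1 - x) (by linarith [hx.1])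
  nlinarith [sq_nonneg (Real.log x + Real.log (1-x))]

lemma integrable_logit : Integrable logit lebI := by
  refine integrable_of_dom measurable_logit.aestronglyMeasurable 4 0 fun x hx => ?_
  simpa using abs_logit_le hx

lemma integrable_logit_sq : Integrable (fun x => (logit x)^2) lebI := by
  refine integrable_of_dom (measurable_logit.pow_const 2).aestronglyMeasurable 32 0 fun x hx => ?_
  rw [abs_of_nonneg (sq_nonneg _)]
  simpa using sq_logit_le hx

lemma integrable_logprod :
    Integrable (fun x => Real.log (x * (1 - x) * Real.sqrt (2 * Real.pi))) lebI := by
  have hm : Measurable fun x : ℝ => Real.log (x * (1 - x) * Real.sqrt (2 * Real.pi)) :=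
    Real.measurable_log.comp (((measurable_id.mul (measurable_const.sub measurable_id)).mul
      measurable_const))
  refine integrable_of_dom hm.aestronglyMeasurable 4 |Real.log (Real.sqrt (2 * Real.pi))|
    fun x hx => ?_
  have hx0 : x ≠ 0 := ne_of_gt hx.1
  have hx1 : (1:ℝ) - x ≠ 0 := by have := hx.2; intro h; linarith [hx.2, sub_eq_zero.mp h]
  have hs : Real.sqrt (2 * Real.pi) ≠ 0 := by positivity
  rw [Real.log_mul (mul_ne_zero hx0 hx1) hs, Real.log_mul hx0 hx1]
  have h1 := abs_log_le' hx.1 hx.2.le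
  have h2 := abs_log_le' (by linarith [hx.2] : (0:ℝ) < 1 - x) (by linarith [hx.1])
  have : |Real.log x + Real.log (1-x) + Real.log (Real.sqrt (2*Real.pi))|
      ≤ |Real.log x| + |Real.log (1-x)| + |Real.log (Real.sqrt (2*Real.pi))| := by
    exact (abs_add_le _ _).trans (by gcongr; exact abs_add_le _ _)
  rw [dom]
  linarith

lemma integrable_sub_sq (a : ℝ) : Integrable (fun x => (logit x - a)^2) lebI := by
  have : (fun x => (logit x - a)^2) = fun x => (logit x)^2 - (2*a) * logit x + a^2 := by
    funext x; ring
  rw [this]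
  exact ((integrable_logit_sq.sub (integrable_logit.const_mul _)).add (integrable_const _))

section Weight

variable {w : ℝ → ℝ} {B : ℝ} (hw : Measurable w) (hwB : ∀ᵐ x ∂lebI, |w x| ≤ B)

include hw hwB

lemma integrable_w_mul {f : ℝ → ℝ} (hf : Integrable f lebI) :
    Integrable (fun x => w x * f x) lebI := by
  refine hf.bdd_mul (c := B) hw.aestronglyMeasurable ?_
  filter_upwards [hwB] with x hx using by simpa [Real.norm_eq_abs] using hx

/-- expansion of the weighted square integral -/
lemma sq_decomp (a : ℝ) :
    ∫ x, w x * (logit x - a)^2 ∂lebI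
      = (∫ x, w x * (logit x)^2 ∂lebI) - 2*a*(∫ x, w x * logit x ∂lebI)
        + a^2 * ∫ x, w x ∂lebI := by
  have h1 := integrable_w_mul hw hwB integrable_logit_sq
  have h2 := integrable_w_mul hw hwB integrable_logit
  have h3 : Integrable w lebI := by
    simpa using integrable_w_mul hw hwB (integrable_const 1)
  have : (fun x => w x * (logit x - a)^2)
      = fun x => (w x * (logit x)^2 - (2*a) * (w x * logit x)) + a^2 * w x := by
    funext x; ring
  have hsub : Integrable (fun x => w x * (logit x)^2 - 2*a*(w x * logit x)) lebI :=
    h1.sub (h2.const_mul _)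
  have hmul : Integrable (fun x => a^2 * w x) lebI := h3.const_mul _
  rw [this, integral_add hsub hmul, integral_sub h1 (h2.const_mul _), integral_const_mul,
    integral_const_mul]

/-- decomposition of the weighted log-density integral -/
lemma log_decomp (hw1 : ∫ x, w x ∂lebI = 1) (a lam : ℝ) (hlam : 0 < lam) :
    ∫ γ, w γ * Real.log (lam / (γ * (1 - γ) * Real.sqrt (2 * Real.pi)) *
        Real.exp (-(lam^2/2) * (logit γ - a)^2)) ∂lebI
      = Real.log lam - (∫ γ, w γ * Real.log (γ * (1 - γ) * Real.sqrt (2 * Real.pi)) ∂lebI)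
        - (lam^2/2) * ∫ γ, w γ * (logit γ - a)^2 ∂lebI := by
  have h1 := integrable_w_mul hw hwB integrable_logprod
  have h2 := integrable_w_mul hw hwB (integrable_sub_sq a)
  have h3 : Integrable w lebI := by
    simpa using integrable_w_mul hw hwB (integrable_const 1)
  have key : ∀ᵐ γ ∂lebI, w γ * Real.log (lam / (γ * (1 - γ) * Real.sqrt (2 * Real.pi)) *
        Real.exp (-(lam^2/2) * (logit γ - a)^2))
      = Real.log lam * w γ - w γ * Real.log (γ * (1 - γ) * Real.sqrt (2 * Real.pi))
        - (lam^2/2) * (w γ * (logit γ - a)^2) := by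
    filter_upwards [ae_mem_Ioo] with γ hγ
    have hD : (0:ℝ) < γ * (1 - γ) * Real.sqrt (2 * Real.pi) := by
      have h1' := hγ.1
      have h2' : (0:ℝ) < 1 - γ := by linarith [hγ.2]
      positivity
    rw [Real.log_mul (by positivity) (Real.exp_ne_zero _), Real.log_div (ne_of_gt hlam)
      (ne_of_gt hD), Real.log_exp]
    ring
  have hsub : Integrable (fun γ => Real.log lam * w γ
      - w γ * Real.log (γ * (1 - γ) * Real.sqrt (2 * Real.pi))) lebI :=
    (h3.const_mul _).sub h1
  rw [integral_congr_ae key, integral_sub hsub (h2.const_mul _),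
    integral_sub (h3.const_mul _) h1, integral_const_mul, integral_const_mul, hw1]
  ring

end Weight

lemma scalar_eq {V : ℝ} (hV : 0 < V) :
    Real.log (1/Real.sqrt V) - (1/Real.sqrt V)^2/2 * V = Real.log (1/Real.sqrt V) - 1/2 := by
  have h2 : Real.sqrt V ^ 2 = V := Real.sq_sqrt hV.le
  have h3 : (1/Real.sqrt V)^2/2*V = 1/2 := by
    rw [div_pow, one_pow, h2]
    field_simp
  rw [h3]

lemma scalar_lt {V lam : ℝ} (hV : 0 < V) (hlam : 0 < lam) (hne : lam ≠ 1 / Real.sqrt V) :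
    Real.log lam - lam^2/2 * V < Real.log (1/Real.sqrt V) - 1/2 := by
  have hs : 0 < Real.sqrt V := Real.sqrt_pos.mpr hV
  have h2 : Real.sqrt V ^ 2 = V := Real.sq_sqrt hV.le
  set t := lam * Real.sqrt V with ht
  have htpos : 0 < t := mul_pos hlam hs
  have ht1 : t ≠ 1 := by
    intro h
    apply hne
    field_simp at h ⊢
    linarith [h]
  have hlog := Real.log_lt_sub_one_of_pos htpos ht1
  have hlam_eq : lam = t / Real.sqrt V := by field_simp; exact ht.symm
  have hloglam : Real.log lam = Real.log t - Real.log (Real.sqrt V) := by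
    rw [hlam_eq, Real.log_div (ne_of_gt htpos) (ne_of_gt hs)]
  have hlog1 : Real.log (1/Real.sqrt V) = - Real.log (Real.sqrt V) := by
    rw [one_div, Real.log_inv]
  have hsq : lam^2 * V = t^2 := by rw [ht, mul_pow, h2]
  rw [hloglam, hlog1]
  nlinarith [sq_nonneg (t - 1)]

lemma scalar_le {V lam : ℝ} (hV : 0 < V) (hlam : 0 < lam) :
    Real.log lam - lam^2/2 * V ≤ Real.log (1/Real.sqrt V) - 1/2 := by
  by_cases h : lam = 1 / Real.sqrt V
  · rw [h]; rw [scalar_eq hV]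
  · exact (scalar_lt hV hlam h).le


/-- **Theorem (closed form for the variational logit-normal maximizer).**
Under the stated moment and nondegeneracy conditions, the population variational
objective `ℓ̃(θ) = E[∫₀¹ r(γ|Y) log p(γ|X;θ) dγ]` has a unique maximizer
`θ̃ = (β̃, λ̃)` over `ℝ^d × (0,∞)`, given in closed form by
`β̃ = (E[XXᵀ])⁻¹ E[X ∫₀¹ r(γ|Y) logit(γ) dγ]` and
`1/λ̃² = E[∫₀¹ r(γ|Y)(logit(γ) − β̃ᵀX)² dγ]`. -/
theorem logit_normal_variational_closed_form
    (N d : ℕ) (pA : ℕ → ℝ → ℝ)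
    (hpAmeas : ∀ y, Measurable (pA y)) (hpAnonneg : ∀ y γ, 0 ≤ pA y γ)
    (hpAsum : ∀ γ ∈ Set.Icc (0:ℝ) 1, ∑ y ∈ Finset.range (N + 1), pA y γ = 1)
    {Ωs : Type*} [MeasurableSpace Ωs] (P : Measure Ωs) [IsProbabilityMeasure P]
    (X : Ωs → Fin d → ℝ) (Y : Ωs → ℕ) (hX : Measurable X) (hY : Measurable Y)
    (hYrange : ∀ ω, Y ω ∈ Finset.range (N + 1))
    -- (1): `E‖X‖₂ < ∞`
    (hX1 : Integrable (fun ω => Real.sqrt (∑ i, (X ω i) ^ 2)) P)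
    -- (2): `E‖XXᵀ‖₂ < ∞` (spectral norm, `‖xxᵀ‖₂ = ‖x‖₂²`) and `E[XXᵀ]` invertible
    (hX2 : Integrable (fun ω => ∑ i, (X ω i) ^ 2) P)
    (hMinv : IsUnit (Matrix.of fun i j : Fin d => ∫ ω, X ω i * X ω j ∂P))
    -- (3): `inf_y ∫₀¹ p_A(y|γ) dγ ≥ b > 0`
    (b : ℝ) (hb : 0 < b) (hbA : ∀ y ∈ Finset.range (N + 1), b ≤ ∫ γ, pA y γ ∂lebI)
    -- (4): some `y*` with `P(Y = y*) > 0` and `r(·|y*) > 0` on a set of positive measure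
    (hystar : ∃ ystar ∈ Finset.range (N + 1), 0 < P {ω | Y ω = ystar} ∧
      ∃ Λ : Set ℝ, Λ ⊆ Set.Icc (0:ℝ) 1 ∧ MeasurableSet Λ ∧ 0 < volume Λ ∧
        ∀ γ ∈ Λ, 0 < rK pA ystar γ) :
    let M : Matrix (Fin d) (Fin d) ℝ := Matrix.of fun i j => ∫ ω, X ω i * X ω j ∂P
    let v : Fin d → ℝ := fun i => ∫ ω, X ω i * ∫ γ, rK pA (Y ω) γ * logit γ ∂lebI ∂P
    let βT : Fin d → ℝ := M⁻¹.mulVec v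
    let Vval : ℝ :=
      ∫ ω, ∫ γ, rK pA (Y ω) γ * (logit γ - ∑ i, βT i * X ω i) ^ 2 ∂lebI ∂P
    let lamT : ℝ := 1 / Real.sqrt Vval
    let ltil : (Fin d → ℝ) → ℝ → ℝ := fun β lam =>
      ∫ ω, ∫ γ, rK pA (Y ω) γ * Real.log (logitNormal d β lam (X ω) γ) ∂lebI ∂P
    (0 < lamT ∧ βT = M⁻¹.mulVec v ∧ 1 / lamT ^ 2 = Vval) ∧
    (∀ (β : Fin d → ℝ) (lam : ℝ), 0 < lam → ltil β lam ≤ ltil βT lamT) ∧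
    (∀ (β : Fin d → ℝ) (lam : ℝ), 0 < lam →
      ltil β lam = ltil βT lamT → β = βT ∧ lam = lamT) := by
  intro M v βT Vval lamT ltil
  -- ## kernel facts
  have ae_mem_Icc : ∀ᵐ x ∂lebI, x ∈ Set.Icc (0:ℝ) 1 := ae_restrict_mem measurableSet_Icc
  have hbpos : ∀ y ∈ Finset.range (N+1), 0 < ∫ γ, pA y γ ∂lebI :=
    fun y hy => lt_of_lt_of_le hb (hbA y hy)
  have hrK_meas : ∀ y, Measurable (rK pA y) := fun y => (hpAmeas y).div_const _
  have hrK_nonneg : ∀ y ∈ Finset.range (N+1), ∀ γ, 0 ≤ rK pA y γ :=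
    fun y hy γ => div_nonneg (hpAnonneg y γ) (hbpos y hy).le
  have hpA_le_one : ∀ y ∈ Finset.range (N+1), ∀ γ ∈ Set.Icc (0:ℝ) 1, pA y γ ≤ 1 := by
    intro y hy γ hγ
    calc pA y γ ≤ ∑ y' ∈ Finset.range (N+1), pA y' γ :=
          Finset.single_le_sum (fun y' _ => hpAnonneg y' γ) hy
      _ = 1 := hpAsum γ hγ
  have hrK_bd : ∀ y ∈ Finset.range (N+1), ∀ᵐ γ ∂lebI, |rK pA y γ| ≤ 1/b := by
    intro y hy
    filter_upwards [ae_mem_Icc] with γ hγ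
    rw [abs_of_nonneg (hrK_nonneg y hy γ), rK]
    exact div_le_div₀ zero_le_one (hpA_le_one y hy γ hγ) hb (hbA y hy)
  have hrK_int1 : ∀ y ∈ Finset.range (N+1), ∫ γ, rK pA y γ ∂lebI = 1 := by
    intro y hy
    simp only [rK, integral_div]
    exact div_self (ne_of_gt (hbpos y hy))
  -- ## inner decompositions
  have hG : ∀ y ∈ Finset.range (N+1), ∀ a : ℝ,
      ∫ γ, rK pA y γ * (logit γ - a)^2 ∂lebI
        = (∫ γ, rK pA y γ * (logit γ)^2 ∂lebI) - 2*a*(∫ γ, rK pA y γ * logit γ ∂lebI) + a^2 := by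
    intro y hy a
    rw [sq_decomp (hrK_meas y) (hrK_bd y hy) a, hrK_int1 y hy, mul_one]
  have hlogd : ∀ y ∈ Finset.range (N+1), ∀ (x β : Fin d → ℝ) (lam : ℝ), 0 < lam →
      ∫ γ, rK pA y γ * Real.log (logitNormal d β lam x γ) ∂lebI
        = Real.log lam
          - (∫ γ, rK pA y γ * Real.log (γ * (1 - γ) * Real.sqrt (2 * Real.pi)) ∂lebI)
          - lam^2/2 * ∫ γ, rK pA y γ * (logit γ - ∑ i, β i * x i)^2 ∂lebI := by
    intro y hy x β lam hlam
    simp only [logitNormal]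
    exact log_decomp (hrK_meas y) (hrK_bd y hy) (hrK_int1 y hy) _ lam hlam
  -- ## integrability over Ω
  have hXi : ∀ i, Integrable (fun ω => X ω i) P := by
    intro i
    refine Integrable.mono' hX1 ((measurable_pi_apply i).comp hX).aestronglyMeasurable ?_
    refine ae_of_all _ fun ω => ?_
    rw [Real.norm_eq_abs, ← Real.sqrt_sq_eq_abs]
    exact Real.sqrt_le_sqrt (Finset.single_le_sum (fun j _ => sq_nonneg (X ω j))
      (Finset.mem_univ i))
  have hXij : ∀ i j, Integrable (fun ω => X ω i * X ω j) P := by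
    intro i j
    refine Integrable.mono' hX2
      (((measurable_pi_apply i).comp hX).mul ((measurable_pi_apply j).comp hX)).aestronglyMeasurable
      (ae_of_all _ fun ω => ?_)
    rw [Real.norm_eq_abs, abs_mul]
    have h1 : (X ω i)^2 ≤ ∑ k, (X ω k)^2 :=
      Finset.single_le_sum (fun k _ => sq_nonneg (X ω k)) (Finset.mem_univ i)
    have h2 : (X ω j)^2 ≤ ∑ k, (X ω k)^2 :=
      Finset.single_le_sum (fun k _ => sq_nonneg (X ω k)) (Finset.mem_univ j)
    nlinarith [sq_nonneg (|X ω i| - |X ω j|), sq_abs (X ω i), sq_abs (X ω j),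
      abs_nonneg (X ω i), abs_nonneg (X ω j)]
  have hYsets : ∀ y : ℕ, MeasurableSet {ω | Y ω = y} := fun y => hY (measurableSet_singleton y)
  have hcompY : ∀ (g : ℕ → ℝ) (f : Ωs → ℝ), Integrable f P →
      Integrable (fun ω => f ω * g (Y ω)) P := by
    intro g f hf
    have heq : (fun ω => f ω * g (Y ω))
        = fun ω => ∑ y ∈ Finset.range (N+1), ({ω | Y ω = y}.indicator (fun ω => f ω * g y)) ω := by
      funext ω
      have : ∀ y, ({ω | Y ω = y}.indicator (fun ω => f ω * g y)) ω
          = if Y ω = y then f ω * g y else 0 := by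
        intro y; simp [Set.indicator_apply, Set.mem_setOf_eq]
      simp only [this]
      rw [Finset.sum_ite_eq]
      simp [hYrange ω]
    rw [heq]
    exact integrable_finset_sum _ fun y _ => (hf.mul_const (g y)).indicator (hYsets y)
  have hgY : ∀ g : ℕ → ℝ, Integrable (fun ω => g (Y ω)) P := by
    intro g
    have := hcompY g (fun _ => 1) (integrable_const 1)
    simpa using this
  have haX : ∀ β : Fin d → ℝ, Integrable (fun ω => ∑ i, β i * X ω i) P :=
    fun β => integrable_finset_sum _ fun i _ => (hXi i).const_mul _
  have haXsq : ∀ β δ : Fin d → ℝ,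
      Integrable (fun ω => (∑ i, β i * X ω i) * (∑ j, δ j * X ω j)) P := by
    intro β δ
    have heq : (fun ω => (∑ i, β i * X ω i) * (∑ j, δ j * X ω j))
        = fun ω => ∑ i, ∑ j, (β i * δ j) * (X ω i * X ω j) := by
      funext ω
      rw [Finset.sum_mul_sum]
      exact Finset.sum_congr rfl fun i _ => Finset.sum_congr rfl fun j _ => by ring
    rw [heq]
    exact integrable_finset_sum _ fun i _ => integrable_finset_sum _ fun j _ =>
      (hXij i j).const_mul _
  have hsqint : ∀ β : Fin d → ℝ, Integrable (fun ω => (∑ i, β i * X ω i)^2) P := by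
    intro β
    have := haXsq β β
    refine this.congr (ae_of_all _ fun ω => ?_)
    exact (pow_two _).symm
  -- ## integral identities over Ω
  have hint_aL : ∀ β : Fin d → ℝ,
      ∫ ω, (∑ i, β i * X ω i) * (∫ γ, rK pA (Y ω) γ * logit γ ∂lebI) ∂P
        = ∑ i, β i * v i := by
    intro β
    calc ∫ ω, (∑ i, β i * X ω i) * (∫ γ, rK pA (Y ω) γ * logit γ ∂lebI) ∂P
        = ∫ ω, ∑ i, β i * (X ω i * (∫ γ, rK pA (Y ω) γ * logit γ ∂lebI)) ∂P := by
          refine integral_congr_ae (ae_of_all _ fun ω => ?_)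
          beta_reduce
          rw [Finset.sum_mul]
          exact Finset.sum_congr rfl fun i _ => mul_assoc _ _ _
      _ = ∑ i, ∫ ω, β i * (X ω i * (∫ γ, rK pA (Y ω) γ * logit γ ∂lebI)) ∂P :=
          integral_finset_sum _ fun i _ =>
            ((hcompY (fun y => ∫ γ, rK pA y γ * logit γ ∂lebI) _ (hXi i)).const_mul _)
      _ = ∑ i, β i * v i := by
          refine Finset.sum_congr rfl fun i _ => ?_
          rw [integral_const_mul]
  have hint_aa : ∀ β δ : Fin d → ℝ,
      ∫ ω, (∑ i, β i * X ω i) * (∑ j, δ j * X ω j) ∂P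
        = ∑ i, ∑ j, β i * δ j * M i j := by
    intro β δ
    calc ∫ ω, (∑ i, β i * X ω i) * (∑ j, δ j * X ω j) ∂P
        = ∫ ω, ∑ i, ∑ j, β i * δ j * (X ω i * X ω j) ∂P := by
          refine integral_congr_ae (ae_of_all _ fun ω => ?_)
          beta_reduce
          rw [Finset.sum_mul_sum]
          exact Finset.sum_congr rfl fun i _ => Finset.sum_congr rfl fun j _ => by ring
      _ = ∑ i, ∫ ω, ∑ j, β i * δ j * (X ω i * X ω j) ∂P :=
          integral_finset_sum _ fun i _ => integrable_finset_sum _ fun j _ =>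
            (hXij i j).const_mul _
      _ = ∑ i, ∑ j, ∫ ω, β i * δ j * (X ω i * X ω j) ∂P :=
          Finset.sum_congr rfl fun i _ =>
            integral_finset_sum _ fun j _ => (hXij i j).const_mul _
      _ = ∑ i, ∑ j, β i * δ j * M i j := by
          refine Finset.sum_congr rfl fun i _ => Finset.sum_congr rfl fun j _ => ?_
          rw [integral_const_mul]
          rfl
  -- ## the ω-level quadratic functions
  have hFnonneg : ∀ (β : Fin d → ℝ) (ω : Ωs),
      0 ≤ ∫ γ, rK pA (Y ω) γ * (logit γ - ∑ i, β i * X ω i)^2 ∂lebI := fun β ω =>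
    integral_nonneg fun γ => mul_nonneg (hrK_nonneg (Y ω) (hYrange ω) γ) (sq_nonneg _)
  have hFint : ∀ β : Fin d → ℝ,
      Integrable (fun ω => ∫ γ, rK pA (Y ω) γ * (logit γ - ∑ i, β i * X ω i)^2 ∂lebI) P := by
    intro β
    have hcomb : Integrable (fun ω =>
        (∫ γ, rK pA (Y ω) γ * (logit γ)^2 ∂lebI)
          - 2*(∑ i, β i * X ω i)*(∫ γ, rK pA (Y ω) γ * logit γ ∂lebI)
          + (∑ i, β i * X ω i)^2) P := by
      refine ((hgY (fun y => ∫ γ, rK pA y γ * (logit γ)^2 ∂lebI)).sub ?_).add (hsqint β)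
      have h2 : Integrable (fun ω => (2*(∑ i, β i * X ω i))
          * (∫ γ, rK pA (Y ω) γ * logit γ ∂lebI)) P :=
        hcompY (fun y => ∫ γ, rK pA y γ * logit γ ∂lebI) _ ((haX β).const_mul 2)
      refine h2.congr (ae_of_all _ fun ω => ?_)
      ring
    refine hcomb.congr (ae_of_all _ fun ω => ?_)
    exact (hG (Y ω) (hYrange ω) _).symm
  have houter : ∀ β : Fin d → ℝ,
      ∫ ω, (∫ γ, rK pA (Y ω) γ * (logit γ - ∑ i, β i * X ω i)^2 ∂lebI) ∂P
        = (∫ ω, (∫ γ, rK pA (Y ω) γ * (logit γ)^2 ∂lebI) ∂P)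
          - 2 * (∑ i, β i * v i) + ∑ i, ∑ j, β i * β j * M i j := by
    intro β
    have h2 : Integrable (fun ω => 2*(∑ i, β i * X ω i)
        * (∫ γ, rK pA (Y ω) γ * logit γ ∂lebI)) P :=
      hcompY (fun y => ∫ γ, rK pA y γ * logit γ ∂lebI) _ ((haX β).const_mul 2)
    calc ∫ ω, (∫ γ, rK pA (Y ω) γ * (logit γ - ∑ i, β i * X ω i)^2 ∂lebI) ∂P
        = ∫ ω, ((∫ γ, rK pA (Y ω) γ * (logit γ)^2 ∂lebI)
            - 2*(∑ i, β i * X ω i)*(∫ γ, rK pA (Y ω) γ * logit γ ∂lebI)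
            + (∑ i, β i * X ω i)^2) ∂P :=
          integral_congr_ae (ae_of_all _ fun ω => hG (Y ω) (hYrange ω) _)
      _ = (∫ ω, (∫ γ, rK pA (Y ω) γ * (logit γ)^2 ∂lebI) ∂P)
            - (∫ ω, 2*(∑ i, β i * X ω i)*(∫ γ, rK pA (Y ω) γ * logit γ ∂lebI) ∂P)
            + ∫ ω, (∑ i, β i * X ω i)^2 ∂P := by
          have HS : Integrable (fun ω => (∫ γ, rK pA (Y ω) γ * (logit γ)^2 ∂lebI)
              - 2*(∑ i, β i * X ω i)*(∫ γ, rK pA (Y ω) γ * logit γ ∂lebI)) P :=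
            (hgY (fun y => ∫ γ, rK pA y γ * (logit γ)^2 ∂lebI)).sub h2
          rw [integral_add HS (hsqint β),
            integral_sub (hgY (fun y => ∫ γ, rK pA y γ * (logit γ)^2 ∂lebI)) h2]
      _ = (∫ ω, (∫ γ, rK pA (Y ω) γ * (logit γ)^2 ∂lebI) ∂P)
            - 2 * (∑ i, β i * v i) + ∑ i, ∑ j, β i * β j * M i j := by
          have e1 : ∫ ω, 2*(∑ i, β i * X ω i)*(∫ γ, rK pA (Y ω) γ * logit γ ∂lebI) ∂P
              = 2 * (∑ i, β i * v i) := by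
            rw [← hint_aL β, ← integral_const_mul]
            refine integral_congr_ae (ae_of_all _ fun ω => ?_)
            beta_reduce
            ring
          have e2 : ∫ ω, (∑ i, β i * X ω i)^2 ∂P = ∑ i, ∑ j, β i * β j * M i j := by
            rw [← hint_aa β β]
            exact integral_congr_ae (ae_of_all _ fun ω => pow_two _)
          rw [e1, e2]
  -- ## the objective in closed form
  have hltil : ∀ (β : Fin d → ℝ) (lam : ℝ), 0 < lam →
      ltil β lam = Real.log lam
        - (∫ ω, (∫ γ, rK pA (Y ω) γ
            * Real.log (γ * (1 - γ) * Real.sqrt (2 * Real.pi)) ∂lebI) ∂P)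
        - lam^2/2 * ((∫ ω, (∫ γ, rK pA (Y ω) γ * (logit γ)^2 ∂lebI) ∂P)
            - 2 * (∑ i, β i * v i) + ∑ i, ∑ j, β i * β j * M i j) := by
    intro β lam hlam
    have h1 : ltil β lam = ∫ ω, (Real.log lam
        - (∫ γ, rK pA (Y ω) γ * Real.log (γ * (1 - γ) * Real.sqrt (2 * Real.pi)) ∂lebI)
        - lam^2/2 * (∫ γ, rK pA (Y ω) γ * (logit γ - ∑ i, β i * X ω i)^2 ∂lebI)) ∂P := by
      show (∫ ω, ∫ γ, rK pA (Y ω) γ * Real.log (logitNormal d β lam (X ω) γ) ∂lebI ∂P) = _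
      exact integral_congr_ae (ae_of_all _ fun ω => hlogd (Y ω) (hYrange ω) (X ω) β lam hlam)
    have hC := hgY (fun y => ∫ γ, rK pA y γ
      * Real.log (γ * (1 - γ) * Real.sqrt (2 * Real.pi)) ∂lebI)
    have hF := (hFint β).const_mul (lam^2/2)
    have HS2 : Integrable (fun ω => Real.log lam - (∫ γ, rK pA (Y ω) γ
        * Real.log (γ * (1 - γ) * Real.sqrt (2 * Real.pi)) ∂lebI)) P :=
      (integrable_const (Real.log lam)).sub hC
    rw [h1, integral_sub HS2 hF, integral_sub (integrable_const (Real.log lam)) hC,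
      integral_const_mul, houter β, integral_const]
    simp [measure_univ]
  -- ## matrix algebra
  have hMdet : IsUnit M.det := (Matrix.isUnit_iff_isUnit_det M).mp hMinv
  have hMβT : M.mulVec βT = v := by
    show M.mulVec (M⁻¹.mulVec v) = v
    rw [Matrix.mulVec_mulVec, Matrix.mul_nonsing_inv _ hMdet, Matrix.one_mulVec]
  have hv : ∀ i, v i = ∑ j, M i j * βT j := by
    intro i
    rw [← hMβT]
    simp [Matrix.mulVec, dotProduct]
  have hsymm : ∀ i j, M i j = M j i := by
    intro i j
    show (∫ ω, X ω i * X ω j ∂P) = ∫ ω, X ω j * X ω i ∂P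
    exact integral_congr_ae (ae_of_all _ fun ω => mul_comm _ _)
  have e2 : ∀ w : Fin d → ℝ, ∑ i, w i * v i = ∑ i, ∑ j, w i * βT j * M i j := by
    intro w
    refine Finset.sum_congr rfl fun i _ => ?_
    rw [hv i, Finset.mul_sum]
    exact Finset.sum_congr rfl fun j _ => by ring
  have e1 : ∀ w u : Fin d → ℝ,
      ∑ i, ∑ j, w i * u j * M i j = ∑ i, ∑ j, u i * w j * M i j := by
    intro w u
    rw [Finset.sum_comm]
    exact Finset.sum_congr rfl fun i _ => Finset.sum_congr rfl fun j _ => by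
      rw [hsymm j i]; ring
  have hEdiff : ∀ β : Fin d → ℝ,
      (∑ i, ∑ j, β i * β j * M i j) - 2 * (∑ i, β i * v i)
        - ((∑ i, ∑ j, βT i * βT j * M i j) - 2 * (∑ i, βT i * v i))
        = ∑ i, ∑ j, (β i - βT i) * (β j - βT j) * M i j := by
    intro β
    have expand : ∑ i, ∑ j, (β i - βT i) * (β j - βT j) * M i j
        = (∑ i, ∑ j, β i * β j * M i j) - (∑ i, ∑ j, β i * βT j * M i j)
          - (∑ i, ∑ j, βT i * β j * M i j) + ∑ i, ∑ j, βT i * βT j * M i j := by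
      rw [← Finset.sum_sub_distrib, ← Finset.sum_sub_distrib, ← Finset.sum_add_distrib]
      refine Finset.sum_congr rfl fun i _ => ?_
      rw [← Finset.sum_sub_distrib, ← Finset.sum_sub_distrib, ← Finset.sum_add_distrib]
      exact Finset.sum_congr rfl fun j _ => by ring
    rw [expand, e1 βT β, e2 β, e2 βT]
    ring
  have hq_nonneg : ∀ w : Fin d → ℝ, 0 ≤ ∑ i, ∑ j, w i * w j * M i j := by
    intro w
    rw [← hint_aa w w]
    exact integral_nonneg fun ω => mul_self_nonneg _
  have hq_pos : ∀ w : Fin d → ℝ, w ≠ 0 → 0 < ∑ i, ∑ j, w i * w j * M i j := by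
    intro w hw
    rcases lt_or_eq_of_le (hq_nonneg w) with h | h
    · exact h
    · exfalso
      apply hw
      have hzero : ∫ ω, (∑ i, w i * X ω i) * (∑ j, w j * X ω j) ∂P = 0 := by
        rw [hint_aa w w, ← h]
      have hsq0 : (fun ω => (∑ i, w i * X ω i) * (∑ j, w j * X ω j)) =ᵐ[P] 0 := by
        rw [← integral_eq_zero_iff_of_nonneg (fun ω => mul_self_nonneg _) (haXsq w w)]
        exact hzero
      have hae : (fun ω => (∑ i, w i * X ω i)) =ᵐ[P] 0 := by
        filter_upwards [hsq0] with ω hω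
        have := mul_self_eq_zero.mp hω
        exact this
      have hMw : M.mulVec w = 0 := by
        funext i
        show ∑ j, M i j * w j = 0
        have step1 : ∀ j, M i j * w j = ∫ ω, X ω i * X ω j * w j ∂P := by
          intro j
          show (∫ ω, X ω i * X ω j ∂P) * w j = _
          exact (integral_mul_const _ _).symm
        calc ∑ j, M i j * w j = ∑ j, ∫ ω, X ω i * X ω j * w j ∂P :=
              Finset.sum_congr rfl fun j _ => step1 j
          _ = ∫ ω, ∑ j, X ω i * X ω j * w j ∂P :=
              (integral_finset_sum _ fun j _ => (hXij i j).mul_const _).symm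
          _ = ∫ ω, X ω i * (∑ j, w j * X ω j) ∂P := by
              refine integral_congr_ae (ae_of_all _ fun ω => ?_)
              beta_reduce
              rw [Finset.mul_sum]
              exact Finset.sum_congr rfl fun j _ => by ring
          _ = 0 := by
              rw [← integral_zero Ωs ℝ (μ := P)]
              refine integral_congr_ae ?_
              filter_upwards [hae] with ω hω
              have hω' : (∑ j, w j * X ω j) = 0 := hω
              rw [hω', mul_zero]
      have : w = (M⁻¹ * M).mulVec w := by
        rw [Matrix.nonsing_inv_mul _ hMdet, Matrix.one_mulVec]
      rw [this, ← Matrix.mulVec_mulVec, hMw, Matrix.mulVec_zero]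
  -- ## positivity of Vval
  have hVval_eq : Vval
      = (∫ ω, (∫ γ, rK pA (Y ω) γ * (logit γ)^2 ∂lebI) ∂P)
        - 2 * (∑ i, βT i * v i) + ∑ i, ∑ j, βT i * βT j * M i j := houter βT
  have hVpos : 0 < Vval := by
    obtain ⟨ys, hys, hPpos, Λ, hΛsub, hΛmeas, hΛpos, hΛr⟩ := hystar
    have hFpos : ∀ ω : Ωs, Y ω = ys →
        0 < ∫ γ, rK pA (Y ω) γ * (logit γ - ∑ i, βT i * X ω i)^2 ∂lebI := by
      intro ω hωy
      rw [hωy]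
      set a := ∑ i, βT i * X ω i with ha
      set γa := Real.exp a / (1 + Real.exp a) with hγa
      refine (integral_pos_iff_support_of_nonneg_ae
        (ae_of_all _ fun γ => mul_nonneg (hrK_nonneg ys hys γ) (sq_nonneg _))
        (integrable_w_mul (hrK_meas ys) (hrK_bd ys hys) (integrable_sub_sq a))).mpr ?_
      have hss : Λ \ ({0, 1, γa} : Set ℝ)
          ⊆ Function.support fun γ => rK pA ys γ * (logit γ - a)^2 := by
        rintro γ ⟨hγΛ, hγn⟩
        have hγ0 : γ ≠ 0 := fun h => hγn (by simp [h])
        have hγ1 : γ ≠ 1 := fun h => hγn (by simp [h])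
        have hγmem := hΛsub hγΛ
        have hγlt : 0 < γ := lt_of_le_of_ne hγmem.1 (Ne.symm hγ0)
        have hγlt1 : γ < 1 := lt_of_le_of_ne hγmem.2 hγ1
        have hlogitne : logit γ ≠ a := by
          intro hla
          apply hγn
          have hpos : 0 < γ / (1 - γ) := div_pos hγlt (by linarith)
          have hexp : γ / (1 - γ) = Real.exp a := by
            rw [← hla, logit, Real.exp_log hpos]
          have h1γ : (1:ℝ) - γ ≠ 0 := by linarith
          have : γ = Real.exp a * (1 - γ) := (div_eq_iff h1γ).mp hexp
          have hγeq : γ = γa := by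
            have hden : (0:ℝ) < 1 + Real.exp a := by positivity
            have hlin : γ * (1 + Real.exp a) = Real.exp a := by linear_combination this
            rw [hγa, eq_div_iff hden.ne']
            exact hlin
          simp [hγeq]
        apply Function.mem_support.mpr
        exact mul_ne_zero (ne_of_gt (hΛr γ hγΛ)) (pow_ne_zero _ (sub_ne_zero.mpr hlogitne))
      have hfin : volume ({0, 1, γa} : Set ℝ) = 0 :=
        (Set.toFinite ({0, 1, γa} : Set ℝ)).measure_zero _
      have hvol : 0 < volume (Λ \ ({0, 1, γa} : Set ℝ)) := by
        rw [measure_diff_null hfin]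
        exact hΛpos
      have hlebI : lebI (Λ \ ({0, 1, γa} : Set ℝ)) = volume (Λ \ ({0, 1, γa} : Set ℝ)) := by
        rw [lebI, Measure.restrict_apply' measurableSet_Icc]
        congr 1
        exact Set.inter_eq_left.mpr ((Set.diff_subset).trans hΛsub)
      calc (0:ENNReal) < lebI (Λ \ ({0, 1, γa} : Set ℝ)) := by rw [hlebI]; exact hvol
        _ ≤ lebI (Function.support fun γ => rK pA ys γ * (logit γ - a)^2) :=
            measure_mono hss
    have hsupp : {ω | Y ω = ys} ⊆ Function.support
        (fun ω => ∫ γ, rK pA (Y ω) γ * (logit γ - ∑ i, βT i * X ω i)^2 ∂lebI) :=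
      fun ω hω => Function.mem_support.mpr (ne_of_gt (hFpos ω hω))
    exact (integral_pos_iff_support_of_nonneg_ae (ae_of_all _ (hFnonneg βT))
      (hFint βT)).mpr (lt_of_lt_of_le hPpos (measure_mono hsupp))
  -- ## the scalar quantities
  have hEβT_pos : 0 < (∫ ω, (∫ γ, rK pA (Y ω) γ * (logit γ)^2 ∂lebI) ∂P)
      - 2 * (∑ i, βT i * v i) + ∑ i, ∑ j, βT i * βT j * M i j := hVval_eq ▸ hVpos
  have hlamT_pos : 0 < lamT := by
    have h := Real.sqrt_pos.mpr hVpos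
    show (0:ℝ) < 1 / Real.sqrt Vval
    positivity
  have hlamT_eq : lamT = 1 / Real.sqrt ((∫ ω, (∫ γ, rK pA (Y ω) γ * (logit γ)^2 ∂lebI) ∂P)
      - 2 * (∑ i, βT i * v i) + ∑ i, ∑ j, βT i * βT j * M i j) := by
    show (1:ℝ) / Real.sqrt Vval = _
    rw [hVval_eq]
  have hlamT_sq : 1 / lamT^2 = Vval := by
    show 1 / ((1:ℝ) / Real.sqrt Vval)^2 = Vval
    rw [div_pow, one_pow, one_div_one_div, Real.sq_sqrt hVpos.le]
  -- ## inequalities between objectives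
  have hEle : ∀ β : Fin d → ℝ,
      (∫ ω, (∫ γ, rK pA (Y ω) γ * (logit γ)^2 ∂lebI) ∂P)
        - 2 * (∑ i, βT i * v i) + ∑ i, ∑ j, βT i * βT j * M i j
      ≤ (∫ ω, (∫ γ, rK pA (Y ω) γ * (logit γ)^2 ∂lebI) ∂P)
        - 2 * (∑ i, β i * v i) + ∑ i, ∑ j, β i * β j * M i j := by
    intro β
    have h := hq_nonneg (β - βT)
    have h2 : ∑ i, ∑ j, (β - βT) i * (β - βT) j * M i j
        = ∑ i, ∑ j, (β i - βT i) * (β j - βT j) * M i j := by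
      refine Finset.sum_congr rfl fun i _ => Finset.sum_congr rfl fun j _ => ?_
      simp [Pi.sub_apply]
    rw [h2] at h
    have h3 := hEdiff β
    linarith
  have hEeq_iff : ∀ β : Fin d → ℝ,
      ((∫ ω, (∫ γ, rK pA (Y ω) γ * (logit γ)^2 ∂lebI) ∂P)
        - 2 * (∑ i, β i * v i) + ∑ i, ∑ j, β i * β j * M i j
      = (∫ ω, (∫ γ, rK pA (Y ω) γ * (logit γ)^2 ∂lebI) ∂P)
        - 2 * (∑ i, βT i * v i) + ∑ i, ∑ j, βT i * βT j * M i j) → β = βT := by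
    intro β heq
    by_contra hne
    have hq := hq_pos (β - βT) (sub_ne_zero.mpr hne)
    have h2 : ∑ i, ∑ j, (β - βT) i * (β - βT) j * M i j
        = ∑ i, ∑ j, (β i - βT i) * (β j - βT j) * M i j := by
      refine Finset.sum_congr rfl fun i _ => Finset.sum_congr rfl fun j _ => ?_
      simp [Pi.sub_apply]
    rw [h2] at hq
    have h3 := hEdiff β
    linarith
  have hRT : Real.log lamT - lamT^2/2
        * ((∫ ω, (∫ γ, rK pA (Y ω) γ * (logit γ)^2 ∂lebI) ∂P)
          - 2 * (∑ i, βT i * v i) + ∑ i, ∑ j, βT i * βT j * M i j)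
      = Real.log (1 / Real.sqrt ((∫ ω, (∫ γ, rK pA (Y ω) γ * (logit γ)^2 ∂lebI) ∂P)
          - 2 * (∑ i, βT i * v i) + ∑ i, ∑ j, βT i * βT j * M i j)) - 1/2 := by
    rw [hlamT_eq]
    exact scalar_eq hEβT_pos
  refine ⟨⟨hlamT_pos, rfl, hlamT_sq⟩, ?_, ?_⟩
  · intro β lam hlam
    rw [hltil β lam hlam, hltil βT lamT hlamT_pos]
    have h1 := hEle β
    have h2 := scalar_le hEβT_pos hlam
    have h3 : lam^2/2 * ((∫ ω, (∫ γ, rK pA (Y ω) γ * (logit γ)^2 ∂lebI) ∂P)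
        - 2 * (∑ i, βT i * v i) + ∑ i, ∑ j, βT i * βT j * M i j)
        ≤ lam^2/2 * ((∫ ω, (∫ γ, rK pA (Y ω) γ * (logit γ)^2 ∂lebI) ∂P)
        - 2 * (∑ i, β i * v i) + ∑ i, ∑ j, β i * β j * M i j) :=
      mul_le_mul_of_nonneg_left h1 (by positivity)
    linarith [hRT]
  · intro β lam hlam heq
    rw [hltil β lam hlam, hltil βT lamT hlamT_pos] at heq
    have h1 := hEle β
    have h2 := scalar_le hEβT_pos hlam
    have h3 : lam^2/2 * ((∫ ω, (∫ γ, rK pA (Y ω) γ * (logit γ)^2 ∂lebI) ∂P)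
        - 2 * (∑ i, βT i * v i) + ∑ i, ∑ j, βT i * βT j * M i j)
        ≤ lam^2/2 * ((∫ ω, (∫ γ, rK pA (Y ω) γ * (logit γ)^2 ∂lebI) ∂P)
        - 2 * (∑ i, β i * v i) + ∑ i, ∑ j, β i * β j * M i j) :=
      mul_le_mul_of_nonneg_left h1 (by positivity)
    have hEeq : (∫ ω, (∫ γ, rK pA (Y ω) γ * (logit γ)^2 ∂lebI) ∂P)
        - 2 * (∑ i, β i * v i) + ∑ i, ∑ j, β i * β j * M i j
        = (∫ ω, (∫ γ, rK pA (Y ω) γ * (logit γ)^2 ∂lebI) ∂P)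
        - 2 * (∑ i, βT i * v i) + ∑ i, ∑ j, βT i * βT j * M i j := by
      by_contra hne
      have hlt : lam^2/2 * ((∫ ω, (∫ γ, rK pA (Y ω) γ * (logit γ)^2 ∂lebI) ∂P)
          - 2 * (∑ i, βT i * v i) + ∑ i, ∑ j, βT i * βT j * M i j)
          < lam^2/2 * ((∫ ω, (∫ γ, rK pA (Y ω) γ * (logit γ)^2 ∂lebI) ∂P)
          - 2 * (∑ i, β i * v i) + ∑ i, ∑ j, β i * β j * M i j) := by
        refine mul_lt_mul_of_pos_left ?_ (by positivity)
        exact lt_of_le_of_ne h1 (Ne.symm hne)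
      linarith [hRT]
    refine ⟨hEeq_iff β hEeq, ?_⟩
    by_contra hne
    have hne' : lam ≠ 1 / Real.sqrt ((∫ ω, (∫ γ, rK pA (Y ω) γ * (logit γ)^2 ∂lebI) ∂P)
        - 2 * (∑ i, βT i * v i) + ∑ i, ∑ j, βT i * βT j * M i j) := by
      rw [← hlamT_eq]; exact hne
    have hlt := scalar_lt hEβT_pos hlam hne'
    rw [hEeq] at heq
    linarith [hRT]
end
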